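/- arXiv:2102.08600 — 5 statements merged into one kernel-verified Lean document; each statement's English description precedes it below -/
import Mathlib

section
/- Let P̂ be an n×n̂_c real matrix of full column rank with n_c ≤ n̂_c < n such that (S P̂) has full row rank n. If the column space of P is contained in the column space of P̂, then σ_TL ≤ σ̂_TL, where σ_TL = λ_min^+( S M̃_s^{-1} S^T A (I − P (P^T A P)^{-1} P^T A) ) and σ̂_TL = λ_min^+( S M̃_s^{-1} S^T A (I − P̂ (P̂^T A P̂)^{-1} P̂^T A) ). Consequently the exact TLHB convergence factor does not increase when P is enlarged. -/
open Matrix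

/-- Smallest eigenvalue (real spectrum). -/
noncomputable def lamMin {n : ℕ} (M : Matrix (Fin n) (Fin n) ℝ) : ℝ :=
  sInf (spectrum ℝ M)

/-- Largest eigenvalue (real spectrum). -/
noncomputable def lamMax {n : ℕ} (M : Matrix (Fin n) (Fin n) ℝ) : ℝ :=
  sSup (spectrum ℝ M)

/-- Smallest positive eigenvalue (real spectrum). -/
noncomputable def lamMinPos {n : ℕ} (M : Matrix (Fin n) (Fin n) ℝ) : ℝ :=
  sInf {t : ℝ | t ∈ spectrum ℝ M ∧ 0 < t}

/-- Energy norm of a vector induced by an SPD matrix `A`. -/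
noncomputable def eNorm {n : ℕ} (A : Matrix (Fin n) (Fin n) ℝ) (v : Fin n → ℝ) : ℝ :=
  Real.sqrt (v ⬝ᵥ A.mulVec v)

/-- `A`-norm of a matrix `B`: `‖B‖_A = sup_{v ≠ 0} ‖Bv‖_A / ‖v‖_A`. -/
noncomputable def aNorm {n : ℕ} (A B : Matrix (Fin n) (Fin n) ℝ) : ℝ :=
  sSup {r : ℝ | ∃ v : Fin n → ℝ, v ≠ 0 ∧ r = eNorm A (B.mulVec v) / eNorm A v}

/-- The `A`-orthogonal projection `Π_A = P (Pᵀ A P)⁻¹ Pᵀ A`. -/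
noncomputable def proj {n nc : ℕ} (A : Matrix (Fin n) (Fin n) ℝ)
    (P : Matrix (Fin n) (Fin nc) ℝ) : Matrix (Fin n) (Fin n) ℝ :=
  P * (Pᵀ * A * P)⁻¹ * Pᵀ * A

/-- `M̃_s = Msᵀ (Ms + Msᵀ - As)⁻¹ Ms`. -/
noncomputable def tMs {ns : ℕ} (Ms As : Matrix (Fin ns) (Fin ns) ℝ) :
    Matrix (Fin ns) (Fin ns) ℝ :=
  Msᵀ * (Ms + Msᵀ - As)⁻¹ * Ms

/-- `S M̃_s⁻¹ Sᵀ A`. -/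
noncomputable def smoothX {n ns : ℕ} (A : Matrix (Fin n) (Fin n) ℝ)
    (S : Matrix (Fin n) (Fin ns) ℝ) (Ms : Matrix (Fin ns) (Fin ns) ℝ) :
    Matrix (Fin n) (Fin n) ℝ :=
  S * (tMs Ms (Sᵀ * A * S))⁻¹ * Sᵀ * A

/-- `σ_TL = λ_min⁺( S M̃_s⁻¹ Sᵀ A (I - Π_A) )`. -/
noncomputable def sigmaTL {n ns nc : ℕ} (A : Matrix (Fin n) (Fin n) ℝ)
    (S : Matrix (Fin n) (Fin ns) ℝ) (P : Matrix (Fin n) (Fin nc) ℝ)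
    (Ms : Matrix (Fin ns) (Fin ns) ℝ) : ℝ :=
  lamMinPos (smoothX A S Ms * (1 - proj A P))

/-- Exact TLHB iteration matrix. -/
noncomputable def Etl {n ns nc : ℕ} (A : Matrix (Fin n) (Fin n) ℝ)
    (S : Matrix (Fin n) (Fin ns) ℝ) (P : Matrix (Fin n) (Fin nc) ℝ)
    (Ms : Matrix (Fin ns) (Fin ns) ℝ) : Matrix (Fin n) (Fin n) ℝ :=
  (1 - S * (Msᵀ)⁻¹ * Sᵀ * A) * (1 - proj A P) * (1 - S * Ms⁻¹ * Sᵀ * A)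

/-- Inexact TLHB iteration matrix with coarse solver `Bc`. -/
noncomputable def EtlIn {n ns nc : ℕ} (A : Matrix (Fin n) (Fin n) ℝ)
    (S : Matrix (Fin n) (Fin ns) ℝ) (P : Matrix (Fin n) (Fin nc) ℝ)
    (Ms : Matrix (Fin ns) (Fin ns) ℝ) (Bc : Matrix (Fin nc) (Fin nc) ℝ) :
    Matrix (Fin n) (Fin n) ℝ :=
  (1 - S * (Msᵀ)⁻¹ * Sᵀ * A) * (1 - P * Bc⁻¹ * Pᵀ * A) * (1 - S * Ms⁻¹ * Sᵀ * A)

namespace TLAux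

variable {n : ℕ}

/-- Euclidean norm via dot product. -/
noncomputable def n2 (v : Fin n → ℝ) : ℝ := Real.sqrt (v ⬝ᵥ v)

lemma dot_self_nonneg (v : Fin n → ℝ) : 0 ≤ v ⬝ᵥ v :=
  Finset.sum_nonneg fun i _ => mul_self_nonneg _

lemma n2_nonneg (v : Fin n → ℝ) : 0 ≤ n2 v := Real.sqrt_nonneg _

lemma n2_zero : n2 (0 : Fin n → ℝ) = 0 := by simp [n2]

lemma n2_mul_self (v : Fin n → ℝ) : n2 v * n2 v = v ⬝ᵥ v :=
  Real.mul_self_sqrt (dot_self_nonneg v)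

lemma n2_pos {v : Fin n → ℝ} (hv : v ≠ 0) : 0 < n2 v := by
  rcases (n2_nonneg v).lt_or_eq with h | h
  · exact h
  · exfalso
    have : v ⬝ᵥ v = 0 := by rw [← n2_mul_self, ← h, mul_zero]
    exact hv (dotProduct_self_eq_zero.mp this)

lemma dot_sq (v : Fin n → ℝ) : v ⬝ᵥ v = ∑ i, v i ^ 2 := by
  simp [dotProduct, sq]

/-- Cauchy–Schwarz for the dot product. -/
lemma dot_le_n2_mul_n2 (v w : Fin n → ℝ) : v ⬝ᵥ w ≤ n2 v * n2 w := by
  have h := Finset.sum_mul_sq_le_sq_mul_sq Finset.univ v w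
  have h1 : v ⬝ᵥ w ≤ Real.sqrt ((v ⬝ᵥ w) ^ 2) := by
    rw [Real.sqrt_sq_eq_abs]; exact le_abs_self _
  refine h1.trans ?_
  have h2 : (v ⬝ᵥ w) ^ 2 ≤ (v ⬝ᵥ v) * (w ⬝ᵥ w) := by
    rw [dot_sq v, dot_sq w]
    simpa [dotProduct] using h
  calc Real.sqrt ((v ⬝ᵥ w) ^ 2) ≤ Real.sqrt ((v ⬝ᵥ v) * (w ⬝ᵥ w)) := Real.sqrt_le_sqrt h2
    _ = n2 v * n2 w := by
        rw [Real.sqrt_mul (dot_self_nonneg v)]; rfl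

lemma dot_mulVec_t {m k : Type*} [Fintype m] [Fintype k]
    (M : Matrix m k ℝ) (x : m → ℝ) (y : k → ℝ) :
    x ⬝ᵥ (M *ᵥ y) = (Mᵀ *ᵥ x) ⬝ᵥ y := by
  rw [Matrix.dotProduct_mulVec, ← Matrix.vecMul_transpose, Matrix.transpose_transpose]

/-- Frobenius-type bound. -/
lemma n2_mulVec_le (M : Matrix (Fin n) (Fin n) ℝ) (v : Fin n → ℝ) :
    n2 (M *ᵥ v) ≤ Real.sqrt (∑ i, ∑ j, (M i j) ^ 2) * n2 v := by
  have key : (M *ᵥ v) ⬝ᵥ (M *ᵥ v) ≤ (∑ i, ∑ j, (M i j) ^ 2) * (v ⬝ᵥ v) := by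
    have h1 : ∀ i : Fin n, (M *ᵥ v) i ^ 2 ≤ (∑ j, (M i j) ^ 2) * (v ⬝ᵥ v) := by
      intro i
      have := Finset.sum_mul_sq_le_sq_mul_sq Finset.univ (fun j => M i j) v
      simpa [Matrix.mulVec, dotProduct, dot_sq, sq] using this
    calc (M *ᵥ v) ⬝ᵥ (M *ᵥ v) = ∑ i, (M *ᵥ v) i ^ 2 := dot_sq _
      _ ≤ ∑ i, (∑ j, (M i j) ^ 2) * (v ⬝ᵥ v) := Finset.sum_le_sum fun i _ => h1 i
      _ = (∑ i, ∑ j, (M i j) ^ 2) * (v ⬝ᵥ v) := by rw [Finset.sum_mul]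
  have : n2 (M *ᵥ v) ≤ Real.sqrt ((∑ i, ∑ j, (M i j) ^ 2) * (v ⬝ᵥ v)) :=
    Real.sqrt_le_sqrt key
  refine this.trans_eq ?_
  rw [Real.sqrt_mul (x := ∑ i, ∑ j, (M i j) ^ 2) (Finset.sum_nonneg fun i _ => Finset.sum_nonneg fun j _ => sq_nonneg _)]
  rfl

/-- Operator-norm-like sup of ratios. -/
noncomputable def opN (M : Matrix (Fin n) (Fin n) ℝ) : ℝ :=
  sSup {r : ℝ | ∃ v : Fin n → ℝ, v ≠ 0 ∧ r = n2 (M *ᵥ v) / n2 v}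

lemma opN_set_nonempty (hn : 0 < n) (M : Matrix (Fin n) (Fin n) ℝ) :
    {r : ℝ | ∃ v : Fin n → ℝ, v ≠ 0 ∧ r = n2 (M *ᵥ v) / n2 v}.Nonempty := by
  refine ⟨n2 (M *ᵥ (fun _ => 1)) / n2 (fun _ => 1), fun _ => 1, ?_, rfl⟩
  intro h
  have : (1 : ℝ) = 0 := congrFun h ⟨0, hn⟩
  norm_num at this

lemma opN_set_bddAbove (M : Matrix (Fin n) (Fin n) ℝ) :
    BddAbove {r : ℝ | ∃ v : Fin n → ℝ, v ≠ 0 ∧ r = n2 (M *ᵥ v) / n2 v} := by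
  refine ⟨Real.sqrt (∑ i, ∑ j, (M i j) ^ 2), ?_⟩
  rintro r ⟨v, hv, rfl⟩
  rw [div_le_iff₀ (n2_pos hv)]
  exact n2_mulVec_le M v

lemma opN_nonneg (hn : 0 < n) (M : Matrix (Fin n) (Fin n) ℝ) : 0 ≤ opN M := by
  obtain ⟨r, v, hv, rfl⟩ := opN_set_nonempty hn M
  have h1 : n2 (M *ᵥ v) / n2 v ≤ opN M := le_csSup (opN_set_bddAbove M) ⟨v, hv, rfl⟩
  exact le_trans (div_nonneg (n2_nonneg _) (n2_nonneg _)) h1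

lemma n2_mulVec_le_opN (hn : 0 < n) (M : Matrix (Fin n) (Fin n) ℝ) (v : Fin n → ℝ) :
    n2 (M *ᵥ v) ≤ opN M * n2 v := by
  by_cases hv : v = 0
  · simp [hv, n2_zero, Matrix.mulVec_zero]
  · have h1 : n2 (M *ᵥ v) / n2 v ≤ opN M := le_csSup (opN_set_bddAbove M) ⟨v, hv, rfl⟩
    calc n2 (M *ᵥ v) = n2 (M *ᵥ v) / n2 v * n2 v := by
          field_simp [(n2_pos hv).ne']
      _ ≤ opN M * n2 v := by
          exact mul_le_mul_of_nonneg_right h1 (n2_nonneg v)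

lemma opN_le (hn : 0 < n) {M : Matrix (Fin n) (Fin n) ℝ} {b : ℝ}
    (h : ∀ v : Fin n → ℝ, v ≠ 0 → n2 (M *ᵥ v) ≤ b * n2 v) : opN M ≤ b := by
  refine csSup_le (opN_set_nonempty hn M) ?_
  rintro r ⟨v, hv, rfl⟩
  rw [div_le_iff₀ (n2_pos hv)]
  exact h v hv


lemma opN_mulVec_cancel {a c : ℝ} (ha : 0 ≤ a) (h : a * a ≤ c * a) (hc : 0 ≤ c) : a ≤ c := by
  rcases ha.lt_or_eq with h0 | h0
  · exact le_of_mul_le_mul_right (by linarith [h]) h0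
  · linarith

lemma opN_transpose_le (hn : 0 < n) (M : Matrix (Fin n) (Fin n) ℝ) : opN Mᵀ ≤ opN M := by
  refine opN_le hn fun v hv => ?_
  have key : n2 (Mᵀ *ᵥ v) * n2 (Mᵀ *ᵥ v) ≤ (opN M * n2 v) * n2 (Mᵀ *ᵥ v) := by
    have h1 : n2 (Mᵀ *ᵥ v) * n2 (Mᵀ *ᵥ v) = (Mᵀ *ᵥ v) ⬝ᵥ (Mᵀ *ᵥ v) := n2_mul_self _
    have h2 : (Mᵀ *ᵥ v) ⬝ᵥ (Mᵀ *ᵥ v) = v ⬝ᵥ (M *ᵥ (Mᵀ *ᵥ v)) := by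
      rw [dot_mulVec_t M v (Mᵀ *ᵥ v)]
    have h3 : v ⬝ᵥ (M *ᵥ (Mᵀ *ᵥ v)) ≤ n2 v * n2 (M *ᵥ (Mᵀ *ᵥ v)) := dot_le_n2_mul_n2 _ _
    have h4 : n2 (M *ᵥ (Mᵀ *ᵥ v)) ≤ opN M * n2 (Mᵀ *ᵥ v) := n2_mulVec_le_opN hn M _
    calc n2 (Mᵀ *ᵥ v) * n2 (Mᵀ *ᵥ v) = v ⬝ᵥ (M *ᵥ (Mᵀ *ᵥ v)) := by rw [h1, h2]
      _ ≤ n2 v * n2 (M *ᵥ (Mᵀ *ᵥ v)) := h3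
      _ ≤ n2 v * (opN M * n2 (Mᵀ *ᵥ v)) :=
          mul_le_mul_of_nonneg_left h4 (n2_nonneg v)
      _ = (opN M * n2 v) * n2 (Mᵀ *ᵥ v) := by ring
  exact opN_mulVec_cancel (n2_nonneg _) key
    (mul_nonneg (opN_nonneg hn M) (n2_nonneg v))

lemma opN_transpose (hn : 0 < n) (M : Matrix (Fin n) (Fin n) ℝ) : opN Mᵀ = opN M := by
  refine le_antisymm (opN_transpose_le hn M) ?_
  have := opN_transpose_le hn Mᵀ
  rwa [Matrix.transpose_transpose] at this

lemma opN_mul_le (hn : 0 < n) (M N : Matrix (Fin n) (Fin n) ℝ) :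
    opN (M * N) ≤ opN M * opN N := by
  refine opN_le hn fun v hv => ?_
  have h1 : (M * N) *ᵥ v = M *ᵥ (N *ᵥ v) := (Matrix.mulVec_mulVec v M N).symm
  rw [h1]
  calc n2 (M *ᵥ (N *ᵥ v)) ≤ opN M * n2 (N *ᵥ v) := n2_mulVec_le_opN hn M _
    _ ≤ opN M * (opN N * n2 v) :=
        mul_le_mul_of_nonneg_left (n2_mulVec_le_opN hn N v) (opN_nonneg hn M)
    _ = opN M * opN N * n2 v := by ring

/-- An orthogonal projection (symmetric idempotent) has `opN ≤ 1`. -/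
lemma opN_proj_le_one (hn : 0 < n) {R : Matrix (Fin n) (Fin n) ℝ}
    (hsym : Rᵀ = R) (hidem : R * R = R) : opN R ≤ 1 := by
  refine opN_le hn fun v hv => ?_
  have key : n2 (R *ᵥ v) * n2 (R *ᵥ v) ≤ n2 v * n2 (R *ᵥ v) := by
    have h1 : n2 (R *ᵥ v) * n2 (R *ᵥ v) = (R *ᵥ v) ⬝ᵥ (R *ᵥ v) := n2_mul_self _
    have h2 : (R *ᵥ v) ⬝ᵥ (R *ᵥ v) = (R *ᵥ v) ⬝ᵥ v := by
      rw [dot_mulVec_t R (R *ᵥ v) v, hsym]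
      rw [Matrix.mulVec_mulVec, hidem]
    have h3 : (R *ᵥ v) ⬝ᵥ v ≤ n2 (R *ᵥ v) * n2 v := dot_le_n2_mul_n2 _ _
    calc n2 (R *ᵥ v) * n2 (R *ᵥ v) = (R *ᵥ v) ⬝ᵥ v := by rw [h1, h2]
      _ ≤ n2 (R *ᵥ v) * n2 v := h3
      _ = n2 v * n2 (R *ᵥ v) := by ring
  rw [one_mul]
  exact opN_mulVec_cancel (n2_nonneg _) (by linarith [key]) (n2_nonneg v)

/-- `‖Q‖² ≤ ‖QᵀQ‖`. -/
lemma opN_sq_le_opN_transpose_mul (hn : 0 < n) (Q : Matrix (Fin n) (Fin n) ℝ) :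
    opN Q * opN Q ≤ opN (Qᵀ * Q) := by
  have hQle : opN Q ≤ Real.sqrt (opN (Qᵀ * Q)) := by
    refine opN_le hn fun v hv => ?_
    have h1 : n2 (Q *ᵥ v) * n2 (Q *ᵥ v) = v ⬝ᵥ ((Qᵀ * Q) *ᵥ v) := by
      rw [n2_mul_self, ← Matrix.mulVec_mulVec, dot_mulVec_t Qᵀ v (Q *ᵥ v),
        Matrix.transpose_transpose]
    have h2 : v ⬝ᵥ ((Qᵀ * Q) *ᵥ v) ≤ n2 v * (opN (Qᵀ * Q) * n2 v) :=
      (dot_le_n2_mul_n2 _ _).trans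
        (mul_le_mul_of_nonneg_left (n2_mulVec_le_opN hn _ v) (n2_nonneg v))
    -- n2 (Q v) ^ 2 ≤ opN(QᵀQ) * n2 v ^ 2
    have h3 : n2 (Q *ᵥ v) * n2 (Q *ᵥ v) ≤ (Real.sqrt (opN (Qᵀ * Q)) * n2 v) *
        (Real.sqrt (opN (Qᵀ * Q)) * n2 v) := by
      have hss : Real.sqrt (opN (Qᵀ * Q)) * Real.sqrt (opN (Qᵀ * Q)) = opN (Qᵀ * Q) :=
        Real.mul_self_sqrt (opN_nonneg hn _)
      rw [← hss] at h2
      nlinarith [h1, h2]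
    nlinarith [h3, n2_nonneg (Q *ᵥ v), mul_nonneg (Real.sqrt_nonneg (opN (Qᵀ * Q))) (n2_nonneg v)]
  calc opN Q * opN Q ≤ Real.sqrt (opN (Qᵀ * Q)) * Real.sqrt (opN (Qᵀ * Q)) :=
      mul_le_mul hQle hQle (opN_nonneg hn Q) (Real.sqrt_nonneg _)
    _ = opN (Qᵀ * Q) := Real.mul_self_sqrt (opN_nonneg hn _)

lemma eigvec_of_mem_spectrum {M : Matrix (Fin n) (Fin n) ℝ} {t : ℝ}
    (ht : t ∈ spectrum ℝ M) : ∃ v : Fin n → ℝ, v ≠ 0 ∧ M *ᵥ v = t • v := by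
  have h1 : t ∈ spectrum ℝ (Matrix.toLinAlgEquiv' M) := by
    rwa [AlgEquiv.spectrum_eq]
  have h2 : Module.End.HasEigenvalue (Matrix.toLinAlgEquiv' M) t :=
    Module.End.hasEigenvalue_iff_mem_spectrum.mpr h1
  obtain ⟨v, hv⟩ := h2.exists_hasEigenvector
  refine ⟨v, hv.2, ?_⟩
  have h3 := hv.apply_eq_smul
  rwa [Matrix.toLinAlgEquiv'_apply] at h3

/-- star is transpose for real matrices -/
lemma star_eq_t (M : Matrix (Fin n) (Fin n) ℝ) : star M = Mᵀ := by
  ext i j; simp [Matrix.star_apply]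

lemma exists_small_pos_eigen (S1 : Matrix (Fin n) (Fin n) ℝ) (hpsd : S1.PosSemidef)
    {v : Fin n → ℝ} (hv0 : v ≠ 0) (hperp : ∀ z, S1 *ᵥ z = 0 → v ⬝ᵥ z = 0) :
    ∃ t, t ∈ spectrum ℝ S1 ∧ 0 < t ∧ t * (v ⬝ᵥ v) ≤ v ⬝ᵥ (S1 *ᵥ v) := by
  classical
  have hH : S1.IsHermitian := hpsd.isHermitian
  set U : Matrix (Fin n) (Fin n) ℝ := (hH.eigenvectorUnitary : Matrix (Fin n) (Fin n) ℝ) with hU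
  set μ : Fin n → ℝ := hH.eigenvalues with hμ
  have hUtU : Uᵀ * U = 1 := by
    have := (Matrix.mem_unitaryGroup_iff').mp (hH.eigenvectorUnitary).2
    rwa [star_eq_t] at this
  have hUUt : U * Uᵀ = 1 := by
    have := (Matrix.mem_unitaryGroup_iff).mp (hH.eigenvectorUnitary).2
    rwa [star_eq_t] at this
  have hspec : S1 = U * Matrix.diagonal μ * Uᵀ := by
    have := hH.spectral_theorem
    rw [Unitary.conjStarAlgAut_apply] at this
    rwa [star_eq_t, show (RCLike.ofReal ∘ hH.eigenvalues : Fin n → ℝ) = μ from rfl] at this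
  set c : Fin n → ℝ := Uᵀ *ᵥ v with hc
  have hvc : U *ᵥ c = v := by
    rw [hc, Matrix.mulVec_mulVec, hUUt, Matrix.one_mulVec]
  have hc0 : c ≠ 0 := by
    intro h
    rw [h, Matrix.mulVec_zero] at hvc
    exact hv0 hvc.symm
  have hdot : v ⬝ᵥ v = c ⬝ᵥ c := by
    conv_lhs => rw [← hvc]
    rw [dot_mulVec_t U (U *ᵥ c) c, Matrix.mulVec_mulVec, hUtU, Matrix.one_mulVec]
  have hray : v ⬝ᵥ (S1 *ᵥ v) = ∑ i, μ i * (c i) ^ 2 := by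
    have h1 : S1 *ᵥ v = U *ᵥ (Matrix.diagonal μ *ᵥ c) := by
      rw [hspec, hc, Matrix.mulVec_mulVec, Matrix.mulVec_mulVec]
    rw [h1]
    conv_lhs => rw [← hvc]
    rw [dot_mulVec_t U (U *ᵥ c) (Matrix.diagonal μ *ᵥ c), Matrix.mulVec_mulVec, hUtU,
      Matrix.one_mulVec]
    simp only [dotProduct, Matrix.mulVec_diagonal]
    exact Finset.sum_congr rfl fun i _ => by ring
  -- choose the minimal eigenvalue over the support of c
  set s : Finset (Fin n) := Finset.univ.filter (fun i => c i ≠ 0) with hs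
  have hs0 : s.Nonempty := by
    obtain ⟨i, hi⟩ := Function.ne_iff.mp hc0
    refine ⟨i, ?_⟩
    simp only [hs, Finset.mem_filter, Finset.mem_univ, true_and]
    simpa using hi
  obtain ⟨i0, hi0s, hi0min⟩ := s.exists_min_image μ hs0
  have hci0 : c i0 ≠ 0 := by simpa [hs] using hi0s
  refine ⟨μ i0, hH.eigenvalues_mem_spectrum_real i0, ?_, ?_⟩
  · rcases (hpsd.eigenvalues_nonneg i0).lt_or_eq with h | h
    · exact h
    · exfalso
      have hb := hH.mulVec_eigenvectorBasis i0
      rw [← h, zero_smul] at hb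
      have h2 := hperp _ hb
      have h3 := hH.star_eigenvectorUnitary_mulVec i0
      rw [star_eq_t, ← hU] at h3
      have h4 : v ⬝ᵥ ⇑(hH.eigenvectorBasis i0) = c i0 := by
        conv_lhs => rw [← hvc]
        rw [dotProduct_comm, dot_mulVec_t U _ c, h3]
        simp [dotProduct, Pi.single_apply]
      exact hci0 (by rw [← h4, h2])
  · rw [hdot, hray]
    have hcc : c ⬝ᵥ c = ∑ i, (c i) ^ 2 := by simp [dotProduct, sq]
    rw [hcc, Finset.mul_sum]
    refine Finset.sum_le_sum fun i _ => ?_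
    by_cases h : c i = 0
    · simp [h]
    · refine mul_le_mul_of_nonneg_right (hi0min i ?_) (sq_nonneg _)
      simp only [hs, Finset.mem_filter, Finset.mem_univ, true_and]
      exact h

lemma conjT_eq_t {m k : Type*} (M : Matrix m k ℝ) : Mᴴ = Mᵀ := by
  ext i j; simp [Matrix.conjTranspose_apply]

lemma mulVec_inj_of_rank {m : Type*} [Fintype m] {k : ℕ} (M : Matrix m (Fin k) ℝ)
    (h : M.rank = k) {x : Fin k → ℝ} (hx : M *ᵥ x = 0) : x = 0 := by
  classical
  have h1 := LinearMap.finrank_range_add_finrank_ker M.mulVecLin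
  rw [show Module.finrank ℝ (Fin k → ℝ) = k from by simp, show
    Module.finrank ℝ (LinearMap.range M.mulVecLin) = k from h] at h1
  have h2 : Module.finrank ℝ (LinearMap.ker M.mulVecLin) = 0 := by omega
  have h3 : LinearMap.ker M.mulVecLin = ⊥ := Submodule.finrank_eq_zero.mp h2
  have h4 : x ∈ LinearMap.ker M.mulVecLin := by
    rw [LinearMap.mem_ker, Matrix.mulVecLin_apply, hx]
  rw [h3, Submodule.mem_bot] at h4
  exact h4

lemma exists_ker_ne_zero {n k : ℕ} (M : Matrix (Fin k) (Fin n) ℝ) (hk : k < n) :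
    ∃ v : Fin n → ℝ, v ≠ 0 ∧ M *ᵥ v = 0 := by
  classical
  have h1 := LinearMap.finrank_range_add_finrank_ker M.mulVecLin
  rw [show Module.finrank ℝ (Fin n → ℝ) = n from by simp] at h1
  have h2 : M.rank ≤ k := by
    simpa using Matrix.rank_le_card_height M
  have h3 : 0 < Module.finrank ℝ (LinearMap.ker M.mulVecLin) := by
    have : Module.finrank ℝ (LinearMap.range M.mulVecLin) = M.rank := rfl
    omega
  have : Nontrivial (LinearMap.ker M.mulVecLin) := Module.finrank_pos_iff.mp h3
  obtain ⟨⟨v, hv⟩, hv0⟩ := exists_ne (0 : LinearMap.ker M.mulVecLin)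
  refine ⟨v, ?_, LinearMap.mem_ker.mp hv⟩
  intro h
  exact hv0 (Subtype.ext (by simpa using h))

section Proj
variable {n k : ℕ}

lemma projK_t (K : Matrix (Fin n) (Fin k) ℝ) :
    (K * (Kᵀ * K)⁻¹ * Kᵀ)ᵀ = K * (Kᵀ * K)⁻¹ * Kᵀ := by
  have h : ((Kᵀ * K)⁻¹)ᵀ = (Kᵀ * K)⁻¹ := by
    rw [Matrix.transpose_nonsing_inv, Matrix.transpose_mul, Matrix.transpose_transpose]
  simp only [Matrix.transpose_mul, Matrix.transpose_transpose, h, Matrix.mul_assoc]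

lemma projK_fix (K : Matrix (Fin n) (Fin k) ℝ) (hdet : IsUnit (Kᵀ * K).det) :
    (K * (Kᵀ * K)⁻¹ * Kᵀ) * K = K := by
  rw [Matrix.mul_assoc, Matrix.mul_assoc, Matrix.nonsing_inv_mul _ hdet, Matrix.mul_one]

lemma projK_idem (K : Matrix (Fin n) (Fin k) ℝ) (hdet : IsUnit (Kᵀ * K).det) :
    (K * (Kᵀ * K)⁻¹ * Kᵀ) * (K * (Kᵀ * K)⁻¹ * Kᵀ) = K * (Kᵀ * K)⁻¹ * Kᵀ := by
  calc (K * (Kᵀ * K)⁻¹ * Kᵀ) * (K * (Kᵀ * K)⁻¹ * Kᵀ)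
      = ((K * (Kᵀ * K)⁻¹ * Kᵀ) * K) * ((Kᵀ * K)⁻¹ * Kᵀ) := by
        simp only [Matrix.mul_assoc]
    _ = K * (Kᵀ * K)⁻¹ * Kᵀ := by rw [projK_fix K hdet, Matrix.mul_assoc]

lemma projK_ker (K : Matrix (Fin n) (Fin k) ℝ) (hdet : IsUnit (Kᵀ * K).det)
    {x : Fin n → ℝ} (hx : (K * (Kᵀ * K)⁻¹ * Kᵀ) *ᵥ x = 0) : Kᵀ *ᵥ x = 0 := by
  have h1 : Kᵀ *ᵥ ((K * (Kᵀ * K)⁻¹ * Kᵀ) *ᵥ x) = 0 := by rw [hx, Matrix.mulVec_zero]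
  rw [Matrix.mulVec_mulVec] at h1
  have h2 : Kᵀ * (K * (Kᵀ * K)⁻¹ * Kᵀ) = Kᵀ := by
    calc Kᵀ * (K * (Kᵀ * K)⁻¹ * Kᵀ) = ((Kᵀ * K) * (Kᵀ * K)⁻¹) * Kᵀ := by
          simp only [Matrix.mul_assoc]
      _ = Kᵀ := by rw [Matrix.mul_nonsing_inv _ hdet, Matrix.one_mul]
  rwa [h2] at h1

lemma inj_of_isUnit_det {k : ℕ} {M : Matrix (Fin k) (Fin k) ℝ} (h : IsUnit M.det)
    {x : Fin k → ℝ} (hx : M *ᵥ x = 0) : x = 0 := by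
  have : (M⁻¹ * M) *ᵥ x = 0 := by
    rw [← Matrix.mulVec_mulVec, hx, Matrix.mulVec_zero]
  rwa [Matrix.nonsing_inv_mul _ h, Matrix.one_mulVec] at this

lemma gram_posDef {A : Matrix (Fin n) (Fin n) ℝ} (hA : A.PosDef)
    (P : Matrix (Fin n) (Fin k) ℝ) (hinj : ∀ x : Fin k → ℝ, P *ᵥ x = 0 → x = 0) :
    (Pᵀ * A * P).PosDef := by
  refine Matrix.PosDef.of_dotProduct_mulVec_pos ?_ ?_
  · have h := Matrix.isHermitian_conjTranspose_mul_mul P hA.1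
    rwa [conjT_eq_t] at h
  · intro x hx
    have hPx : P *ᵥ x ≠ 0 := fun h => hx (hinj x h)
    have h2 := hA.dotProduct_mulVec_pos hPx
    have h3 : (Pᵀ * A * P) *ᵥ x = Pᵀ *ᵥ (A *ᵥ (P *ᵥ x)) := by
      rw [Matrix.mulVec_mulVec, Matrix.mulVec_mulVec]
    have h4 : x ⬝ᵥ (Pᵀ *ᵥ (A *ᵥ (P *ᵥ x))) = (P *ᵥ x) ⬝ᵥ (A *ᵥ (P *ᵥ x)) := by
      rw [dot_mulVec_t Pᵀ x (A *ᵥ (P *ᵥ x)), Matrix.transpose_transpose]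
    simp only [star_trivial] at h2 ⊢
    rw [h3, h4]
    simpa using h2

lemma posDef_isUnit_det {k : ℕ} {M : Matrix (Fin k) (Fin k) ℝ} (h : M.PosDef) :
    IsUnit M.det :=
  isUnit_iff_ne_zero.mpr (ne_of_gt h.det_pos)

end Proj

section Conj
variable {n k : ℕ} {A C : Matrix (Fin n) (Fin n) ℝ}

lemma conj_mul (C : Matrix (Fin n) (Fin n) ℝ) (h : C⁻¹ * C = 1)
    (X Y : Matrix (Fin n) (Fin n) ℝ) :
    C * (X * Y) * C⁻¹ = (C * X * C⁻¹) * (C * Y * C⁻¹) := by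
  have : (C * X * C⁻¹) * (C * Y * C⁻¹) = C * X * (C⁻¹ * C) * Y * C⁻¹ := by
    simp only [Matrix.mul_assoc]
  rw [this, h, Matrix.mul_one]
  simp only [Matrix.mul_assoc]

lemma conj_sandwich (hCCi : C * C⁻¹ = 1) (hAC : A * C⁻¹ = C)
    (S : Matrix (Fin n) (Fin k) ℝ) (M : Matrix (Fin k) (Fin k) ℝ) :
    C * (1 - S * M * Sᵀ * A) * C⁻¹ = 1 - (C * S) * M * (Sᵀ * C) := by
  rw [Matrix.mul_sub, Matrix.sub_mul, Matrix.mul_one, hCCi]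
  congr 1
  simp only [Matrix.mul_assoc, hAC]

lemma conj_proj (hCsym : Cᵀ = C) (hCC : C * C = A) (hCCi : C * C⁻¹ = 1)
    (P : Matrix (Fin n) (Fin k) ℝ) :
    C * proj A P * C⁻¹ = (C * P) * (((C * P)ᵀ * (C * P))⁻¹) * (C * P)ᵀ := by
  have hKt : (C * P)ᵀ = Pᵀ * C := by rw [Matrix.transpose_mul, hCsym]
  have hAC : A * C⁻¹ = C := by rw [← hCC, Matrix.mul_assoc, hCCi, Matrix.mul_one]
  have hKtK : (C * P)ᵀ * (C * P) = Pᵀ * A * P := by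
    rw [hKt, Matrix.mul_assoc Pᵀ C (C * P), ← Matrix.mul_assoc C C P, hCC,
      ← Matrix.mul_assoc]
  rw [proj, hKtK, hKt]
  simp only [Matrix.mul_assoc, hAC]

lemma aNorm_eq_opN (hCsym : Cᵀ = C) (hCC : C * C = A) (hCCi : C * C⁻¹ = 1)
    (hCiC : C⁻¹ * C = 1) (B : Matrix (Fin n) (Fin n) ℝ) :
    aNorm A B = opN (C * B * C⁻¹) := by
  have hCinj : ∀ x : Fin n → ℝ, C *ᵥ x = 0 → x = 0 := by
    intro x hx
    have : (C⁻¹ * C) *ᵥ x = 0 := by rw [← Matrix.mulVec_mulVec, hx, Matrix.mulVec_zero]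
    rwa [hCiC, Matrix.one_mulVec] at this
  have heN : ∀ w : Fin n → ℝ, eNorm A w = n2 (C *ᵥ w) := by
    intro w
    rw [eNorm, n2]
    congr 1
    rw [← hCC, ← Matrix.mulVec_mulVec, dot_mulVec_t C w (C *ᵥ w), hCsym]
  have hact : ∀ w : Fin n → ℝ, (C * B * C⁻¹) *ᵥ (C *ᵥ w) = C *ᵥ (B *ᵥ w) := by
    intro w
    rw [Matrix.mulVec_mulVec, Matrix.mul_assoc (C * B) C⁻¹ C, hCiC, Matrix.mul_one,
      ← Matrix.mulVec_mulVec]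
  rw [aNorm, opN]
  congr 1
  ext r
  simp only [Set.mem_setOf_eq]
  constructor
  · rintro ⟨v, hv, rfl⟩
    refine ⟨C *ᵥ v, fun h => hv (hCinj v h), ?_⟩
    rw [heN, heN, hact]
  · rintro ⟨u, hu, rfl⟩
    refine ⟨C⁻¹ *ᵥ u, ?_, ?_⟩
    · intro h
      have : C *ᵥ (C⁻¹ *ᵥ u) = u := by
        rw [Matrix.mulVec_mulVec, hCCi, Matrix.one_mulVec]
      rw [h, Matrix.mulVec_zero] at this
      exact hu this.symm
    · have hCu : C *ᵥ (C⁻¹ *ᵥ u) = u := by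
        rw [Matrix.mulVec_mulVec, hCCi, Matrix.one_mulVec]
      rw [heN, heN, ← hact, hCu]
end Conj

section Sqrt
open scoped MatrixOrder

/-- matrix square root -/
noncomputable def msqrt {n : ℕ} (A : Matrix (Fin n) (Fin n) ℝ) : Matrix (Fin n) (Fin n) ℝ :=
  CFC.sqrt A

lemma msqrt_psd {n : ℕ} {A : Matrix (Fin n) (Fin n) ℝ} : (msqrt A).PosSemidef :=
  Matrix.nonneg_iff_posSemidef.mp (CFC.sqrt_nonneg A)

lemma msqrt_mul_self {n : ℕ} {A : Matrix (Fin n) (Fin n) ℝ} (hA : A.PosDef) :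
    msqrt A * msqrt A = A :=
  CFC.sqrt_mul_sqrt_self A (Matrix.nonneg_iff_posSemidef.mpr hA.posSemidef)
end Sqrt

lemma conj_smsa {n k : ℕ} {A C : Matrix (Fin n) (Fin n) ℝ} (hACi : A * C⁻¹ = C)
    (S : Matrix (Fin n) (Fin k) ℝ) (M : Matrix (Fin k) (Fin k) ℝ) :
    C * (S * M * Sᵀ * A) * C⁻¹ = (C * S) * M * (Sᵀ * C) := by
  simp only [Matrix.mul_assoc, hACi]
end TLAux

open TLAux

/-- Monotonicity of `σ_TL` in the coarse space: if `Range(P) ⊆ Range(P̂)`, then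
`σ_TL ≤ σ̂_TL`, and hence the exact TLHB convergence factor does not increase. -/
theorem sigma_monotone_in_coarse_space {n ns nc mc : ℕ}
    (A : Matrix (Fin n) (Fin n) ℝ) (hA : A.PosDef)
    (S : Matrix (Fin n) (Fin ns) ℝ) (hS : S.rank = ns)
    (P : Matrix (Fin n) (Fin nc) ℝ) (hP : P.rank = nc)
    (hns : ns < n) (hnc : nc < n) (hsum : n ≤ ns + nc)
    (hSP : (fromCols S P).rank = n)
    (Ms : Matrix (Fin ns) (Fin ns) ℝ) (hMs : IsUnit Ms.det)
    (hMsA : (Ms + Msᵀ - Sᵀ * A * S).PosDef)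
    (Ph : Matrix (Fin n) (Fin mc) ℝ) (hPh : Ph.rank = mc)
    (hncle : nc ≤ mc) (hmc : mc < n)
    (hSPh : (fromCols S Ph).rank = n)
    (hsub : LinearMap.range P.mulVecLin ≤ LinearMap.range Ph.mulVecLin) :
    sigmaTL A S P Ms ≤ sigmaTL A S Ph Ms ∧
      aNorm A (Etl A S Ph Ms) ≤ aNorm A (Etl A S P Ms) := by
  classical
  have hn : 0 < n := lt_of_le_of_lt (Nat.zero_le ns) hns
  -- square root of A
  set C : Matrix (Fin n) (Fin n) ℝ := msqrt A with hCdef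
  have hCpsd : C.PosSemidef := msqrt_psd
  have hCsym : Cᵀ = C := by
    have h : Cᴴ = C := hCpsd.isHermitian
    rwa [conjT_eq_t] at h
  have hCC : C * C = A := msqrt_mul_self hA
  have hCdet : IsUnit C.det := by
    refine isUnit_iff_ne_zero.mpr fun h => ?_
    have hdet : C.det * C.det = A.det := by rw [← Matrix.det_mul, hCC]
    have hpos := hA.det_pos
    rw [h, mul_zero] at hdet
    rw [← hdet] at hpos
    exact lt_irrefl _ hpos
  have hCCi : C * C⁻¹ = 1 := Matrix.mul_nonsing_inv C hCdet
  have hCiC : C⁻¹ * C = 1 := Matrix.nonsing_inv_mul C hCdet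
  have hACi : A * C⁻¹ = C := by rw [← hCC, Matrix.mul_assoc, hCCi, Matrix.mul_one]
  have hCinj : ∀ x : Fin n → ℝ, C *ᵥ x = 0 → x = 0 := fun x hx =>
    inj_of_isUnit_det hCdet hx
  clear_value C
  -- injectivity of full-column-rank matrices
  have hPinj : ∀ x : Fin nc → ℝ, P *ᵥ x = 0 → x = 0 := fun x hx =>
    mulVec_inj_of_rank P hP hx
  have hPhinj : ∀ x : Fin mc → ℝ, Ph *ᵥ x = 0 → x = 0 := fun x hx =>
    mulVec_inj_of_rank Ph hPh hx
  -- Gram matrices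
  set K : Matrix (Fin n) (Fin nc) ℝ := C * P with hKdef
  set Kh : Matrix (Fin n) (Fin mc) ℝ := C * Ph with hKhdef
  have hKt : Kᵀ = Pᵀ * C := by rw [hKdef, Matrix.transpose_mul, hCsym]
  have hKht : Khᵀ = Phᵀ * C := by rw [hKhdef, Matrix.transpose_mul, hCsym]
  have hKtK : Kᵀ * K = Pᵀ * A * P := by
    rw [hKt, hKdef, Matrix.mul_assoc Pᵀ C (C * P), ← Matrix.mul_assoc C C P, hCC,
      ← Matrix.mul_assoc]
  have hKhtKh : Khᵀ * Kh = Phᵀ * A * Ph := by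
    rw [hKht, hKhdef, Matrix.mul_assoc Phᵀ C (C * Ph), ← Matrix.mul_assoc C C Ph, hCC,
      ← Matrix.mul_assoc]
  have hKtKdet : IsUnit (Kᵀ * K).det := by
    rw [hKtK]; exact posDef_isUnit_det (gram_posDef hA P hPinj)
  have hKhtKhdet : IsUnit (Khᵀ * Kh).det := by
    rw [hKhtKh]; exact posDef_isUnit_det (gram_posDef hA Ph hPhinj)
  clear_value K Kh
  -- projections
  set Pi1 : Matrix (Fin n) (Fin n) ℝ := K * (Kᵀ * K)⁻¹ * Kᵀ with hPi1
  set Pi2 : Matrix (Fin n) (Fin n) ℝ := Kh * (Khᵀ * Kh)⁻¹ * Khᵀ with hPi2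
  have hPi1t : Pi1ᵀ = Pi1 := projK_t K
  have hPi2t : Pi2ᵀ = Pi2 := projK_t Kh
  have hPi1idem : Pi1 * Pi1 = Pi1 := projK_idem K hKtKdet
  have hPi2idem : Pi2 * Pi2 = Pi2 := projK_idem Kh hKhtKhdet
  clear_value Pi1 Pi2
  -- P = Ph * Z
  obtain ⟨Z, hZ⟩ : ∃ Z : Matrix (Fin mc) (Fin nc) ℝ, Ph * Z = P := by
    have hcol : ∀ j : Fin nc, ∃ z : Fin mc → ℝ, Ph *ᵥ z = P *ᵥ Pi.single j 1 := by
      intro j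
      have hmem : P *ᵥ Pi.single j 1 ∈ LinearMap.range P.mulVecLin :=
        ⟨Pi.single j 1, rfl⟩
      obtain ⟨z, hz⟩ := hsub hmem
      exact ⟨z, hz⟩
    choose Z' hZ' using hcol
    refine ⟨Matrix.of fun i j => Z' j i, ?_⟩
    ext i j
    have h1 := congrFun (hZ' j) i
    simp only [Matrix.mulVec, dotProduct, Pi.single_apply, mul_ite, mul_one,
      mul_zero, Finset.sum_ite_eq', Finset.mem_univ, if_true] at h1
    simp only [Matrix.mul_apply, Matrix.of_apply]
    exact h1
  have hKKhZ : Kh * Z = K := by rw [hKdef, hKhdef, ← hZ, Matrix.mul_assoc]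
  have hPi2K : Pi2 * K = K := by
    have h : Pi2 * Kh = Kh := by rw [hPi2]; exact projK_fix Kh hKhtKhdet
    calc Pi2 * K = Pi2 * (Kh * Z) := by rw [hKKhZ]
      _ = (Pi2 * Kh) * Z := by rw [Matrix.mul_assoc]
      _ = Kh * Z := by rw [h]
      _ = K := hKKhZ
  have hPi2Pi1 : Pi2 * Pi1 = Pi1 := by
    rw [hPi1]
    calc Pi2 * (K * (Kᵀ * K)⁻¹ * Kᵀ) = (Pi2 * K) * ((Kᵀ * K)⁻¹ * Kᵀ) := by
          simp only [Matrix.mul_assoc]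
      _ = K * (Kᵀ * K)⁻¹ * Kᵀ := by rw [hPi2K, Matrix.mul_assoc]
  have hPi1Pi2 : Pi1 * Pi2 = Pi1 := by
    have h := congrArg Matrix.transpose hPi2Pi1
    rwa [Matrix.transpose_mul, hPi1t, hPi2t] at h
  -- complementary projections
  set R1 : Matrix (Fin n) (Fin n) ℝ := 1 - Pi1 with hR1
  set R2 : Matrix (Fin n) (Fin n) ℝ := 1 - Pi2 with hR2
  clear_value R1 R2
  have hR1t : R1ᵀ = R1 := by rw [hR1, Matrix.transpose_sub, Matrix.transpose_one, hPi1t]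
  have hR2t : R2ᵀ = R2 := by rw [hR2, Matrix.transpose_sub, Matrix.transpose_one, hPi2t]
  have hR1idem : R1 * R1 = R1 := by
    rw [hR1]
    simp only [Matrix.sub_mul, Matrix.mul_sub, Matrix.one_mul, Matrix.mul_one, hPi1idem]
    abel
  have hR2idem : R2 * R2 = R2 := by
    rw [hR2]
    simp only [Matrix.sub_mul, Matrix.mul_sub, Matrix.one_mul, Matrix.mul_one, hPi2idem]
    abel
  have hR1R2 : R1 * R2 = R2 := by
    rw [hR1, hR2]
    simp only [Matrix.sub_mul, Matrix.mul_sub, Matrix.one_mul, Matrix.mul_one, hPi1Pi2]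
    abel
  have hR2R1 : R2 * R1 = R2 := by
    rw [hR1, hR2]
    simp only [Matrix.sub_mul, Matrix.mul_sub, Matrix.one_mul, Matrix.mul_one, hPi2Pi1]
    abel
  -- the smoother matrix Y
  have hMt_pd : (tMs Ms (Sᵀ * A * S)).PosDef := by
    rw [tMs]
    exact gram_posDef hMsA.inv Ms (fun x hx => inj_of_isUnit_det hMs hx)
  have hMtinv_pd : ((tMs Ms (Sᵀ * A * S))⁻¹).PosDef := hMt_pd.inv
  set Mt : Matrix (Fin ns) (Fin ns) ℝ := (tMs Ms (Sᵀ * A * S))⁻¹ with hMtdef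
  clear_value Mt
  set Y : Matrix (Fin n) (Fin n) ℝ := (C * S) * Mt * (Sᵀ * C) with hYdef
  have hYconj : C * smoothX A S Ms * C⁻¹ = Y := by
    rw [smoothX, ← hMtdef, conj_smsa hACi S Mt, hYdef]
  have hYpsd : Y.PosSemidef := by
    have h := (hMtinv_pd.posSemidef).mul_mul_conjTranspose_same (C * S)
    rw [conjT_eq_t, Matrix.transpose_mul, hCsym] at h
    rwa [hYdef]
  clear_value Y
  -- kernel property of Y
  have hYzero : ∀ x : Fin n → ℝ, Y *ᵥ x = 0 → Sᵀ *ᵥ (C *ᵥ x) = 0 := by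
    intro x hx
    by_contra hw
    have e0 : Y *ᵥ x = (C * S) *ᵥ (Mt *ᵥ ((Sᵀ * C) *ᵥ x)) := by
      rw [hYdef]
      simp only [Matrix.mulVec_mulVec, Matrix.mul_assoc]
    have h1 : x ⬝ᵥ (Y *ᵥ x) = ((Sᵀ * C) *ᵥ x) ⬝ᵥ (Mt *ᵥ ((Sᵀ * C) *ᵥ x)) := by
      rw [e0, dot_mulVec_t (C * S) x (Mt *ᵥ ((Sᵀ * C) *ᵥ x)), Matrix.transpose_mul, hCsym]
    have hw' : (Sᵀ * C) *ᵥ x ≠ 0 := by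
      rw [← Matrix.mulVec_mulVec]
      exact hw
    have h2 := hMtinv_pd.dotProduct_mulVec_pos hw'
    simp only [star_trivial] at h2
    rw [hx, dotProduct_zero] at h1
    rw [← h1] at h2
    exact lt_irrefl _ h2
  have hker1 : ∀ x : Fin n → ℝ, Pi1 *ᵥ x = 0 → Y *ᵥ x = 0 → x = 0 := by
    intro x h1 h2
    have hKx : Kᵀ *ᵥ x = 0 := projK_ker K hKtKdet (by rwa [← hPi1])
    have hSx : Sᵀ *ᵥ (C *ᵥ x) = 0 := hYzero x h2
    have hPx : Pᵀ *ᵥ (C *ᵥ x) = 0 := by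
      rw [hKt, ← Matrix.mulVec_mulVec] at hKx
      exact hKx
    have hy : (Matrix.fromCols S P)ᵀ *ᵥ (C *ᵥ x) = 0 := by
      rw [Matrix.transpose_fromCols, Matrix.fromRows_mulVec, hSx, hPx]
      ext (i | i) <;> rfl
    have hy0 : C *ᵥ x = 0 :=
      mulVec_inj_of_rank _ (by rw [Matrix.rank_transpose]; exact hSP) hy
    exact hCinj x hy0
  have hker2 : ∀ x : Fin n → ℝ, Pi2 *ᵥ x = 0 → Y *ᵥ x = 0 → x = 0 := by
    intro x h1 h2
    have hKx : Khᵀ *ᵥ x = 0 := projK_ker Kh hKhtKhdet (by rwa [← hPi2])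
    have hSx : Sᵀ *ᵥ (C *ᵥ x) = 0 := hYzero x h2
    have hPx : Phᵀ *ᵥ (C *ᵥ x) = 0 := by
      rw [hKht, ← Matrix.mulVec_mulVec] at hKx
      exact hKx
    have hy : (Matrix.fromCols S Ph)ᵀ *ᵥ (C *ᵥ x) = 0 := by
      rw [Matrix.transpose_fromCols, Matrix.fromRows_mulVec, hSx, hPx]
      ext (i | i) <;> rfl
    have hy0 : C *ᵥ x = 0 :=
      mulVec_inj_of_rank _ (by rw [Matrix.rank_transpose]; exact hSPh) hy
    exact hCinj x hy0
  -- compressed matrices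
  set S1 : Matrix (Fin n) (Fin n) ℝ := R1 * Y * R1 with hS1
  set S2 : Matrix (Fin n) (Fin n) ℝ := R2 * Y * R2 with hS2
  have hS1psd : S1.PosSemidef := by
    have h := hYpsd.mul_mul_conjTranspose_same R1
    rwa [conjT_eq_t, hR1t] at h
  have hS2psd : S2.PosSemidef := by
    have h := hYpsd.mul_mul_conjTranspose_same R2
    rwa [conjT_eq_t, hR2t] at h
  clear_value S1 S2
  -- orthogonality to the kernel
  have hperp1 : ∀ v : Fin n → ℝ, Pi1 *ᵥ v = 0 → ∀ z, S1 *ᵥ z = 0 → v ⬝ᵥ z = 0 := by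
    intro v hv z hz
    have hR1z : R1 *ᵥ z = 0 := by
      have e0 : S1 *ᵥ z = R1 *ᵥ (Y *ᵥ (R1 *ᵥ z)) := by
        rw [hS1]
        simp only [Matrix.mulVec_mulVec, Matrix.mul_assoc]
      have e1 : z ⬝ᵥ (S1 *ᵥ z) = (R1 *ᵥ z) ⬝ᵥ (Y *ᵥ (R1 *ᵥ z)) := by
        rw [e0, dot_mulVec_t R1 z (Y *ᵥ (R1 *ᵥ z)), hR1t]
      have e2 : z ⬝ᵥ (S1 *ᵥ z) = 0 := by rw [hz, dotProduct_zero]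
      have e3 : Y *ᵥ (R1 *ᵥ z) = 0 := by
        have h := hYpsd.dotProduct_mulVec_zero_iff (R1 *ᵥ z)
        simp only [star_trivial] at h
        exact h.mp (by rw [← e1, e2])
      have e4 : Pi1 *ᵥ (R1 *ᵥ z) = 0 := by
        rw [Matrix.mulVec_mulVec]
        have h : Pi1 * R1 = 0 := by
          rw [hR1, Matrix.mul_sub, Matrix.mul_one, hPi1idem, sub_self]
        rw [h, Matrix.zero_mulVec]
      exact hker1 _ e4 e3
    have hv1 : R1 *ᵥ v = v := by
      rw [hR1, Matrix.sub_mulVec, Matrix.one_mulVec, hv, sub_zero]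
    calc v ⬝ᵥ z = (R1 *ᵥ v) ⬝ᵥ z := by rw [hv1]
      _ = z ⬝ᵥ (R1 *ᵥ v) := dotProduct_comm _ _
      _ = (R1 *ᵥ z) ⬝ᵥ v := by rw [dot_mulVec_t R1 z v, hR1t]
      _ = 0 := by rw [hR1z, zero_dotProduct]
  have hperp2 : ∀ v : Fin n → ℝ, Pi2 *ᵥ v = 0 → ∀ z, S2 *ᵥ z = 0 → v ⬝ᵥ z = 0 := by
    intro v hv z hz
    have hR2z : R2 *ᵥ z = 0 := by
      have e0 : S2 *ᵥ z = R2 *ᵥ (Y *ᵥ (R2 *ᵥ z)) := by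
        rw [hS2]
        simp only [Matrix.mulVec_mulVec, Matrix.mul_assoc]
      have e1 : z ⬝ᵥ (S2 *ᵥ z) = (R2 *ᵥ z) ⬝ᵥ (Y *ᵥ (R2 *ᵥ z)) := by
        rw [e0, dot_mulVec_t R2 z (Y *ᵥ (R2 *ᵥ z)), hR2t]
      have e2 : z ⬝ᵥ (S2 *ᵥ z) = 0 := by rw [hz, dotProduct_zero]
      have e3 : Y *ᵥ (R2 *ᵥ z) = 0 := by
        have h := hYpsd.dotProduct_mulVec_zero_iff (R2 *ᵥ z)
        simp only [star_trivial] at h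
        exact h.mp (by rw [← e1, e2])
      have e4 : Pi2 *ᵥ (R2 *ᵥ z) = 0 := by
        rw [Matrix.mulVec_mulVec]
        have h : Pi2 * R2 = 0 := by
          rw [hR2, Matrix.mul_sub, Matrix.mul_one, hPi2idem, sub_self]
        rw [h, Matrix.zero_mulVec]
      exact hker2 _ e4 e3
    have hv1 : R2 *ᵥ v = v := by
      rw [hR2, Matrix.sub_mulVec, Matrix.one_mulVec, hv, sub_zero]
    calc v ⬝ᵥ z = (R2 *ᵥ v) ⬝ᵥ z := by rw [hv1]
      _ = z ⬝ᵥ (R2 *ᵥ v) := dotProduct_comm _ _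
      _ = (R2 *ᵥ z) ⬝ᵥ v := by rw [dot_mulVec_t R2 z v, hR2t]
      _ = 0 := by rw [hR2z, zero_dotProduct]
  -- spectra via conjugation
  have hspecconj : ∀ X : Matrix (Fin n) (Fin n) ℝ,
      spectrum ℝ (C * X * C⁻¹) = spectrum ℝ X := by
    intro X
    have hCu : IsUnit C := C.isUnit_iff_isUnit_det.mpr hCdet
    have h1 : (hCu.unit : Matrix (Fin n) (Fin n) ℝ) = C := hCu.unit_spec
    have h2 : ((hCu.unit⁻¹ : (Matrix (Fin n) (Fin n) ℝ)ˣ) : Matrix (Fin n) (Fin n) ℝ)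
        = C⁻¹ := by rw [Matrix.coe_units_inv, h1]
    have h3 : C * X * C⁻¹ = (hCu.unit : Matrix (Fin n) (Fin n) ℝ) * X *
        ((hCu.unit⁻¹ : (Matrix (Fin n) (Fin n) ℝ)ˣ) : Matrix (Fin n) (Fin n) ℝ) := by
      rw [h1, h2]
    rw [h3, spectrum.units_conjugate]
  have hprojconj1 : C * (1 - proj A P) * C⁻¹ = R1 := by
    rw [Matrix.mul_sub, Matrix.sub_mul, Matrix.mul_one, hCCi,
      conj_proj hCsym hCC hCCi P, ← hKdef, ← hPi1, ← hR1]
  have hprojconj2 : C * (1 - proj A Ph) * C⁻¹ = R2 := by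
    rw [Matrix.mul_sub, Matrix.sub_mul, Matrix.mul_one, hCCi,
      conj_proj hCsym hCC hCCi Ph, ← hKhdef, ← hPi2, ← hR2]
  have hconjP : C * (smoothX A S Ms * (1 - proj A P)) * C⁻¹ = Y * R1 := by
    rw [conj_mul C hCiC, hYconj, hprojconj1]
  have hconjPh : C * (smoothX A S Ms * (1 - proj A Ph)) * C⁻¹ = Y * R2 := by
    rw [conj_mul C hCiC, hYconj, hprojconj2]
  have hsetP : {t : ℝ | t ∈ spectrum ℝ (smoothX A S Ms * (1 - proj A P)) ∧ 0 < t}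
      = {t : ℝ | t ∈ spectrum ℝ S1 ∧ 0 < t} := by
    ext t
    simp only [Set.mem_setOf_eq]
    constructor
    · rintro ⟨h1, h2⟩
      refine ⟨?_, h2⟩
      rw [← hspecconj (smoothX A S Ms * (1 - proj A P)), hconjP] at h1
      have h3 : (Y * R1) * R1 = Y * R1 := by rw [Matrix.mul_assoc, hR1idem]
      have h5 : ((Units.mk0 t h2.ne' : ℝˣ) : ℝ) ∈ spectrum ℝ ((Y * R1) * R1) := by
        rw [h3]; exact h1
      have h6 := spectrum.unit_mem_mul_comm.mp h5
      rw [← Matrix.mul_assoc, ← hS1] at h6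
      exact h6
    · rintro ⟨h1, h2⟩
      refine ⟨?_, h2⟩
      rw [← hspecconj (smoothX A S Ms * (1 - proj A P)), hconjP]
      have h5 : ((Units.mk0 t h2.ne' : ℝˣ) : ℝ) ∈ spectrum ℝ (R1 * (Y * R1)) := by
        rw [← Matrix.mul_assoc, ← hS1]; exact h1
      have h6 := spectrum.unit_mem_mul_comm.mpr h5
      have h3 : (Y * R1) * R1 = Y * R1 := by rw [Matrix.mul_assoc, hR1idem]
      rw [h3] at h6
      exact h6
  have hsetPh : {t : ℝ | t ∈ spectrum ℝ (smoothX A S Ms * (1 - proj A Ph)) ∧ 0 < t}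
      = {t : ℝ | t ∈ spectrum ℝ S2 ∧ 0 < t} := by
    ext t
    simp only [Set.mem_setOf_eq]
    constructor
    · rintro ⟨h1, h2⟩
      refine ⟨?_, h2⟩
      rw [← hspecconj (smoothX A S Ms * (1 - proj A Ph)), hconjPh] at h1
      have h3 : (Y * R2) * R2 = Y * R2 := by rw [Matrix.mul_assoc, hR2idem]
      have h5 : ((Units.mk0 t h2.ne' : ℝˣ) : ℝ) ∈ spectrum ℝ ((Y * R2) * R2) := by
        rw [h3]; exact h1
      have h6 := spectrum.unit_mem_mul_comm.mp h5
      rw [← Matrix.mul_assoc, ← hS2] at h6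
      exact h6
    · rintro ⟨h1, h2⟩
      refine ⟨?_, h2⟩
      rw [← hspecconj (smoothX A S Ms * (1 - proj A Ph)), hconjPh]
      have h5 : ((Units.mk0 t h2.ne' : ℝˣ) : ℝ) ∈ spectrum ℝ (R2 * (Y * R2)) := by
        rw [← Matrix.mul_assoc, ← hS2]; exact h1
      have h6 := spectrum.unit_mem_mul_comm.mpr h5
      have h3 : (Y * R2) * R2 = Y * R2 := by rw [Matrix.mul_assoc, hR2idem]
      rw [h3] at h6
      exact h6
  -- part 1 : comparison of smallest positive eigenvalues
  have hT2mem : ∀ t : ℝ, t ∈ spectrum ℝ S2 → 0 < t →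
      sInf {t : ℝ | t ∈ spectrum ℝ S1 ∧ 0 < t} ≤ t := by
    intro t hts htp
    obtain ⟨v, hv0, hveq⟩ := eigvec_of_mem_spectrum hts
    have hR2S2 : R2 * S2 = S2 := by
      rw [hS2]
      calc R2 * (R2 * Y * R2) = (R2 * R2) * Y * R2 := by simp only [Matrix.mul_assoc]
        _ = R2 * Y * R2 := by rw [hR2idem]
    have hR2v : R2 *ᵥ v = v := by
      have h1 : R2 *ᵥ (S2 *ᵥ v) = S2 *ᵥ v := by rw [Matrix.mulVec_mulVec, hR2S2]
      rw [hveq, Matrix.mulVec_smul] at h1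
      exact smul_right_injective (Fin n → ℝ) htp.ne' h1
    have hPi2v : Pi2 *ᵥ v = 0 := by
      have h : Pi2 = 1 - R2 := by rw [hR2, sub_sub_cancel]
      rw [h, Matrix.sub_mulVec, Matrix.one_mulVec, hR2v, sub_self]
    have hPi1v : Pi1 *ᵥ v = 0 := by
      have h : Pi1 *ᵥ v = (Pi1 * Pi2) *ᵥ v := by rw [hPi1Pi2]
      rw [h, ← Matrix.mulVec_mulVec, hPi2v, Matrix.mulVec_zero]
    have hR1v : R1 *ᵥ v = v := by
      rw [hR1, Matrix.sub_mulVec, Matrix.one_mulVec, hPi1v, sub_zero]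
    have hvS2 : v ⬝ᵥ (S2 *ᵥ v) = t * (v ⬝ᵥ v) := by
      rw [hveq]
      simp [smul_eq_mul, dotProduct_smul]
    have hvY : v ⬝ᵥ (Y *ᵥ v) = t * (v ⬝ᵥ v) := by
      have eS2v : S2 *ᵥ v = R2 *ᵥ (Y *ᵥ v) := by
        rw [hS2]
        calc (R2 * Y * R2) *ᵥ v = (R2 * Y) *ᵥ (R2 *ᵥ v) :=
              (Matrix.mulVec_mulVec v (R2 * Y) R2).symm
          _ = (R2 * Y) *ᵥ v := by rw [hR2v]
          _ = R2 *ᵥ (Y *ᵥ v) := (Matrix.mulVec_mulVec v R2 Y).symm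
      have h := hvS2
      rw [eS2v, dot_mulVec_t R2 v (Y *ᵥ v), hR2t, hR2v] at h
      exact h
    obtain ⟨lam, hlam_spec, hlam_pos, hlam_le⟩ :=
      exists_small_pos_eigen S1 hS1psd hv0 (hperp1 v hPi1v)
    have hvS1 : v ⬝ᵥ (S1 *ᵥ v) = t * (v ⬝ᵥ v) := by
      have eS1v : S1 *ᵥ v = R1 *ᵥ (Y *ᵥ v) := by
        rw [hS1]
        calc (R1 * Y * R1) *ᵥ v = (R1 * Y) *ᵥ (R1 *ᵥ v) :=
              (Matrix.mulVec_mulVec v (R1 * Y) R1).symm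
          _ = (R1 * Y) *ᵥ v := by rw [hR1v]
          _ = R1 *ᵥ (Y *ᵥ v) := (Matrix.mulVec_mulVec v R1 Y).symm
      rw [eS1v, dot_mulVec_t R1 v (Y *ᵥ v), hR1t, hR1v, hvY]
    have hdotpos : 0 < v ⬝ᵥ v := by
      rcases (dot_self_nonneg v).lt_or_eq with h | h
      · exact h
      · exact absurd (dotProduct_self_eq_zero.mp h.symm) hv0
    have hlam_t : lam ≤ t := by
      rw [hvS1] at hlam_le
      exact le_of_mul_le_mul_right hlam_le hdotpos
    refine le_trans (csInf_le ⟨0, fun x hx => le_of_lt hx.2⟩ ⟨hlam_spec, hlam_pos⟩) hlam_t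
  -- nonemptiness of the positive spectrum of S2
  obtain ⟨v0, hv00, hv0ker⟩ := exists_ker_ne_zero Khᵀ hmc
  have hPi2v0 : Pi2 *ᵥ v0 = 0 := by
    rw [hPi2]
    have h : (Kh * (Khᵀ * Kh)⁻¹ * Khᵀ) *ᵥ v0 = (Kh * (Khᵀ * Kh)⁻¹) *ᵥ (Khᵀ *ᵥ v0) :=
      (Matrix.mulVec_mulVec v0 (Kh * (Khᵀ * Kh)⁻¹) Khᵀ).symm
    rw [h, hv0ker, Matrix.mulVec_zero]
  obtain ⟨t0, ht0s, ht0p, _⟩ :=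
    exists_small_pos_eigen S2 hS2psd hv00 (hperp2 v0 hPi2v0)
  constructor
  · have e1 : sigmaTL A S P Ms = sInf {t : ℝ | t ∈ spectrum ℝ S1 ∧ 0 < t} := by
      rw [sigmaTL, lamMinPos, hsetP]
    have e2 : sigmaTL A S Ph Ms = sInf {t : ℝ | t ∈ spectrum ℝ S2 ∧ 0 < t} := by
      rw [sigmaTL, lamMinPos, hsetPh]
    rw [e1, e2]
    refine le_csInf ⟨t0, ht0s, ht0p⟩ ?_
    rintro t ⟨hts, htp⟩
    exact hT2mem t hts htp
  · -- part 2 : comparison of A-norms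
    set G : Matrix (Fin n) (Fin n) ℝ := 1 - (C * S) * Ms⁻¹ * (Sᵀ * C) with hG
    set Q : Matrix (Fin n) (Fin n) ℝ := R1 * G with hQ
    clear_value G Q
    have hGt : Gᵀ = 1 - (C * S) * (Msᵀ)⁻¹ * (Sᵀ * C) := by
      rw [hG, Matrix.transpose_sub, Matrix.transpose_one]
      congr 1
      simp only [Matrix.transpose_mul, Matrix.transpose_transpose,
        Matrix.transpose_nonsing_inv, hCsym, Matrix.mul_assoc]
    have hE1 : C * Etl A S P Ms * C⁻¹ = Gᵀ * R1 * G := by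
      rw [Etl,
        conj_mul C hCiC ((1 - S * (Msᵀ)⁻¹ * Sᵀ * A) * (1 - proj A P))
          (1 - S * Ms⁻¹ * Sᵀ * A),
        conj_mul C hCiC (1 - S * (Msᵀ)⁻¹ * Sᵀ * A) (1 - proj A P),
        conj_sandwich hCCi hACi S (Msᵀ)⁻¹, conj_sandwich hCCi hACi S Ms⁻¹,
        hprojconj1, ← hGt, ← hG]
    have hE2 : C * Etl A S Ph Ms * C⁻¹ = Gᵀ * R2 * G := by
      rw [Etl,
        conj_mul C hCiC ((1 - S * (Msᵀ)⁻¹ * Sᵀ * A) * (1 - proj A Ph))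
          (1 - S * Ms⁻¹ * Sᵀ * A),
        conj_mul C hCiC (1 - S * (Msᵀ)⁻¹ * Sᵀ * A) (1 - proj A Ph),
        conj_sandwich hCCi hACi S (Msᵀ)⁻¹, conj_sandwich hCCi hACi S Ms⁻¹,
        hprojconj2, ← hGt, ← hG]
    have hQtQ : Qᵀ * Q = Gᵀ * R1 * G := by
      rw [hQ, Matrix.transpose_mul, hR1t, Matrix.mul_assoc Gᵀ R1 (R1 * G),
        ← Matrix.mul_assoc R1 R1 G, hR1idem, ← Matrix.mul_assoc]
    have hQtRQ : Qᵀ * R2 * Q = Gᵀ * R2 * G := by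
      rw [hQ, Matrix.transpose_mul, hR1t]
      calc Gᵀ * R1 * R2 * (R1 * G) = Gᵀ * ((R1 * R2) * (R1 * G)) := by
            simp only [Matrix.mul_assoc]
        _ = Gᵀ * (R2 * (R1 * G)) := by rw [hR1R2]
        _ = Gᵀ * ((R2 * R1) * G) := by rw [← Matrix.mul_assoc R2 R1 G]
        _ = Gᵀ * (R2 * G) := by rw [hR2R1]
        _ = Gᵀ * R2 * G := by rw [Matrix.mul_assoc]
    rw [aNorm_eq_opN hCsym hCC hCCi hCiC (Etl A S Ph Ms),
      aNorm_eq_opN hCsym hCC hCCi hCiC (Etl A S P Ms), hE1, hE2, ← hQtQ, ← hQtRQ]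
    calc opN (Qᵀ * R2 * Q) ≤ opN (Qᵀ * R2) * opN Q := opN_mul_le hn _ _
      _ ≤ (opN Qᵀ * opN R2) * opN Q :=
          mul_le_mul_of_nonneg_right (opN_mul_le hn _ _) (opN_nonneg hn Q)
      _ ≤ (opN Q * 1) * opN Q := by
          refine mul_le_mul_of_nonneg_right ?_ (opN_nonneg hn Q)
          rw [opN_transpose hn]
          exact mul_le_mul_of_nonneg_left (opN_proj_le_one hn hR2t hR2idem)
            (opN_nonneg hn Q)
      _ = opN Q * opN Q := by rw [mul_one]
      _ ≤ opN (Qᵀ * Q) := opN_sq_le_opN_transpose_mul hn Q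
end

section
/- Under the stated assumptions, λ_max( (I − S M̃_s^{-1} S^T A)(I − Π_A) ) = 1 − σ_TL, where σ_TL = λ_min^+( S M̃_s^{-1} S^T A (I − Π_A) ). -/
open Matrix

section Helpers

lemma mem_spec {k : ℕ} (M : Matrix (Fin k) (Fin k) ℝ) (t : ℝ) :
    t ∈ spectrum ℝ M ↔ ∃ v, v ≠ 0 ∧ M *ᵥ v = t • v := by
  rw [spectrum.mem_iff, Algebra.algebraMap_eq_smul_one,
    (Matrix.isUnit_iff_isUnit_det _).not, isUnit_iff_ne_zero, not_ne_iff,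
    ← Matrix.exists_mulVec_eq_zero_iff]
  constructor
  · rintro ⟨v, hv, h⟩
    refine ⟨v, hv, ?_⟩
    rw [sub_mulVec, smul_mulVec, one_mulVec, sub_eq_zero] at h
    exact h.symm
  · rintro ⟨v, hv, h⟩
    exact ⟨v, hv, by rw [sub_mulVec, smul_mulVec, one_mulVec, h, sub_self]⟩

lemma spec_swap {k : ℕ} (M N : Matrix (Fin k) (Fin k) ℝ) {t : ℝ} (ht : t ≠ 0)
    (h : t ∈ spectrum ℝ (M * N)) : t ∈ spectrum ℝ (N * M) := by
  rw [mem_spec] at h ⊢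
  obtain ⟨v, hv, hMN⟩ := h
  refine ⟨N *ᵥ v, fun h0 => ?_, ?_⟩
  · rw [← mulVec_mulVec] at hMN
    rw [h0, mulVec_zero] at hMN
    exact hv (by simpa [ht, eq_comm, smul_eq_zero] using hMN.symm)
  · have h1 : (N * M) *ᵥ (N *ᵥ v) = N *ᵥ ((M * N) *ᵥ v) := by
      rw [mulVec_mulVec, mulVec_mulVec, mul_assoc]
    rw [h1, hMN, mulVec_smul]

lemma spec_swap_iff {k : ℕ} (M N : Matrix (Fin k) (Fin k) ℝ) {t : ℝ} (ht : t ≠ 0) :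
    t ∈ spectrum ℝ (M * N) ↔ t ∈ spectrum ℝ (N * M) :=
  ⟨spec_swap M N ht, spec_swap N M ht⟩

lemma spec_conj_sub {k : ℕ} {C : Matrix (Fin k) (Fin k) ℝ} (hC : IsUnit C.det)
    (N : Matrix (Fin k) (Fin k) ℝ) : spectrum ℝ N ⊆ spectrum ℝ (C * N * C⁻¹) := by
  intro t h
  rw [mem_spec] at h ⊢
  obtain ⟨v, hv, hNv⟩ := h
  refine ⟨C *ᵥ v, fun h0 => hv ?_, ?_⟩
  · have := Matrix.mulVec_injective_iff_isUnit.mpr ((Matrix.isUnit_iff_isUnit_det C).mpr hC)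
    exact this (by simpa using h0)
  · have h1 : (C * N * C⁻¹) *ᵥ (C *ᵥ v) = C *ᵥ (N *ᵥ ((C⁻¹ * C) *ᵥ v)) := by
      simp only [mulVec_mulVec, mul_assoc]
    rw [h1, Matrix.nonsing_inv_mul _ hC, one_mulVec, hNv, mulVec_smul]

lemma spec_conj {k : ℕ} {B : Matrix (Fin k) (Fin k) ℝ} (hB : IsUnit B.det)
    (M : Matrix (Fin k) (Fin k) ℝ) : spectrum ℝ (B * M * B⁻¹) = spectrum ℝ M := by
  have hBi : IsUnit B⁻¹.det := (Matrix.isUnit_nonsing_inv_det _ hB)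
  apply Set.Subset.antisymm
  · intro t h
    have h2 := spec_conj_sub hBi (B * M * B⁻¹) h
    have h3 : B⁻¹ * (B * M * B⁻¹) * B⁻¹⁻¹ = M := by
      rw [Matrix.nonsing_inv_nonsing_inv _ hB]
      calc B⁻¹ * (B * M * B⁻¹) * B = (B⁻¹ * B) * M * (B⁻¹ * B) := by noncomm_ring
        _ = M := by rw [Matrix.nonsing_inv_mul _ hB]; simp
    rwa [h3] at h2
  · exact spec_conj_sub hB M

lemma inj_of_rank {m : Type*} [Fintype m] {k : ℕ} {A : Matrix m (Fin k) ℝ} (h : A.rank = k) :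
    ∀ v, A *ᵥ v = 0 → v = 0 := by
  intro v hv
  have h1 := LinearMap.finrank_range_add_finrank_ker A.mulVecLin
  rw [show Module.finrank ℝ (LinearMap.range A.mulVecLin) = k from h,
    Module.finrank_pi, Fintype.card_fin] at h1
  have h2 : Module.finrank ℝ (LinearMap.ker A.mulVecLin) = 0 := by omega
  have h3 : LinearMap.ker A.mulVecLin = ⊥ := Submodule.finrank_eq_zero.mp h2
  have : v ∈ LinearMap.ker A.mulVecLin := by simpa [LinearMap.mem_ker] using hv
  simpa [h3] using this

lemma herm_t {k : ℕ} {M : Matrix (Fin k) (Fin k) ℝ} (h : M.IsHermitian) : Mᵀ = M := by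
  rwa [Matrix.IsHermitian, Matrix.conjTranspose_eq_transpose_of_trivial] at h

lemma posdef_conj {k l : ℕ} (C : Matrix (Fin k) (Fin l) ℝ)
    (hC : ∀ v, C *ᵥ v = 0 → v = 0) {M : Matrix (Fin k) (Fin k) ℝ} (hM : M.PosDef) :
    (Cᵀ * M * C).PosDef := by
  refine Matrix.PosDef.of_dotProduct_mulVec_pos ?_ ?_
  · have := (Matrix.isHermitian_conjTranspose_mul_mul C hM.1)
    simpa [Matrix.conjTranspose_eq_transpose_of_trivial] using this
  · intro x hx
    have hCx : C *ᵥ x ≠ 0 := fun h0 => hx (hC x h0)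
    have := hM.dotProduct_mulVec_pos hCx
    simpa [star_trivial, ← mulVec_mulVec, Matrix.dotProduct_mulVec, Matrix.vecMul_transpose]
      using this

lemma psd_conj {k l : ℕ} (C : Matrix (Fin k) (Fin l) ℝ)
    {M : Matrix (Fin k) (Fin k) ℝ} (hM : M.PosSemidef) : (Cᵀ * M * C).PosSemidef := by
  have := hM.conjTranspose_mul_mul_same C
  simpa [Matrix.conjTranspose_eq_transpose_of_trivial] using this

lemma dot_conj {k l : ℕ} (C : Matrix (Fin k) (Fin l) ℝ) (M : Matrix (Fin k) (Fin k) ℝ)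
    (v : Fin l → ℝ) :
    v ⬝ᵥ ((Cᵀ * M * C) *ᵥ v) = (C *ᵥ v) ⬝ᵥ (M *ᵥ (C *ᵥ v)) := by
  rw [← mulVec_mulVec, ← mulVec_mulVec, Matrix.dotProduct_mulVec, Matrix.vecMul_transpose,
    mulVec_mulVec]

lemma dot_self_nonneg {k : ℕ} (v : Fin k → ℝ) : 0 ≤ v ⬝ᵥ v :=
  Finset.sum_nonneg fun i _ => mul_self_nonneg _

lemma dot_self_pos {k : ℕ} {v : Fin k → ℝ} (hv : v ≠ 0) : 0 < v ⬝ᵥ v := by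
  rcases (dot_self_nonneg v).eq_or_lt with h | h
  · exact absurd (dotProduct_self_eq_zero.mp h.symm) hv
  · exact h

lemma proj_le_one {k : ℕ} {π : Matrix (Fin k) (Fin k) ℝ} (hsym : πᵀ = π)
    (hidem : π * π = π) (v : Fin k → ℝ) : v ⬝ᵥ (π *ᵥ v) ≤ v ⬝ᵥ v := by
  have h0 : 0 ≤ (v - π *ᵥ v) ⬝ᵥ (v - π *ᵥ v) := dot_self_nonneg _
  have h1 : (π *ᵥ v) ⬝ᵥ (π *ᵥ v) = v ⬝ᵥ (π *ᵥ v) := by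
    have h := dot_conj π 1 v
    rw [Matrix.mul_one, hsym, hidem] at h
    simpa using h.symm
  have h2 : (π *ᵥ v) ⬝ᵥ v = v ⬝ᵥ (π *ᵥ v) := dotProduct_comm _ _
  rw [dotProduct_sub, sub_dotProduct, sub_dotProduct, h1, h2] at h0
  linarith

lemma dot_mulVec_symm {k : ℕ} {M : Matrix (Fin k) (Fin k) ℝ} (hM : Mᵀ = M)
    (x y : Fin k → ℝ) : (M *ᵥ x) ⬝ᵥ y = x ⬝ᵥ (M *ᵥ y) := by
  rw [Matrix.dotProduct_mulVec, ← Matrix.vecMul_transpose, hM]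

lemma inv_quad_le {k : ℕ} {M N : Matrix (Fin k) (Fin k) ℝ} (hM : M.PosDef) (hN : N.PosDef)
    (hMN : (M - N).PosSemidef) (u : Fin k → ℝ) :
    u ⬝ᵥ (M⁻¹ *ᵥ u) ≤ u ⬝ᵥ (N⁻¹ *ᵥ u) := by
  have hMd : IsUnit M.det := (Matrix.isUnit_iff_isUnit_det _).mp hM.isUnit
  have hNd : IsUnit N.det := (Matrix.isUnit_iff_isUnit_det _).mp hN.isUnit
  have hMsym : Mᵀ = M := herm_t hM.isHermitian
  have hNsym : Nᵀ = N := herm_t hN.isHermitian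
  set y := M⁻¹ *ᵥ u with hy'
  set z := N⁻¹ *ᵥ u with hz'
  have hy : M *ᵥ y = u := by rw [hy', mulVec_mulVec, Matrix.mul_nonsing_inv _ hMd, one_mulVec]
  have hz : N *ᵥ z = u := by rw [hz', mulVec_mulVec, Matrix.mul_nonsing_inv _ hNd, one_mulVec]
  have e1 : u ⬝ᵥ y = y ⬝ᵥ (M *ᵥ y) := by rw [← hy, dot_mulVec_symm hMsym]
  have e2 : u ⬝ᵥ z = z ⬝ᵥ (N *ᵥ z) := by rw [← hz, dot_mulVec_symm hNsym]
  have e3 : y ⬝ᵥ (N *ᵥ y) ≤ y ⬝ᵥ (M *ᵥ y) := by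
    have h0 := hMN.dotProduct_mulVec_nonneg y
    rw [star_trivial, sub_mulVec, dotProduct_sub] at h0
    linarith
  have e4 : 0 ≤ (y - z) ⬝ᵥ (N *ᵥ (y - z)) := by
    have h0 := hN.posSemidef.dotProduct_mulVec_nonneg (y - z)
    rwa [star_trivial] at h0
  have e5 : (y - z) ⬝ᵥ (N *ᵥ (y - z))
      = y ⬝ᵥ (N *ᵥ y) - u ⬝ᵥ y - u ⬝ᵥ y + u ⬝ᵥ z := by
    rw [mulVec_sub, dotProduct_sub, sub_dotProduct, sub_dotProduct, hz]
    have c1 : y ⬝ᵥ u = u ⬝ᵥ y := dotProduct_comm _ _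
    have c2 : z ⬝ᵥ (N *ᵥ y) = u ⬝ᵥ y := by rw [← dot_mulVec_symm hNsym z y, hz]
    have c3 : z ⬝ᵥ u = u ⬝ᵥ z := dotProduct_comm _ _
    rw [c1, c2, c3]; ring
  linarith

lemma tMs_identity {k : ℕ} (Ms As : Matrix (Fin k) (Fin k) ℝ) (hAs : Asᵀ = As)
    (hW : IsUnit (Ms + Msᵀ - As).det) :
    Msᵀ * (Ms + Msᵀ - As)⁻¹ * Ms - As
      = (As - Ms) * (Ms + Msᵀ - As)⁻¹ * (As - Ms)ᵀ := by
  set W := Ms + Msᵀ - As with hWdef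
  have hg1 : W * W⁻¹ = 1 := Matrix.mul_nonsing_inv _ hW
  have hg2 : W⁻¹ * W = 1 := Matrix.nonsing_inv_mul _ hW
  have hMsT : Msᵀ = W - Ms + As := by rw [hWdef]; abel
  have hT : (As - Ms)ᵀ = As - Msᵀ := by rw [Matrix.transpose_sub, hAs]
  rw [hT, hMsT]
  have e1 : ∀ Z : Matrix (Fin k) (Fin k) ℝ, W * (W⁻¹ * Z) = Z := fun Z => by
    rw [← Matrix.mul_assoc, hg1, Matrix.one_mul]
  simp only [Matrix.sub_mul, Matrix.add_mul, Matrix.mul_sub, Matrix.mul_add,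
    Matrix.mul_assoc, e1, hg2, Matrix.mul_one]
  abel

open scoped MatrixOrder in
lemma exists_sqrt_sym {k : ℕ} {A : Matrix (Fin k) (Fin k) ℝ} (hA : A.PosDef) :
    ∃ B : Matrix (Fin k) (Fin k) ℝ, B * B = A ∧ Bᵀ = B :=
  ⟨CFC.sqrt A, CFC.sqrt_mul_sqrt_self A hA.posSemidef.nonneg,
    herm_t (CFC.sqrt_nonneg A).posSemidef.isHermitian⟩

end Helpers
set_option maxHeartbeats 2000000 in
/-- `λ_max( (I - S M̃_s⁻¹ Sᵀ A)(I - Π_A) ) = 1 - σ_TL`. -/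
theorem lamMax_smoother_complement_proj {n ns nc : ℕ}
    (A : Matrix (Fin n) (Fin n) ℝ) (hA : A.PosDef)
    (S : Matrix (Fin n) (Fin ns) ℝ) (hS : S.rank = ns)
    (P : Matrix (Fin n) (Fin nc) ℝ) (hP : P.rank = nc)
    (hns : ns < n) (hnc : nc < n) (hsum : n ≤ ns + nc)
    (hSP : (fromCols S P).rank = n)
    (Ms : Matrix (Fin ns) (Fin ns) ℝ) (hMs : IsUnit Ms.det)
    (hMsA : (Ms + Msᵀ - Sᵀ * A * S).PosDef) :
    lamMax ((1 - smoothX A S Ms) * (1 - proj A P)) = 1 - sigmaTL A S P Ms := by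
  have hnc0 : 0 < nc := by omega
  obtain ⟨As, hAsdef⟩ : ∃ As, As = Sᵀ * A * S := ⟨_, rfl⟩
  obtain ⟨W, hWdef⟩ : ∃ W, W = Ms + Msᵀ - As := ⟨_, rfl⟩
  have hW : W.PosDef := by rw [hWdef, hAsdef]; exact hMsA
  have hWdet : IsUnit W.det := (Matrix.isUnit_iff_isUnit_det _).mp hW.isUnit
  -- injectivity facts
  have hSinj : ∀ v, S *ᵥ v = 0 → v = 0 := inj_of_rank hS
  have hPinj : ∀ v, P *ᵥ v = 0 → v = 0 := inj_of_rank hP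
  have hMsinj : ∀ v, Ms *ᵥ v = 0 → v = 0 := by
    intro v hv
    exact Matrix.mulVec_injective_iff_isUnit.mpr ((Matrix.isUnit_iff_isUnit_det Ms).mpr hMs)
      (by simpa using hv)
  have hSPinj : ∀ w : Fin n → ℝ, Sᵀ *ᵥ w = 0 → Pᵀ *ᵥ w = 0 → w = 0 := by
    intro w h1 h2
    have hr : (fromRows Sᵀ Pᵀ).rank = n := by
      rw [← Matrix.transpose_fromCols, Matrix.rank_transpose, hSP]
    apply inj_of_rank hr
    rw [Matrix.fromRows_mulVec, h1, h2]
    funext i; cases i <;> simp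
  -- positive definiteness
  have hAs : As.PosDef := by rw [hAsdef]; exact posdef_conj S hSinj hA
  have hAssym : Asᵀ = As := herm_t hAs.isHermitian
  have hAsdet : IsUnit As.det := (Matrix.isUnit_iff_isUnit_det _).mp hAs.isUnit
  obtain ⟨Mt, hMtdef⟩ : ∃ Mt, Mt = tMs Ms As := ⟨_, rfl⟩
  have hMtexp : Mt = Msᵀ * W⁻¹ * Ms := by rw [hMtdef, tMs, hWdef]
  have hMt : Mt.PosDef := by rw [hMtexp]; exact posdef_conj Ms hMsinj hW.inv
  have hMtdet : IsUnit Mt.det := (Matrix.isUnit_iff_isUnit_det _).mp hMt.isUnit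
  have hMtAs : (Mt - As).PosSemidef := by
    have hid : Mt - As = ((As - Ms)ᵀ)ᵀ * W⁻¹ * (As - Ms)ᵀ := by
      rw [Matrix.transpose_transpose, hMtexp, hWdef]
      exact tMs_identity Ms As hAssym (by rw [hWdef] at hWdet; exact hWdet)
    rw [hid]
    exact psd_conj _ hW.inv.posSemidef
  -- square root of A
  obtain ⟨B, hBB, hBsym⟩ := exists_sqrt_sym hA
  have hBdet : IsUnit B.det := by
    rw [isUnit_iff_ne_zero]
    intro h0
    have : A.det = 0 := by rw [← hBB, Matrix.det_mul, h0, mul_zero]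
    exact hA.det_pos.ne' this
  have hBinj : ∀ v, B *ᵥ v = 0 → v = 0 := by
    intro v hv
    exact Matrix.mulVec_injective_iff_isUnit.mpr ((Matrix.isUnit_iff_isUnit_det B).mpr hBdet)
      (by simpa using hv)
  have hAB : A * B⁻¹ = B := by
    rw [← hBB, Matrix.mul_assoc, Matrix.mul_nonsing_inv _ hBdet, Matrix.mul_one]
  -- hatted matrices
  obtain ⟨X, hXdef⟩ : ∃ X, X = smoothX A S Ms := ⟨_, rfl⟩
  obtain ⟨PiA, hPidef⟩ : ∃ PiA, PiA = proj A P := ⟨_, rfl⟩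
  obtain ⟨C, hCdef⟩ : ∃ C, C = B * S := ⟨_, rfl⟩
  obtain ⟨D, hDdef⟩ : ∃ D, D = B * P := ⟨_, rfl⟩
  obtain ⟨Ac, hAcdef⟩ : ∃ Ac, Ac = Pᵀ * A * P := ⟨_, rfl⟩
  have hAc : Ac.PosDef := by rw [hAcdef]; exact posdef_conj P hPinj hA
  have hAcdet : IsUnit Ac.det := (Matrix.isUnit_iff_isUnit_det _).mp hAc.isUnit
  have hAcsym : Acᵀ = Ac := herm_t hAc.isHermitian
  have hAcisym : (Ac⁻¹)ᵀ = Ac⁻¹ := by rw [Matrix.transpose_nonsing_inv, hAcsym]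
  have hAsisym : (As⁻¹)ᵀ = As⁻¹ := by rw [Matrix.transpose_nonsing_inv, hAssym]
  obtain ⟨Xh, hXhdef⟩ : ∃ Xh, Xh = C * Mt⁻¹ * Cᵀ := ⟨_, rfl⟩
  obtain ⟨ph, hphdef⟩ : ∃ ph, ph = D * Ac⁻¹ * Dᵀ := ⟨_, rfl⟩
  obtain ⟨Qh, hQhdef⟩ : ∃ Qh, Qh = 1 - ph := ⟨_, rfl⟩
  have hCt : Cᵀ = Sᵀ * B := by rw [hCdef, Matrix.transpose_mul, hBsym]
  have hDt : Dᵀ = Pᵀ * B := by rw [hDdef, Matrix.transpose_mul, hBsym]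
  -- conjugation identities
  have hXc : B * X * B⁻¹ = Xh := by
    rw [hXhdef, hCt, hXdef, hCdef]
    show B * (S * (tMs Ms (Sᵀ * A * S))⁻¹ * Sᵀ * A) * B⁻¹ = B * S * Mt⁻¹ * (Sᵀ * B)
    rw [← hAsdef, ← hMtdef]
    simp only [Matrix.mul_assoc, hAB]
  have hPc : B * PiA * B⁻¹ = ph := by
    rw [hphdef, hDt, hPidef, hDdef]
    show B * (P * (Pᵀ * A * P)⁻¹ * Pᵀ * A) * B⁻¹ = B * P * Ac⁻¹ * (Pᵀ * B)
    rw [← hAcdef]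
    simp only [Matrix.mul_assoc, hAB]
  have h1Xc : B * (1 - X) * B⁻¹ = 1 - Xh := by
    rw [Matrix.mul_sub, Matrix.mul_one, Matrix.sub_mul, Matrix.mul_nonsing_inv _ hBdet, hXc]
  have hQc : B * (1 - PiA) * B⁻¹ = Qh := by
    rw [Matrix.mul_sub, Matrix.mul_one, Matrix.sub_mul, Matrix.mul_nonsing_inv _ hBdet, hPc,
      hQhdef]
  have hmid : ∀ Y Z : Matrix (Fin n) (Fin n) ℝ,
      B * (Y * Z) * B⁻¹ = (B * Y * B⁻¹) * (B * Z * B⁻¹) := by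
    intro Y Z
    calc B * (Y * Z) * B⁻¹ = B * Y * (B⁻¹ * B) * Z * B⁻¹ := by
          rw [Matrix.nonsing_inv_mul _ hBdet]; noncomm_ring
      _ = (B * Y * B⁻¹) * (B * Z * B⁻¹) := by noncomm_ring
  have hGc : B * ((1 - X) * (1 - PiA)) * B⁻¹ = (1 - Xh) * Qh := by
    rw [hmid, h1Xc, hQc]
  have hXQc : B * (X * (1 - PiA)) * B⁻¹ = Xh * Qh := by
    rw [hmid, hXc, hQc]
  -- algebra of the projection
  have hDtD : Dᵀ * D = Ac := by
    rw [hDt, hDdef, hAcdef, Matrix.mul_assoc, ← Matrix.mul_assoc B B P, hBB,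
      ← Matrix.mul_assoc]
  have hCtC : Cᵀ * C = As := by
    rw [hCt, hCdef, hAsdef, Matrix.mul_assoc, ← Matrix.mul_assoc B B S, hBB,
      ← Matrix.mul_assoc]
  have hph_sym : phᵀ = ph := by
    simp only [hphdef, Matrix.transpose_mul, Matrix.transpose_transpose, hAcisym,
      Matrix.mul_assoc]
  have hph_idem : ph * ph = ph := by
    calc ph * ph = D * (Ac⁻¹ * (Dᵀ * D) * (Ac⁻¹ * Dᵀ)) := by
          rw [hphdef]; simp only [Matrix.mul_assoc]
      _ = D * (Ac⁻¹ * Ac * (Ac⁻¹ * Dᵀ)) := by rw [hDtD, Matrix.mul_assoc]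
      _ = ph := by rw [Matrix.nonsing_inv_mul _ hAcdet, Matrix.one_mul, hphdef,
            Matrix.mul_assoc]
  have hQh_sym : Qhᵀ = Qh := by
    rw [hQhdef, Matrix.transpose_sub, Matrix.transpose_one, hph_sym]
  have hQh_idem : Qh * Qh = Qh := by
    rw [hQhdef]
    simp only [Matrix.mul_sub, Matrix.sub_mul, Matrix.mul_one, Matrix.one_mul, hph_idem]
    abel
  -- Xh facts
  have hXh_psd : Xh.PosSemidef := by
    have h := psd_conj Cᵀ hMt.inv.posSemidef
    rwa [Matrix.transpose_transpose, ← hXhdef] at h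
  have hXh_sym : Xhᵀ = Xh := herm_t hXh_psd.isHermitian
  have hXh_dot : ∀ v : Fin n → ℝ, v ⬝ᵥ (Xh *ᵥ v) = (Cᵀ *ᵥ v) ⬝ᵥ (Mt⁻¹ *ᵥ (Cᵀ *ᵥ v)) := by
    intro v
    have h := dot_conj Cᵀ Mt⁻¹ v
    rwa [Matrix.transpose_transpose, ← hXhdef] at h
  have hXh_le : ∀ v : Fin n → ℝ, v ⬝ᵥ (Xh *ᵥ v) ≤ v ⬝ᵥ v := by
    intro v
    have h1 := inv_quad_le hMt hAs hMtAs (Cᵀ *ᵥ v)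
    have h2 : (Cᵀ *ᵥ v) ⬝ᵥ (As⁻¹ *ᵥ (Cᵀ *ᵥ v)) = v ⬝ᵥ ((C * As⁻¹ * Cᵀ) *ᵥ v) := by
      have h := dot_conj Cᵀ As⁻¹ v
      rw [Matrix.transpose_transpose] at h
      exact h.symm
    have hS_sym : (C * As⁻¹ * Cᵀ)ᵀ = C * As⁻¹ * Cᵀ := by
      simp only [Matrix.transpose_mul, Matrix.transpose_transpose, hAsisym,
        Matrix.mul_assoc]
    have hS_idem : (C * As⁻¹ * Cᵀ) * (C * As⁻¹ * Cᵀ) = C * As⁻¹ * Cᵀ := by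
      calc (C * As⁻¹ * Cᵀ) * (C * As⁻¹ * Cᵀ) = C * (As⁻¹ * (Cᵀ * C) * (As⁻¹ * Cᵀ)) := by
            simp only [Matrix.mul_assoc]
        _ = C * (As⁻¹ * As * (As⁻¹ * Cᵀ)) := by rw [hCtC, Matrix.mul_assoc]
        _ = C * As⁻¹ * Cᵀ := by rw [Matrix.nonsing_inv_mul _ hAsdet, Matrix.one_mul,
              Matrix.mul_assoc]
    calc v ⬝ᵥ (Xh *ᵥ v) = (Cᵀ *ᵥ v) ⬝ᵥ (Mt⁻¹ *ᵥ (Cᵀ *ᵥ v)) := hXh_dot v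
      _ ≤ (Cᵀ *ᵥ v) ⬝ᵥ (As⁻¹ *ᵥ (Cᵀ *ᵥ v)) := h1
      _ = v ⬝ᵥ ((C * As⁻¹ * Cᵀ) *ᵥ v) := h2
      _ ≤ v ⬝ᵥ v := proj_le_one hS_sym hS_idem v
  -- T facts
  obtain ⟨T, hTdef⟩ : ∃ T, T = Qh * Xh * Qh := ⟨_, rfl⟩
  have hT_sym : Tᵀ = T := by
    simp only [hTdef, Matrix.transpose_mul, hQh_sym, hXh_sym, Matrix.mul_assoc]
  have hQT : Qh * T = T := by
    calc Qh * T = (Qh * Qh) * (Xh * Qh) := by rw [hTdef]; noncomm_ring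
      _ = T := by rw [hQh_idem, hTdef, Matrix.mul_assoc]
  have hTQ : T * Qh = T := by
    calc T * Qh = (Qh * Xh) * (Qh * Qh) := by rw [hTdef]; noncomm_ring
      _ = T := by rw [hQh_idem, hTdef]
  have hT_dot : ∀ v : Fin n → ℝ, v ⬝ᵥ (T *ᵥ v) = (Qh *ᵥ v) ⬝ᵥ (Xh *ᵥ (Qh *ᵥ v)) := by
    intro v
    have h := dot_conj Qh Xh v
    rw [hQh_sym] at h
    rw [hTdef]
    exact h
  have hT_psd : ∀ v : Fin n → ℝ, 0 ≤ v ⬝ᵥ (T *ᵥ v) := by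
    intro v
    rw [hT_dot]
    have := hXh_psd.dotProduct_mulVec_nonneg (Qh *ᵥ v)
    rwa [star_trivial] at this
  have hT_le : ∀ v : Fin n → ℝ, v ⬝ᵥ (T *ᵥ v) ≤ v ⬝ᵥ v := by
    intro v
    have h1 : (Qh *ᵥ v) ⬝ᵥ (Qh *ᵥ v) = v ⬝ᵥ (Qh *ᵥ v) := by
      have h := dot_conj Qh 1 v
      rw [Matrix.mul_one, hQh_sym, hQh_idem] at h
      simpa using h.symm
    calc v ⬝ᵥ (T *ᵥ v) = (Qh *ᵥ v) ⬝ᵥ (Xh *ᵥ (Qh *ᵥ v)) := hT_dot v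
      _ ≤ (Qh *ᵥ v) ⬝ᵥ (Qh *ᵥ v) := hXh_le _
      _ = v ⬝ᵥ (Qh *ᵥ v) := h1
      _ ≤ v ⬝ᵥ v := proj_le_one hQh_sym hQh_idem v
  have hT_posr : ∀ v : Fin n → ℝ, v ≠ 0 → Qh *ᵥ v = v → 0 < v ⬝ᵥ (T *ᵥ v) := by
    intro v hv hQv
    rw [hT_dot, hQv, hXh_dot]
    have hCv : Cᵀ *ᵥ v ≠ 0 := by
      intro h0
      have hphv : ph *ᵥ v = 0 := by
        rw [hQhdef] at hQv
        rw [sub_mulVec, one_mulVec] at hQv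
        exact sub_eq_self.mp hQv
      have hDtv : Dᵀ *ᵥ v = 0 := by
        have h1 : D *ᵥ (Ac⁻¹ *ᵥ (Dᵀ *ᵥ v)) = 0 := by
          rw [mulVec_mulVec, mulVec_mulVec, ← hphdef, hphv]
        have h2 : P *ᵥ (Ac⁻¹ *ᵥ (Dᵀ *ᵥ v)) = 0 := by
          apply hBinj
          rw [mulVec_mulVec, ← hDdef]
          exact h1
        have h3 : Ac⁻¹ *ᵥ (Dᵀ *ᵥ v) = 0 := hPinj _ h2
        have h4 : Dᵀ *ᵥ v = Ac *ᵥ (Ac⁻¹ *ᵥ (Dᵀ *ᵥ v)) := by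
          rw [mulVec_mulVec, Matrix.mul_nonsing_inv _ hAcdet, one_mulVec]
        rw [h4, h3, mulVec_zero]
      have hBv : B *ᵥ v = 0 := by
        apply hSPinj
        · rw [mulVec_mulVec, ← hCt]; exact h0
        · rw [mulVec_mulVec, ← hDt]; exact hDtv
      exact hv (hBinj v hBv)
    have := hMt.inv.dotProduct_mulVec_pos hCv
    rwa [star_trivial] at this
  -- spectrum transfers
  have specG : spectrum ℝ ((1 - X) * (1 - PiA)) = spectrum ℝ ((1 - Xh) * Qh) := by
    rw [← spec_conj hBdet ((1 - X) * (1 - PiA)), hGc]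
  have specXQ : spectrum ℝ (X * (1 - PiA)) = spectrum ℝ (Xh * Qh) := by
    rw [← spec_conj hBdet (X * (1 - PiA)), hXQc]
  obtain ⟨R, hRdef⟩ : ∃ R, R = Qh - T := ⟨_, rfl⟩
  have hRQG : R = Qh * ((1 - Xh) * Qh) := by
    rw [hRdef]
    calc Qh - T = Qh * Qh - Qh * Xh * Qh := by rw [hQh_idem, hTdef]
      _ = Qh * ((1 - Xh) * Qh) := by noncomm_ring
  have hGQ : (1 - Xh) * Qh = ((1 - Xh) * Qh) * Qh := by
    rw [Matrix.mul_assoc, hQh_idem]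
  have hGR : ∀ t : ℝ, t ≠ 0 →
      (t ∈ spectrum ℝ ((1 - Xh) * Qh) ↔ t ∈ spectrum ℝ R) := by
    intro t ht
    constructor
    · intro h
      rw [hRQG]
      exact spec_swap _ _ ht (by rwa [← hGQ])
    · intro h
      rw [hRQG] at h
      have h2 := spec_swap _ _ ht h
      rwa [← hGQ] at h2
  have hTQX : T = Qh * (Xh * Qh) := by rw [hTdef, Matrix.mul_assoc]
  have hXQQ : Xh * Qh = (Xh * Qh) * Qh := by rw [Matrix.mul_assoc, hQh_idem]
  have hXT : ∀ t : ℝ, t ≠ 0 → (t ∈ spectrum ℝ (Xh * Qh) ↔ t ∈ spectrum ℝ T) := by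
    intro t ht
    constructor
    · intro h
      rw [hTQX]
      exact spec_swap _ _ ht (by rwa [← hXQQ])
    · intro h
      rw [hTQX] at h
      have h2 := spec_swap _ _ ht h
      rwa [← hXQQ] at h2
  -- a kernel vector of Qh
  obtain ⟨v0, hv0ne, hQv0⟩ : ∃ v0 : Fin n → ℝ, v0 ≠ 0 ∧ Qh *ᵥ v0 = 0 := by
    refine ⟨D *ᵥ Pi.single ⟨0, hnc0⟩ 1, ?_, ?_⟩
    · intro h0
      have hw : (Pi.single (⟨0, hnc0⟩ : Fin nc) 1 : Fin nc → ℝ) = 0 := by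
        apply hPinj
        apply hBinj
        rw [mulVec_mulVec, ← hDdef]
        exact h0
      have := congrFun hw ⟨0, hnc0⟩
      simp at this
    · have hphD : ph * D = D := by
        rw [hphdef, Matrix.mul_assoc (D * Ac⁻¹) Dᵀ D, hDtD, Matrix.mul_assoc,
          Matrix.nonsing_inv_mul _ hAcdet, Matrix.mul_one]
      rw [hQhdef, sub_mulVec, one_mulVec, mulVec_mulVec, hphD, sub_self]
  have h0G : (0 : ℝ) ∈ spectrum ℝ ((1 - Xh) * Qh) := by
    rw [mem_spec]
    refine ⟨v0, hv0ne, ?_⟩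
    rw [← mulVec_mulVec, hQv0, mulVec_zero, zero_smul]
  -- positive spectrum of T
  have claim1 : ∀ t : ℝ, t ≠ 0 → t ∈ spectrum ℝ R →
      (1 - t) ∈ spectrum ℝ T ∧ 0 < 1 - t := by
    intro t ht hmem
    rw [mem_spec] at hmem
    obtain ⟨v, hv, hRv⟩ := hmem
    have hQR : Qh * R = R := by
      rw [hRdef, Matrix.mul_sub, hQh_idem, hQT]
    have hQv : Qh *ᵥ v = v := by
      have h1 : Qh *ᵥ (R *ᵥ v) = t • v := by rw [mulVec_mulVec, hQR, hRv]
      rw [hRv, mulVec_smul] at h1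
      exact smul_right_injective _ ht h1
    have hTv : T *ᵥ v = (1 - t) • v := by
      have hTR : T = Qh - R := by rw [hRdef]; abel
      rw [hTR, sub_mulVec, hQv, hRv, sub_smul, one_smul]
    refine ⟨mem_spec _ _ |>.mpr ⟨v, hv, hTv⟩, ?_⟩
    have hvv : 0 < v ⬝ᵥ v := dot_self_pos hv
    have hnn : 0 ≤ (1 - t) * (v ⬝ᵥ v) := by
      have := hT_psd v
      rwa [hTv, dotProduct_smul, smul_eq_mul] at this
    have hne : 1 - t ≠ 0 := by
      intro h0
      have := hT_posr v hv hQv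
      rw [hTv, h0, zero_smul, dotProduct_zero] at this
      exact lt_irrefl _ this
    rcases hne.lt_or_gt with h | h
    · exact absurd hnn (not_le.mpr (mul_neg_of_neg_of_pos (by linarith) hvv))
    · exact h
  have claim2 : ∀ s : ℝ, s ∈ spectrum ℝ T → 0 < s → 1 - s ≠ 0 →
      (1 - s) ∈ spectrum ℝ R := by
    intro s hmem hs hne
    rw [mem_spec] at hmem
    obtain ⟨v, hv, hTv⟩ := hmem
    have hQv : Qh *ᵥ v = v := by
      have h1 : Qh *ᵥ (T *ᵥ v) = s • v := by rw [mulVec_mulVec, hQT, hTv]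
      rw [hTv, mulVec_smul] at h1
      exact smul_right_injective _ hs.ne' h1
    have hRv : R *ᵥ v = (1 - s) • v := by
      rw [hRdef, sub_mulVec, hQv, hTv, sub_smul, one_smul]
    exact mem_spec _ _ |>.mpr ⟨v, hv, hRv⟩
  have claim3 : ∀ s : ℝ, s ∈ spectrum ℝ T → 0 < s → s ≤ 1 := by
    intro s hmem hs
    rw [mem_spec] at hmem
    obtain ⟨v, hv, hTv⟩ := hmem
    have hvv : 0 < v ⬝ᵥ v := dot_self_pos hv
    have h1 : s * (v ⬝ᵥ v) ≤ v ⬝ᵥ v := by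
      have := hT_le v
      rwa [hTv, dotProduct_smul, smul_eq_mul] at this
    exact (mul_le_iff_le_one_left hvv).mp h1
  have claim4 : ∃ s : ℝ, s ∈ spectrum ℝ T ∧ 0 < s := by
    obtain ⟨u, hu⟩ : ∃ u : Fin n → ℝ, Qh *ᵥ u ≠ 0 := by
      by_contra hcon
      push_neg at hcon
      have hQh0 : Qh = 1 - ph := hQhdef
      have hph1 : ph = 1 := by
        have hz : Qh = 0 := by
          ext i j
          have := congrFun (hcon (Pi.single j 1)) i
          simpa [Matrix.mulVec_single] using this
        rw [hQhdef] at hz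
        have := sub_eq_zero.mp hz
        exact this.symm
      have hrank : (1 : Matrix (Fin n) (Fin n) ℝ).rank ≤ nc := by
        rw [← hph1, hphdef, Matrix.mul_assoc]
        exact le_trans (Matrix.rank_mul_le_left _ _)
          (by simpa using D.rank_le_card_width)
      rw [Matrix.rank_one, Fintype.card_fin] at hrank
      omega
    have hQv1 : Qh *ᵥ (Qh *ᵥ u) = Qh *ᵥ u := by rw [mulVec_mulVec, hQh_idem]
    have hpos := hT_posr (Qh *ᵥ u) hu hQv1
    have hTH : T.IsHermitian := by
      rw [Matrix.IsHermitian, Matrix.conjTranspose_eq_transpose_of_trivial]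
      exact hT_sym
    have hTpsd : T.PosSemidef :=
      Matrix.PosSemidef.of_dotProduct_mulVec_nonneg hTH fun x => by rw [star_trivial]; exact hT_psd x
    by_contra hemp
    push_neg at hemp
    have hev0 : ∀ i, hTH.eigenvalues i = 0 := fun i =>
      le_antisymm (hemp _ (hTH.eigenvalues_mem_spectrum_real i))
        (hTpsd.eigenvalues_nonneg i)
    have hT0 : T = 0 := by
      have hsp := hTH.spectral_theorem
      have hd : Matrix.diagonal (RCLike.ofReal ∘ hTH.eigenvalues)
          = (0 : Matrix (Fin n) (Fin n) ℝ) := by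
        ext i j
        by_cases hij : i = j <;> simp [Matrix.diagonal_apply, hij, hev0]
      rw [hd, map_zero] at hsp
      exact hsp
    rw [hT0] at hpos
    simp at hpos
  -- set identifications
  have hspecGset : spectrum ℝ ((1 - X) * (1 - PiA))
      = insert (0 : ℝ) ((fun s => 1 - s) '' {s : ℝ | s ∈ spectrum ℝ T ∧ 0 < s}) := by
    rw [specG]
    ext t
    constructor
    · intro h
      by_cases ht : t = 0
      · rw [ht]; exact Set.mem_insert _ _
      · obtain ⟨hmem, hpos⟩ := claim1 t ht ((hGR t ht).mp h)
        exact Set.mem_insert_iff.mpr (Or.inr ⟨1 - t, ⟨hmem, hpos⟩, by ring⟩)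
    · intro h
      rcases Set.mem_insert_iff.mp h with h0 | ⟨s, ⟨hsmem, hspos⟩, hts⟩
      · rw [h0]; exact h0G
      · have hts' : 1 - s = t := hts
        rw [← hts']
        by_cases hts0 : (1 : ℝ) - s = 0
        · rw [hts0]; exact h0G
        · exact (hGR _ hts0).mpr (claim2 s hsmem hspos hts0)
  have hSposset : {t : ℝ | t ∈ spectrum ℝ (X * (1 - PiA)) ∧ 0 < t}
      = {s : ℝ | s ∈ spectrum ℝ T ∧ 0 < s} := by
    ext t
    simp only [Set.mem_setOf_eq]
    constructor
    · rintro ⟨hmem, hpos⟩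
      rw [specXQ] at hmem
      exact ⟨(hXT t hpos.ne').mp hmem, hpos⟩
    · rintro ⟨hmem, hpos⟩
      refine ⟨?_, hpos⟩
      rw [specXQ]
      exact (hXT t hpos.ne').mpr hmem
  -- final computation over ℝ
  have hgoal1 : (1 - smoothX A S Ms) * (1 - proj A P) = (1 - X) * (1 - PiA) := by
    rw [hXdef, hPidef]
  have hgoal2 : smoothX A S Ms * (1 - proj A P) = X * (1 - PiA) := by
    rw [hXdef, hPidef]
  rw [lamMax, sigmaTL, lamMinPos, hgoal1, hgoal2, hspecGset, hSposset]
  set Spos := {s : ℝ | s ∈ spectrum ℝ T ∧ 0 < s} with hSposdef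
  have hne : Spos.Nonempty := claim4
  have hbb : BddBelow Spos := ⟨0, fun s hs => hs.2.le⟩
  have hba : BddAbove ((fun s => 1 - s) '' Spos) := by
    refine ⟨1, ?_⟩
    rintro x ⟨s, hs, rfl⟩
    show (1 : ℝ) - s ≤ 1
    have := hs.2
    linarith
  have himgne : ((fun s => 1 - s) '' Spos).Nonempty := hne.image _
  have hσ0le1 : sInf Spos ≤ 1 := by
    obtain ⟨s0, hs0⟩ := hne
    exact le_trans (csInf_le hbb hs0) (claim3 s0 hs0.1 hs0.2)
  have himg : sSup ((fun s => 1 - s) '' Spos) = 1 - sInf Spos := by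
    apply le_antisymm
    · apply csSup_le himgne
      rintro x ⟨s, hs, rfl⟩
      show (1 : ℝ) - s ≤ 1 - sInf Spos
      have := csInf_le hbb hs
      linarith
    · have h1 : 1 - sSup ((fun s => 1 - s) '' Spos) ≤ sInf Spos := by
        apply le_csInf hne
        intro s hs
        have h2 : (1 : ℝ) - s ≤ sSup ((fun s => 1 - s) '' Spos) :=
          le_csSup hba (Set.mem_image_of_mem _ hs)
        linarith
      linarith
  rw [csSup_insert hba himgne, himg, sup_eq_right.mpr (by linarith)]
end

section
/- If rank(S^T A P) = n_c, then 1 − λ_min^+( S M̃_s^{-1} S^T A Π_A ) ≥ σ_TL, where σ_TL = λ_min^+( S M̃_s^{-1} S^T A (I − Π_A) ). -/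
open Matrix

section AuxTLHB

open Module

lemma mem_spectrum_iff' {m : ℕ} {M : Matrix (Fin m) (Fin m) ℝ} {c : ℝ} :
    c ∈ spectrum ℝ M ↔ ∃ v : Fin m → ℝ, v ≠ 0 ∧ M.mulVec v = c • v := by
  rw [← AlgEquiv.spectrum_eq (Matrix.toLinAlgEquiv' (R := ℝ) (n := Fin m)) M,
    ← Module.End.hasEigenvalue_iff_mem_spectrum]
  constructor
  · intro h
    obtain ⟨v, hv⟩ := h.exists_hasEigenvector
    refine ⟨v, hv.2, ?_⟩
    have := hv.apply_eq_smul
    simpa [Matrix.toLinAlgEquiv'_apply] using this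
  · rintro ⟨v, hv0, hv⟩
    apply Module.End.hasEigenvalue_of_hasEigenvector (x := v)
    refine ⟨Module.End.mem_eigenspace_iff.mpr ?_, hv0⟩
    simpa [Matrix.toLinAlgEquiv'_apply] using hv

lemma spec_swap_aux {a b : ℕ} (M : Matrix (Fin a) (Fin b) ℝ) (N : Matrix (Fin b) (Fin a) ℝ)
    {c : ℝ} (hc : c ≠ 0) (h : c ∈ spectrum ℝ (M * N)) : c ∈ spectrum ℝ (N * M) := by
  rw [mem_spectrum_iff'] at h ⊢
  obtain ⟨v, hv0, hv⟩ := h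
  refine ⟨N.mulVec v, ?_, ?_⟩
  · intro h0
    apply hv0
    have h1 : (M * N).mulVec v = 0 := by
      rw [← Matrix.mulVec_mulVec, h0, Matrix.mulVec_zero]
    rw [h1, eq_comm, smul_eq_zero_iff_right hc] at hv
    exact hv
  · have h2 : M *ᵥ N *ᵥ v = c • v := by rw [Matrix.mulVec_mulVec]; exact hv
    rw [← Matrix.mulVec_mulVec, h2, Matrix.mulVec_smul]

lemma spec_swap_s17 {a b : ℕ} (M : Matrix (Fin a) (Fin b) ℝ) (N : Matrix (Fin b) (Fin a) ℝ)
    {c : ℝ} (hc : c ≠ 0) : c ∈ spectrum ℝ (M * N) ↔ c ∈ spectrum ℝ (N * M) :=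
  ⟨spec_swap_aux M N hc, spec_swap_aux N M hc⟩

end AuxTLHB

section AuxTLHB2

open Module

lemma lamMinPos_congr {a b : ℕ} {M : Matrix (Fin a) (Fin a) ℝ} {N : Matrix (Fin b) (Fin b) ℝ}
    (h : ∀ c : ℝ, c ≠ 0 → (c ∈ spectrum ℝ M ↔ c ∈ spectrum ℝ N)) :
    lamMinPos M = lamMinPos N := by
  unfold lamMinPos
  congr 1
  ext t
  simp only [Set.mem_setOf_eq]
  constructor
  · rintro ⟨h1, h2⟩; exact ⟨(h t h2.ne').mp h1, h2⟩
  · rintro ⟨h1, h2⟩; exact ⟨(h t h2.ne').mpr h1, h2⟩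

lemma psd_cube_sub {m : ℕ} {M : Matrix (Fin m) (Fin m) ℝ} (hM : M.PosSemidef) :
    (M * M * M - lamMinPos M • (M * M)).PosSemidef := by
  classical
  set μ := lamMinPos M with hμ
  have hH := hM.isHermitian
  set U : Matrix (Fin m) (Fin m) ℝ := (hH.eigenvectorUnitary : Matrix (Fin m) (Fin m) ℝ) with hUdef
  have hU : star U * U = 1 := by
    simpa [hUdef] using Matrix.mem_unitaryGroup_iff'.mp (hH.eigenvectorUnitary).2
  set d : Fin m → ℝ := hH.eigenvalues with hd
  have hst : M = U * diagonal d * star U := by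
    have := hH.spectral_theorem
    simpa [hUdef, hd] using this
  have key : ∀ e f : Fin m → ℝ,
      (U * diagonal e * star U) * (U * diagonal f * star U)
        = U * (diagonal e * diagonal f) * star U := by
    intro e f
    calc (U * diagonal e * star U) * (U * diagonal f * star U)
        = U * diagonal e * (star U * U) * (diagonal f * star U) := by
          simp only [Matrix.mul_assoc]
      _ = U * (diagonal e * diagonal f) * star U := by
          rw [hU, Matrix.mul_one]; simp only [Matrix.mul_assoc]
  have h2 : M * M = U * diagonal (fun i => d i * d i) * star U := by
    rw [hst, key, diagonal_mul_diagonal]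
  have h3 : M * M * M = U * diagonal (fun i => d i * d i * d i) * star U := by
    rw [h2, hst, key, diagonal_mul_diagonal]
  have hds : μ • (diagonal fun i => d i * d i) = diagonal fun i => μ * (d i * d i) := by
    ext i j
    by_cases hij : i = j <;> simp [Matrix.diagonal, hij]
  have h4 : μ • (M * M) = U * diagonal (fun i => μ * (d i * d i)) * star U := by
    rw [h2, ← Matrix.smul_mul, ← Matrix.mul_smul, hds]
  have h5 : M * M * M - μ • (M * M)
      = U * diagonal (fun i => d i * d i * d i - μ * (d i * d i)) * star U := by
    rw [h3, h4, ← Matrix.sub_mul, ← Matrix.mul_sub, diagonal_sub]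
  rw [h5]
  have : (diagonal (fun i => d i * d i * d i - μ * (d i * d i))).PosSemidef := by
    rw [posSemidef_diagonal_iff]
    intro i
    rcases eq_or_lt_of_le (hM.eigenvalues_nonneg i) with h0 | h0
    · have hdi : d i = 0 := by rw [hd]; exact h0.symm
      rw [hdi]; ring_nf; exact le_refl 0
    · have hmem : d i ∈ {t : ℝ | t ∈ spectrum ℝ M ∧ 0 < t} :=
        ⟨hH.eigenvalues_mem_spectrum_real i, h0⟩
      have hle : μ ≤ d i := csInf_le ⟨0, fun t ht => ht.2.le⟩ hmem
      nlinarith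
  simpa [Matrix.star_eq_conjTranspose] using this.mul_mul_conjTranspose_same U

lemma rayleigh {m : ℕ} {M : Matrix (Fin m) (Fin m) ℝ} (hM : M.PosSemidef)
    {x : Fin m → ℝ} (hx : ∃ y, M.mulVec y = x) :
    lamMinPos M * (x ⬝ᵥ x) ≤ x ⬝ᵥ M.mulVec x := by
  obtain ⟨y, rfl⟩ := hx
  have hT : Mᵀ = M := by
    have := hM.isHermitian
    rwa [Matrix.IsHermitian, conjTranspose_eq_transpose_of_trivial] at this
  have hsym : ∀ z w : Fin m → ℝ, z ⬝ᵥ M *ᵥ w = (M *ᵥ z) ⬝ᵥ w := by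
    intro z w
    rw [Matrix.dotProduct_mulVec]
    congr 1
    rw [← Matrix.vecMul_transpose, hT]
  have h := (psd_cube_sub hM).dotProduct_mulVec_nonneg y
  have hq : y ⬝ᵥ (M * M * M - lamMinPos M • (M * M)) *ᵥ y
      = (M *ᵥ y) ⬝ᵥ M *ᵥ (M *ᵥ y) - lamMinPos M * ((M *ᵥ y) ⬝ᵥ (M *ᵥ y)) := by
    rw [Matrix.sub_mulVec, dotProduct_sub, Matrix.smul_mulVec,
      dotProduct_smul]
    congr 1
    · rw [← Matrix.mulVec_mulVec, ← Matrix.mulVec_mulVec, hsym]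
    · rw [smul_eq_mul]
      congr 1
      rw [← Matrix.mulVec_mulVec, hsym]
  simp only [star_trivial] at h
  rw [hq] at h
  linarith

lemma posDef_conj {a b : ℕ} {H : Matrix (Fin a) (Fin a) ℝ} (hH : H.PosDef)
    (N : Matrix (Fin a) (Fin b) ℝ) (hN : ∀ x, N.mulVec x = 0 → x = 0) :
    (Nᵀ * H * N).PosDef := by
  refine Matrix.PosDef.of_dotProduct_mulVec_pos ?_ ?_
  · have h := Matrix.isHermitian_conjTranspose_mul_mul N hH.isHermitian
    rwa [conjTranspose_eq_transpose_of_trivial] at h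
  · intro x hx
    have hNx : N.mulVec x ≠ 0 := fun h => hx (hN x h)
    have hq : x ⬝ᵥ (Nᵀ * H * N).mulVec x = (N.mulVec x) ⬝ᵥ H.mulVec (N.mulVec x) := by
      simp only [← Matrix.mulVec_mulVec]
      rw [Matrix.dotProduct_mulVec, Matrix.vecMul_transpose]
    have := hH.dotProduct_mulVec_pos hNx
    simpa [hq] using this

lemma psd_conj_s17 {a b : ℕ} {H : Matrix (Fin a) (Fin a) ℝ} (hH : H.PosSemidef)
    (N : Matrix (Fin a) (Fin b) ℝ) : (Nᵀ * H * N).PosSemidef := by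
  have := hH.conjTranspose_mul_mul_same N
  rwa [conjTranspose_eq_transpose_of_trivial] at this

lemma rank_conj_posDef {a b : ℕ} {H : Matrix (Fin a) (Fin a) ℝ} (hH : H.PosDef)
    (N : Matrix (Fin a) (Fin b) ℝ) : (Nᵀ * H * N).rank = N.rank := by
  have hker : LinearMap.ker (Nᵀ * H * N).mulVecLin = LinearMap.ker N.mulVecLin := by
    ext x
    simp only [LinearMap.mem_ker, mulVecLin_apply]
    constructor
    · intro hx
      by_contra h0
      have hq : x ⬝ᵥ (Nᵀ * H * N).mulVec x = (N.mulVec x) ⬝ᵥ H.mulVec (N.mulVec x) := by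
        simp only [← Matrix.mulVec_mulVec]
        rw [Matrix.dotProduct_mulVec, Matrix.vecMul_transpose]
      have hpos : 0 < (N.mulVec x) ⬝ᵥ H.mulVec (N.mulVec x) := by
        have := hH.dotProduct_mulVec_pos h0
        simpa using this
      have hz : x ⬝ᵥ (Nᵀ * H * N).mulVec x = 0 := by rw [hx, dotProduct_zero]
      rw [hq] at hz
      rw [hz] at hpos
      exact lt_irrefl 0 hpos
    · intro hx
      simp only [← Matrix.mulVec_mulVec]
      rw [hx, Matrix.mulVec_zero, Matrix.mulVec_zero]
  have h1 := LinearMap.finrank_range_add_finrank_ker (Nᵀ * H * N).mulVecLin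
  have h2 := LinearMap.finrank_range_add_finrank_ker N.mulVecLin
  rw [hker] at h1
  unfold Matrix.rank
  omega

lemma exists_ne_zero_mem_both {k : ℕ} (U V : Submodule ℝ (Fin k → ℝ))
    (h : k < finrank ℝ U + finrank ℝ V) : ∃ x : Fin k → ℝ, x ≠ 0 ∧ x ∈ U ∧ x ∈ V := by
  have hsup : finrank ℝ ↥(U ⊔ V) ≤ k := by
    have h1 := Submodule.finrank_le (U ⊔ V)
    simpa using h1
  have heq := Submodule.finrank_sup_add_finrank_inf_eq U V
  have hpos : 0 < finrank ℝ ↥(U ⊓ V) := by omega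
  rw [finrank_pos_iff_exists_ne_zero] at hpos
  obtain ⟨⟨x, hx⟩, hx0⟩ := hpos
  refine ⟨x, ?_, (Submodule.mem_inf.mp hx).1, (Submodule.mem_inf.mp hx).2⟩
  intro h0
  apply hx0
  ext
  simp [h0]

lemma rank_add_le_matrix {a : Type*} {b : Type*} [Fintype a] [Fintype b] (M N : Matrix a b ℝ) :
    (M + N).rank ≤ M.rank + N.rank := by
  have hr : LinearMap.range (M + N).mulVecLin ≤
      LinearMap.range M.mulVecLin ⊔ LinearMap.range N.mulVecLin := by
    rintro z ⟨y, rfl⟩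
    have : (M + N).mulVecLin y = M.mulVecLin y + N.mulVecLin y := by
      simp [mulVecLin_add]
    rw [this]
    exact Submodule.add_mem_sup ⟨y, rfl⟩ ⟨y, rfl⟩
  calc (M + N).rank ≤ finrank ℝ ↥(LinearMap.range M.mulVecLin ⊔ LinearMap.range N.mulVecLin) :=
        Submodule.finrank_mono hr
    _ ≤ M.rank + N.rank := Submodule.finrank_add_le_finrank_add_finrank _ _

lemma inj_of_rank_s17 {a b : ℕ} {N : Matrix (Fin a) (Fin b) ℝ} (h : N.rank = b) :
    ∀ x, N.mulVec x = 0 → x = 0 := by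
  intro x hx
  have h2 := LinearMap.finrank_range_add_finrank_ker N.mulVecLin
  rw [show finrank ℝ (Fin b → ℝ) = b by simp] at h2
  have hker : finrank ℝ ↥(LinearMap.ker N.mulVecLin) = 0 := by
    unfold Matrix.rank at h
    omega
  rw [Submodule.finrank_eq_zero] at hker
  have : x ∈ LinearMap.ker N.mulVecLin := by simpa [LinearMap.mem_ker] using hx
  rw [hker] at this
  simpa using this

end AuxTLHB2

set_option maxHeartbeats 1000000 in
/-- If `rank(Sᵀ A P) = n_c`, then `1 - λ_min⁺(S M̃_s⁻¹ Sᵀ A Π_A) ≥ σ_TL`. -/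
theorem one_sub_lamMinPos_ge_sigma {n ns nc : ℕ}
    (A : Matrix (Fin n) (Fin n) ℝ) (hA : A.PosDef)
    (S : Matrix (Fin n) (Fin ns) ℝ) (hS : S.rank = ns)
    (P : Matrix (Fin n) (Fin nc) ℝ) (hP : P.rank = nc)
    (hns : ns < n) (hnc : nc < n) (hsum : n ≤ ns + nc)
    (hSP : (fromCols S P).rank = n)
    (Ms : Matrix (Fin ns) (Fin ns) ℝ) (hMs : IsUnit Ms.det)
    (hMsA : (Ms + Msᵀ - Sᵀ * A * S).PosDef)
    (hr : (Sᵀ * A * P).rank = nc) :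
    sigmaTL A S P Ms ≤ 1 - lamMinPos (smoothX A S Ms * proj A P) := by
  classical
  have hAt : Aᵀ = A := by
    have := hA.isHermitian
    rwa [Matrix.IsHermitian, conjTranspose_eq_transpose_of_trivial] at this
  have hSinj := inj_of_rank_s17 hS
  have hPinj := inj_of_rank_s17 hP
  set As : Matrix (Fin ns) (Fin ns) ℝ := Sᵀ * A * S with hAs
  set Ac : Matrix (Fin nc) (Fin nc) ℝ := Pᵀ * A * P with hAcdef
  have hAsPD : As.PosDef := posDef_conj hA S hSinj
  have hAcPD : Ac.PosDef := posDef_conj hA P hPinj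
  have hAcdet : IsUnit Ac.det := hAcPD.det_pos.ne'.isUnit
  have hAci : Ac⁻¹ * Ac = 1 := nonsing_inv_mul _ hAcdet
  have hAci' : Ac * Ac⁻¹ = 1 := mul_nonsing_inv _ hAcdet
  set W : Matrix (Fin ns) (Fin ns) ℝ := Ms + Msᵀ - As with hWdef
  have hWPD : W.PosDef := hMsA
  have hWdet : IsUnit W.det := hWPD.det_pos.ne'.isUnit
  have hWi : W⁻¹ * W = 1 := nonsing_inv_mul _ hWdet
  have hWi' : W * W⁻¹ = 1 := mul_nonsing_inv _ hWdet
  have hWinvPD : (W⁻¹).PosDef := hWPD.inv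
  have hMsInj : ∀ x, Ms.mulVec x = 0 → x = 0 := by
    intro x hx
    have hinj : Function.Injective Ms.mulVec :=
      Matrix.mulVec_injective_iff_isUnit.mpr ((Matrix.isUnit_iff_isUnit_det Ms).mpr hMs)
    have h0 : Ms.mulVec x = Ms.mulVec 0 := by rw [hx, Matrix.mulVec_zero]
    exact hinj h0
  set Mt : Matrix (Fin ns) (Fin ns) ℝ := tMs Ms As with hMtdef
  have hMtexp : Mt = Msᵀ * W⁻¹ * Ms := rfl
  have hMtPD : Mt.PosDef := by rw [hMtexp]; exact posDef_conj hWinvPD Ms hMsInj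
  have hAsT : Asᵀ = As := by
    rw [hAs]; simp [Matrix.transpose_mul, Matrix.mul_assoc, hAt]
  have hWT : Wᵀ = W := by
    rw [hWdef, Matrix.transpose_sub, Matrix.transpose_add, Matrix.transpose_transpose, hAsT]
    abel
  have hMtAs : (Mt - As).PosSemidef := by
    have expand : (Ms - W)ᵀ * W⁻¹ * (Ms - W)
        = Msᵀ * W⁻¹ * Ms - Msᵀ * W⁻¹ * W - (Wᵀ * W⁻¹ * Ms - Wᵀ * W⁻¹ * W) := by
      rw [Matrix.transpose_sub]
      noncomm_ring
    have e1 : Msᵀ * W⁻¹ * W = Msᵀ := by rw [Matrix.mul_assoc, hWi, Matrix.mul_one]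
    have e2 : Wᵀ * W⁻¹ * Ms = Ms := by rw [hWT, hWi', Matrix.one_mul]
    have e3 : Wᵀ * W⁻¹ * W = W := by rw [hWT, Matrix.mul_assoc, hWi, Matrix.mul_one]
    have hid : Mt - As = (Ms - W)ᵀ * W⁻¹ * (Ms - W) := by
      rw [expand, e1, e2, e3, hMtexp, hWdef]
      abel
    rw [hid]
    exact psd_conj_s17 hWinvPD.posSemidef (Ms - W)
  -- projection facts
  set Pi : Matrix (Fin n) (Fin n) ℝ := proj A P with hPidef
  have hPiexp2 : Pi = P * (Ac⁻¹ * (Pᵀ * A)) := by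
    rw [hPidef]; unfold proj; rw [← hAcdef]; simp only [Matrix.mul_assoc]
  have hPiP : Pi * P = P := by
    rw [hPiexp2]
    calc P * (Ac⁻¹ * (Pᵀ * A)) * P = P * Ac⁻¹ * (Pᵀ * A * P) := by simp only [Matrix.mul_assoc]
      _ = P * Ac⁻¹ * Ac := by rw [← hAcdef]
      _ = P := by rw [Matrix.mul_assoc, hAci, Matrix.mul_one]
  have hPiPi : Pi * Pi = Pi := by
    calc Pi * Pi = Pi * (P * (Ac⁻¹ * (Pᵀ * A))) := by rw [← hPiexp2]
      _ = (Pi * P) * (Ac⁻¹ * (Pᵀ * A)) := by rw [Matrix.mul_assoc]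
      _ = P * (Ac⁻¹ * (Pᵀ * A)) := by rw [hPiP]
      _ = Pi := hPiexp2.symm
  have hAcT : Acᵀ = Ac := by
    rw [hAcdef]; simp [Matrix.transpose_mul, Matrix.mul_assoc, hAt]
  have hAciT : (Ac⁻¹)ᵀ = Ac⁻¹ := by rw [Matrix.transpose_nonsing_inv, hAcT]
  have hPiTA : Piᵀ * A = A * Pi := by
    rw [hPiexp2]
    simp [Matrix.transpose_mul, Matrix.transpose_transpose, Matrix.mul_assoc, hAt, hAciT]
  -- G1
  set K : Matrix (Fin nc) (Fin ns) ℝ := Pᵀ * A * S with hKdef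
  have hKT : Kᵀ = Sᵀ * A * P := by
    rw [hKdef]; simp [Matrix.transpose_mul, Matrix.transpose_transpose, Matrix.mul_assoc, hAt]
  set G1 : Matrix (Fin ns) (Fin ns) ℝ := Sᵀ * A * Pi * S with hG1def
  have hG1K : G1 = Kᵀ * Ac⁻¹ * K := by
    rw [hG1def, hKT, hKdef, hPiexp2]
    simp only [Matrix.mul_assoc]
  have hG1psd : G1.PosSemidef := by
    rw [hG1K]; exact psd_conj_s17 hAcPD.inv.posSemidef K
  have hG1rank : G1.rank = nc := by
    rw [hG1K, rank_conj_posDef hAcPD.inv K]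
    have hKtr : K = (Sᵀ * A * P)ᵀ := by rw [← hKT, Matrix.transpose_transpose]
    rw [hKtr, Matrix.rank_transpose, hr]
  -- G2
  set L : Matrix (Fin n) (Fin ns) ℝ := (1 - Pi) * S with hLdef
  have hAP1 : (1 - Pi)ᵀ * A * (1 - Pi) = A * (1 - Pi) := by
    have h1 : (1 - Pi)ᵀ * A = A - A * Pi := by
      rw [Matrix.transpose_sub, Matrix.transpose_one, Matrix.sub_mul, Matrix.one_mul, hPiTA]
    rw [h1]
    have expand2 : (A - A * Pi) * (1 - Pi) = A * (1 - Pi) - (A * Pi - A * (Pi * Pi)) := by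
      noncomm_ring
    rw [expand2, hPiPi]
    abel
  set G2 : Matrix (Fin ns) (Fin ns) ℝ := Sᵀ * A * (1 - Pi) * S with hG2def
  have hG2L : G2 = Lᵀ * A * L := by
    have h1 : Lᵀ * A * L = Sᵀ * ((1 - Pi)ᵀ * A * (1 - Pi)) * S := by
      rw [hLdef, Matrix.transpose_mul]; simp only [Matrix.mul_assoc]
    rw [h1, hAP1, hG2def]; simp only [Matrix.mul_assoc]
  have hG2psd : G2.PosSemidef := by
    rw [hG2L]; exact psd_conj_s17 hA.posSemidef L
  have hG2rank : G2.rank = L.rank := by rw [hG2L]; exact rank_conj_posDef hA L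
  -- rank bound for L
  have hLrank : n ≤ nc + L.rank := by
    set F : Matrix (Fin n) (Fin ns ⊕ Fin nc) ℝ := fromCols S P with hFdef
    have hF1 : Pi * F + (1 - Pi) * F = F := by
      rw [← Matrix.add_mul, add_sub_cancel, Matrix.one_mul]
    have hPiF : (Pi * F).rank ≤ nc := by
      have he : Pi * F = P * (Ac⁻¹ * (Pᵀ * (A * F))) := by
        rw [hPiexp2]; simp only [Matrix.mul_assoc]
      rw [he]
      calc (P * (Ac⁻¹ * (Pᵀ * (A * F)))).rank ≤ P.rank := Matrix.rank_mul_le_left _ _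
        _ = nc := hP
    have h1PiF : ((1 - Pi) * F).rank ≤ L.rank := by
      have he : (1 - Pi) * F = fromCols L (0 : Matrix (Fin n) (Fin nc) ℝ) := by
        rw [hFdef, Matrix.mul_fromCols, ← hLdef]
        congr 1
        rw [Matrix.sub_mul, Matrix.one_mul, hPiP, sub_self]
      have he2 : fromCols L (0 : Matrix (Fin n) (Fin nc) ℝ)
          = L * fromCols (1 : Matrix (Fin ns) (Fin ns) ℝ) (0 : Matrix (Fin ns) (Fin nc) ℝ) := by
        rw [Matrix.mul_fromCols, Matrix.mul_one, Matrix.mul_zero]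
      rw [he, he2]
      exact Matrix.rank_mul_le_left _ _
    have hadd := rank_add_le_matrix (Pi * F) ((1 - Pi) * F)
    rw [hF1, hSP] at hadd
    omega
  -- square root
  have hMtPSD : Mt.PosSemidef := hMtPD.posSemidef
  open scoped MatrixOrder in set R : Matrix (Fin ns) (Fin ns) ℝ := CFC.sqrt Mt with hRdef
  have hRR : R * R = Mt := by open scoped MatrixOrder in exact CFC.sqrt_mul_sqrt_self Mt hMtPSD.nonneg
  have hRsym : Rᵀ = R := by
    have := (open scoped MatrixOrder in Matrix.nonneg_iff_posSemidef.mp (CFC.sqrt_nonneg Mt)).isHermitian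
    rwa [Matrix.IsHermitian, conjTranspose_eq_transpose_of_trivial] at this
  have hRdet : IsUnit R.det := by
    have hdet : R.det * R.det = Mt.det := by rw [← Matrix.det_mul, hRR]
    have hMt0 : Mt.det ≠ 0 := hMtPD.det_pos.ne'
    have hR0 : R.det ≠ 0 := by
      intro h
      rw [h, mul_zero] at hdet
      exact hMt0 hdet.symm
    exact hR0.isUnit
  have hRi : R⁻¹ * R = 1 := nonsing_inv_mul _ hRdet
  have hRi' : R * R⁻¹ = 1 := mul_nonsing_inv _ hRdet
  have hRiT : (R⁻¹)ᵀ = R⁻¹ := by rw [Matrix.transpose_nonsing_inv, hRsym]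
  have hMtinv : Mt⁻¹ = R⁻¹ * R⁻¹ := by rw [← hRR, Matrix.mul_inv_rev]
  set C : Matrix (Fin ns) (Fin ns) ℝ := R⁻¹ * G1 * R⁻¹ with hCdef
  set D : Matrix (Fin ns) (Fin ns) ℝ := R⁻¹ * G2 * R⁻¹ with hDdef
  have hCpsd : C.PosSemidef := by
    have h := psd_conj_s17 hG1psd R⁻¹
    rwa [hRiT] at h
  have hDpsd : D.PosSemidef := by
    have h := psd_conj_s17 hG2psd R⁻¹
    rwa [hRiT] at h
  have hfactC : G1 = R * (C * R) := by
    rw [hCdef]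
    calc G1 = 1 * G1 * 1 := by rw [Matrix.one_mul, Matrix.mul_one]
      _ = (R * R⁻¹) * G1 * (R⁻¹ * R) := by rw [hRi, hRi']
      _ = R * ((R⁻¹ * G1 * R⁻¹) * R) := by simp only [Matrix.mul_assoc]
  have hfactD : G2 = R * (D * R) := by
    rw [hDdef]
    calc G2 = 1 * G2 * 1 := by rw [Matrix.one_mul, Matrix.mul_one]
      _ = (R * R⁻¹) * G2 * (R⁻¹ * R) := by rw [hRi, hRi']
      _ = R * ((R⁻¹ * G2 * R⁻¹) * R) := by simp only [Matrix.mul_assoc]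
  have hCrank : nc ≤ C.rank := by
    calc nc = G1.rank := hG1rank.symm
      _ ≤ (C * R).rank := by rw [hfactC]; exact Matrix.rank_mul_le_right _ _
      _ ≤ C.rank := Matrix.rank_mul_le_left _ _
  have hDrank : n ≤ nc + D.rank := by
    have hLD : L.rank ≤ D.rank := by
      calc L.rank = G2.rank := hG2rank.symm
        _ ≤ (D * R).rank := by rw [hfactD]; exact Matrix.rank_mul_le_right _ _
        _ ≤ D.rank := Matrix.rank_mul_le_left _ _
    omega
  -- C + D and 1 - (C+D)
  have hG12 : G1 + G2 = As := by
    rw [hG1def, hG2def, hAs, Matrix.mul_sub, Matrix.mul_one, Matrix.sub_mul]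
    abel
  have hCD : C + D = R⁻¹ * As * R⁻¹ := by
    rw [hCdef, hDdef, ← hG12, Matrix.mul_add, Matrix.add_mul]
  have h1 : R⁻¹ * Mt * R⁻¹ = 1 := by
    rw [← hRR]
    calc R⁻¹ * (R * R) * R⁻¹ = (R⁻¹ * R) * (R * R⁻¹) := by simp only [Matrix.mul_assoc]
      _ = 1 := by rw [hRi, hRi', Matrix.one_mul]
  have hIC : (1 - (C + D)).PosSemidef := by
    have h2 : 1 - (C + D) = R⁻¹ * (Mt - As) * R⁻¹ := by
      rw [hCD, Matrix.mul_sub, Matrix.sub_mul, h1]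
    rw [h2]
    have h := psd_conj_s17 hMtAs R⁻¹
    rwa [hRiT] at h
  -- spectra identifications
  have hXPi : smoothX A S Ms * Pi = S * (Mt⁻¹ * (Sᵀ * (A * Pi))) := by
    unfold smoothX
    rw [← hAs, ← hMtdef]
    simp only [Matrix.mul_assoc]
  have hX1Pi : smoothX A S Ms * (1 - Pi) = S * (Mt⁻¹ * (Sᵀ * (A * (1 - Pi)))) := by
    unfold smoothX
    rw [← hAs, ← hMtdef]
    simp only [Matrix.mul_assoc]
  have e2C : (Mt⁻¹ * (Sᵀ * (A * Pi))) * S = R⁻¹ * (R⁻¹ * G1) := by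
    rw [hMtinv, hG1def]
    simp only [Matrix.mul_assoc]
  have e2D : (Mt⁻¹ * (Sᵀ * (A * (1 - Pi)))) * S = R⁻¹ * (R⁻¹ * G2) := by
    rw [hMtinv, hG2def]
    simp only [Matrix.mul_assoc]
  have hμeq : lamMinPos (smoothX A S Ms * Pi) = lamMinPos C := by
    have s1 : lamMinPos (smoothX A S Ms * Pi)
        = lamMinPos ((Mt⁻¹ * (Sᵀ * (A * Pi))) * S) := by
      rw [hXPi]; exact lamMinPos_congr (fun c hc => spec_swap_s17 _ _ hc)
    have s2 : lamMinPos (R⁻¹ * (R⁻¹ * G1)) = lamMinPos ((R⁻¹ * G1) * R⁻¹) :=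
      lamMinPos_congr (fun c hc => spec_swap_s17 _ _ hc)
    have s3 : (R⁻¹ * G1) * R⁻¹ = C := by rw [hCdef]
    rw [s1, e2C, s2, s3]
  have hσeq : sigmaTL A S P Ms = lamMinPos D := by
    have s0 : sigmaTL A S P Ms = lamMinPos (smoothX A S Ms * (1 - Pi)) := by
      unfold sigmaTL
      rw [← hPidef]
    have s1 : lamMinPos (smoothX A S Ms * (1 - Pi))
        = lamMinPos ((Mt⁻¹ * (Sᵀ * (A * (1 - Pi)))) * S) := by
      rw [hX1Pi]; exact lamMinPos_congr (fun c hc => spec_swap_s17 _ _ hc)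
    have s2 : lamMinPos (R⁻¹ * (R⁻¹ * G2)) = lamMinPos ((R⁻¹ * G2) * R⁻¹) :=
      lamMinPos_congr (fun c hc => spec_swap_s17 _ _ hc)
    have s3 : (R⁻¹ * G2) * R⁻¹ = D := by rw [hDdef]
    rw [s0, s1, e2D, s2, s3]
  -- the common vector
  have hdim : ns < Module.finrank ℝ ↥(LinearMap.range C.mulVecLin)
      + Module.finrank ℝ ↥(LinearMap.range D.mulVecLin) := by
    have hc : Module.finrank ℝ ↥(LinearMap.range C.mulVecLin) = C.rank := rfl
    have hd : Module.finrank ℝ ↥(LinearMap.range D.mulVecLin) = D.rank := rfl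
    rw [hc, hd]
    omega
  obtain ⟨x, hx0, hxC, hxD⟩ :=
    exists_ne_zero_mem_both (LinearMap.range C.mulVecLin) (LinearMap.range D.mulVecLin) hdim
  have hb1 : lamMinPos C * (x ⬝ᵥ x) ≤ x ⬝ᵥ C.mulVec x := by
    obtain ⟨y, hy⟩ := hxC
    exact rayleigh hCpsd ⟨y, hy⟩
  have hb2 : lamMinPos D * (x ⬝ᵥ x) ≤ x ⬝ᵥ D.mulVec x := by
    obtain ⟨y, hy⟩ := hxD
    exact rayleigh hDpsd ⟨y, hy⟩
  have hb3 : x ⬝ᵥ (C + D).mulVec x ≤ x ⬝ᵥ x := by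
    have h := hIC.dotProduct_mulVec_nonneg x
    simp only [star_trivial] at h
    rw [Matrix.sub_mulVec, dotProduct_sub, Matrix.one_mulVec] at h
    linarith
  have hsplit : x ⬝ᵥ (C + D).mulVec x = x ⬝ᵥ C.mulVec x + x ⬝ᵥ D.mulVec x := by
    rw [Matrix.add_mulVec, dotProduct_add]
  have hxx : 0 < x ⬝ᵥ x := by
    have hnn : 0 ≤ x ⬝ᵥ x := Finset.sum_nonneg fun i _ => mul_self_nonneg (x i)
    have hne : x ⬝ᵥ x ≠ 0 := fun h => hx0 (dotProduct_self_eq_zero.mp h)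
    exact lt_of_le_of_ne hnn (Ne.symm hne)
  have hfinal : lamMinPos C + lamMinPos D ≤ 1 := by nlinarith
  rw [hσeq, hμeq]
  linarith
end

section
/- If n_c > n − n_s (so the (n_s + n_c)×(n_s + n_c) hierarchical matrix with blocks A_s, S^T A P, P^T A S, A_c is symmetric positive semidefinite but singular), then the C.B.S. constant equals one: γ² = λ_max( A_s^{−1/2} S^T A P A_c^{−1} P^T A S A_s^{−1/2} ) = 1. -/
open Matrix

/-- The positive semidefinite square root (Mathlib's former `Matrix.PosSemidef.sqrt`). -/
noncomputable def Matrix.PosSemidef.sqrt {m : Type*} [Fintype m] [DecidableEq m]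
    {M : Matrix m m ℝ} (hM : M.PosSemidef) : Matrix m m ℝ :=
  hM.1.eigenvectorUnitary.1 * diagonal ((↑) ∘ (Real.sqrt ·) ∘ hM.1.eigenvalues) *
    (star hM.1.eigenvectorUnitary : Matrix m m ℝ)

lemma Matrix.PosSemidef.posSemidef_sqrt_herm {m : Type*} [Fintype m] [DecidableEq m]
    {M : Matrix m m ℝ} (hM : M.PosSemidef) : hM.sqrt.IsHermitian := by
  unfold Matrix.PosSemidef.sqrt Matrix.IsHermitian
  rw [Matrix.conjTranspose_mul, Matrix.conjTranspose_mul, Matrix.diagonal_conjTranspose]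
  simp [Matrix.star_eq_conjTranspose, Matrix.mul_assoc]

lemma Matrix.PosSemidef.sqrt_mul_self' {m : Type*} [Fintype m] [DecidableEq m]
    {M : Matrix m m ℝ} (hM : M.PosSemidef) : hM.sqrt * hM.sqrt = M := by
  unfold Matrix.PosSemidef.sqrt
  have hU : (star hM.1.eigenvectorUnitary : Matrix m m ℝ) * hM.1.eigenvectorUnitary.1 = 1 :=
    Matrix.UnitaryGroup.star_mul_self _
  have hD : diagonal ((fun x : ℝ => x) ∘ (Real.sqrt ·) ∘ hM.1.eigenvalues) *
      diagonal ((fun x : ℝ => x) ∘ (Real.sqrt ·) ∘ hM.1.eigenvalues) =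
      diagonal (RCLike.ofReal ∘ hM.1.eigenvalues) := by
    rw [Matrix.diagonal_mul_diagonal]
    congr 1; funext i
    simp [Real.mul_self_sqrt (hM.eigenvalues_nonneg i)]
  conv_rhs => rw [hM.1.spectral_theorem]
  rw [Unitary.conjStarAlgAut_apply, ← hD]
  calc _ = hM.1.eigenvectorUnitary.1 * diagonal ((fun x : ℝ => x) ∘ (Real.sqrt ·) ∘ hM.1.eigenvalues) *
      ((star hM.1.eigenvectorUnitary : Matrix m m ℝ) * hM.1.eigenvectorUnitary.1) *
      diagonal ((fun x : ℝ => x) ∘ (Real.sqrt ·) ∘ hM.1.eigenvalues) *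
      (star hM.1.eigenvectorUnitary : Matrix m m ℝ) := by simp only [Matrix.mul_assoc]
    _ = _ := by rw [hU, Matrix.mul_one]; simp only [Matrix.mul_assoc]

/-- Auxiliary: conjugation identity for quadratic forms. -/
lemma dotConj {m k : ℕ} (B : Matrix (Fin m) (Fin k) ℝ) (M : Matrix (Fin m) (Fin m) ℝ)
    (w : Fin k → ℝ) :
    w ⬝ᵥ ((Bᵀ * M * B) *ᵥ w) = (B *ᵥ w) ⬝ᵥ (M *ᵥ (B *ᵥ w)) := by
  rw [← Matrix.mulVec_mulVec, ← Matrix.mulVec_mulVec, Matrix.dotProduct_mulVec,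
    Matrix.vecMul_transpose]

/-- Auxiliary: full column rank implies `mulVec` has trivial kernel. -/
lemma mulVec_eq_zero_of_rank {m k : ℕ} (B : Matrix (Fin m) (Fin k) ℝ) (hB : B.rank = k) :
    ∀ v, B *ᵥ v = 0 → v = 0 := by
  rw [← Matrix.ker_mulVecLin_eq_bot_iff]
  have h := LinearMap.finrank_range_add_finrank_ker B.mulVecLin
  rw [Module.finrank_fin_fun] at h
  have hr : Module.finrank ℝ (LinearMap.range B.mulVecLin) = k := hB
  apply Submodule.finrank_eq_zero.mp
  omega

/-- If `n_c > n - n_s`, then the C.B.S. constant equals one: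
`γ² = λ_max( A_s^{-1/2} Sᵀ A P A_c⁻¹ Pᵀ A S A_s^{-1/2} ) = 1`. -/
theorem cbs_constant_eq_one {n ns nc : ℕ}
    (A : Matrix (Fin n) (Fin n) ℝ) (hA : A.PosDef)
    (S : Matrix (Fin n) (Fin ns) ℝ) (hS : S.rank = ns)
    (P : Matrix (Fin n) (Fin nc) ℝ) (hP : P.rank = nc)
    (hns : ns < n) (hnc : nc < n) (hsum : n ≤ ns + nc)
    (hSP : (fromCols S P).rank = n)
    (hAs : (Sᵀ * A * S).PosDef)
    (hgt : n - ns < nc) :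
    lamMax ((hAs.posSemidef.sqrt)⁻¹ * (Sᵀ * A * P) * (Pᵀ * A * P)⁻¹ * (Pᵀ * A * S) *
      (hAs.posSemidef.sqrt)⁻¹) = 1 := by
  classical
  set As : Matrix (Fin ns) (Fin ns) ℝ := Sᵀ * A * S with hAsdef
  set Ac : Matrix (Fin nc) (Fin nc) ℝ := Pᵀ * A * P with hAcdef
  set R : Matrix (Fin ns) (Fin ns) ℝ := hAs.posSemidef.sqrt with hRdef
  set X : Matrix (Fin ns) (Fin ns) ℝ := R⁻¹ * (Sᵀ * A * P) * Ac⁻¹ * (Pᵀ * A * S) * R⁻¹ with hXdef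
  have hAH : Aᵀ = A := by
    rw [← Matrix.conjTranspose_eq_transpose_of_trivial]; exact hA.isHermitian
  have hPinj := mulVec_eq_zero_of_rank P hP
  -- `Ac` is positive definite
  have hAcH : Ac.IsHermitian := by
    have h := Matrix.isHermitian_conjTranspose_mul_mul P hA.isHermitian
    simpa [Matrix.conjTranspose_eq_transpose_of_trivial] using h
  have hAc : Ac.PosDef := by
    refine Matrix.PosDef.of_dotProduct_mulVec_pos hAcH fun x hx => ?_
    have hPx : P *ᵥ x ≠ 0 := fun h => hx (hPinj x h)
    have h := hA.dotProduct_mulVec_pos hPx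
    have e : star x = x := by simp
    rw [e, hAcdef, dotConj]
    simpa using h
  have hAcdet : IsUnit Ac.det := isUnit_iff_ne_zero.mpr (ne_of_gt hAc.det_pos)
  have hAcHt : Acᵀ = Ac := by
    rw [← Matrix.conjTranspose_eq_transpose_of_trivial]; exact hAcH
  have hAcinvH : (Ac⁻¹)ᵀ = Ac⁻¹ := by rw [Matrix.transpose_nonsing_inv, hAcHt]
  -- facts about `R`
  have hRH : Rᵀ = R := by
    rw [← Matrix.conjTranspose_eq_transpose_of_trivial]
    exact hAs.posSemidef.posSemidef_sqrt_herm
  have hRR : R * R = As := hAs.posSemidef.sqrt_mul_self'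
  have hRdet : IsUnit R.det := by
    refine isUnit_iff_ne_zero.mpr fun h => ?_
    have : R.det * R.det = As.det := by rw [← Matrix.det_mul, hRR]
    rw [h, mul_zero] at this
    exact absurd this.symm (ne_of_gt hAs.det_pos)
  have hRiH : (R⁻¹)ᵀ = R⁻¹ := by rw [Matrix.transpose_nonsing_inv, hRH]
  have hRinvR : R⁻¹ * R = 1 := Matrix.nonsing_inv_mul _ hRdet
  have hRRinv : R * R⁻¹ = 1 := Matrix.mul_nonsing_inv _ hRdet
  have hcanc : Ac⁻¹ * Ac = 1 := Matrix.nonsing_inv_mul _ hAcdet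
  -- the projection `Q`
  set Q : Matrix (Fin n) (Fin n) ℝ := P * Ac⁻¹ * Pᵀ * A with hQdef
  have hQT : Qᵀ * A = A * Q := by
    rw [hQdef]
    simp only [Matrix.transpose_mul, Matrix.transpose_transpose, hAH, hAcinvH]
    simp only [Matrix.mul_assoc]
  have hQQ : Q * Q = Q := by
    rw [hQdef]
    have e1 : (P * Ac⁻¹ * Pᵀ * A) * (P * Ac⁻¹ * Pᵀ * A)
        = P * Ac⁻¹ * Ac * (Ac⁻¹ * (Pᵀ * A)) := by
      rw [hAcdef]; simp only [Matrix.mul_assoc]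
    rw [e1, Matrix.mul_assoc P Ac⁻¹ Ac, hcanc, Matrix.mul_one]
    simp only [Matrix.mul_assoc]
  have hPSD : (A - A * Q).PosSemidef := by
    have expand : (1 - Q)ᵀ * A * (1 - Q) = A - A * Q - Qᵀ * A + Qᵀ * A * Q := by
      simp only [Matrix.transpose_sub, Matrix.transpose_one]
      noncomm_ring
    have h1 : (1 - Q)ᵀ * A * (1 - Q) = A - A * Q := by
      rw [expand, hQT, Matrix.mul_assoc, hQQ]
      abel
    rw [← h1]
    have h2 := hA.posSemidef.conjTranspose_mul_mul_same (1 - Q)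
    simpa [Matrix.conjTranspose_eq_transpose_of_trivial] using h2
  -- factorization of `X`
  have hXfact : X = (S * R⁻¹)ᵀ * (A * Q) * (S * R⁻¹) := by
    rw [hXdef, hQdef, Matrix.transpose_mul, hRiH]
    simp only [Matrix.mul_assoc]
  have hBtAB : (S * R⁻¹)ᵀ * A * (S * R⁻¹) = 1 := by
    rw [Matrix.transpose_mul, hRiH]
    calc R⁻¹ * Sᵀ * A * (S * R⁻¹) = R⁻¹ * (Sᵀ * A * S) * R⁻¹ := by
          simp only [Matrix.mul_assoc]
      _ = R⁻¹ * (R * R) * R⁻¹ := by rw [← hAsdef, ← hRR]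
      _ = (R⁻¹ * R) * (R * R⁻¹) := by simp only [Matrix.mul_assoc]
      _ = 1 := by rw [hRinvR, hRRinv, Matrix.one_mul]
  -- quadratic form bound
  have hbound : ∀ w : Fin ns → ℝ, w ⬝ᵥ (X *ᵥ w) ≤ w ⬝ᵥ w := by
    intro w
    have e1 : w ⬝ᵥ (X *ᵥ w) = ((S * R⁻¹) *ᵥ w) ⬝ᵥ ((A * Q) *ᵥ ((S * R⁻¹) *ᵥ w)) := by
      rw [hXfact, dotConj]
    have e2 : w ⬝ᵥ w = ((S * R⁻¹) *ᵥ w) ⬝ᵥ (A *ᵥ ((S * R⁻¹) *ᵥ w)) := by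
      rw [← dotConj, hBtAB, Matrix.one_mulVec]
    have h3 := hPSD.dotProduct_mulVec_nonneg ((S * R⁻¹) *ᵥ w)
    have e3 : star ((S * R⁻¹) *ᵥ w) = (S * R⁻¹) *ᵥ w := by simp
    rw [e3, Matrix.sub_mulVec, dotProduct_sub] at h3
    rw [e1, e2]
    linarith
  -- eigenvector extraction from the spectrum
  have hspec : ∀ t : ℝ, t ∈ spectrum ℝ X → ∃ w, w ≠ 0 ∧ X *ᵥ w = t • w := by
    intro t ht
    rw [spectrum.mem_iff] at ht
    have hdet : (algebraMap ℝ (Matrix (Fin ns) (Fin ns) ℝ) t - X).det = 0 := by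
      by_contra h
      exact ht ((Matrix.isUnit_iff_isUnit_det _).mpr (isUnit_iff_ne_zero.mpr h))
    obtain ⟨w, hw, hwe⟩ := Matrix.exists_mulVec_eq_zero_iff.mpr hdet
    refine ⟨w, hw, ?_⟩
    rw [Algebra.algebraMap_eq_smul_one, Matrix.sub_mulVec, Matrix.smul_mulVec,
      Matrix.one_mulVec, sub_eq_zero] at hwe
    exact hwe.symm
  -- all eigenvalues are at most one
  have hub : ∀ t ∈ spectrum ℝ X, t ≤ 1 := by
    intro t ht
    obtain ⟨w, hw, hXw⟩ := hspec t ht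
    have hd : 0 < w ⬝ᵥ w := by
      refine lt_of_le_of_ne ?_ fun h => hw (dotProduct_self_eq_zero.mp h.symm)
      simpa using dotProduct_self_star_nonneg w
    have h1 := hbound w
    rw [hXw, dotProduct_smul, smul_eq_mul] at h1
    have h2 : t * (w ⬝ᵥ w) ≤ 1 * (w ⬝ᵥ w) := by rw [one_mul]; exact h1
    exact le_of_mul_le_mul_right h2 hd
  -- a nontrivial intersection of the ranges of S and P
  have hkey : ∃ (vs : Fin ns → ℝ) (vc : Fin nc → ℝ), vs ≠ 0 ∧ S *ᵥ vs = P *ᵥ vc := by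
    by_contra hcon
    push_neg at hcon
    let f : ((Fin ns → ℝ) × (Fin nc → ℝ)) →ₗ[ℝ] (Fin n → ℝ) :=
      S.mulVecLin.comp (LinearMap.fst ℝ _ _) - P.mulVecLin.comp (LinearMap.snd ℝ _ _)
    have hfinj : Function.Injective f := by
      rw [← LinearMap.ker_eq_bot]
      rw [LinearMap.ker_eq_bot']
      rintro ⟨x, y⟩ hxy
      have hxy' : S *ᵥ x = P *ᵥ y := by
        have : S *ᵥ x - P *ᵥ y = 0 := hxy
        linear_combination (norm := module) this
      have hx0 : x = 0 := by
        by_contra hx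
        exact (hcon x y hx) hxy'
      have hy0 : y = 0 := by
        apply hPinj
        rw [← hxy', hx0, Matrix.mulVec_zero]
      simp [hx0, hy0, Prod.ext_iff]
    have hle := LinearMap.finrank_le_finrank_of_injective hfinj
    rw [Module.finrank_prod, Module.finrank_fin_fun, Module.finrank_fin_fun,
      Module.finrank_fin_fun] at hle
    omega
  obtain ⟨vs, vc, hvs0, hvs⟩ := hkey
  -- the eigenvector for eigenvalue 1
  set w1 : Fin ns → ℝ := R *ᵥ vs with hw1def
  have hw1ne : w1 ≠ 0 := by
    intro h
    apply hvs0
    have : (R⁻¹ * R) *ᵥ vs = R⁻¹ *ᵥ (R *ᵥ vs) := (Matrix.mulVec_mulVec _ _ _).symm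
    rw [hRinvR, Matrix.one_mulVec, ← hw1def, h, Matrix.mulVec_zero] at this
    exact this
  have hXw1 : X *ᵥ w1 = w1 := by
    rw [hw1def, Matrix.mulVec_mulVec]
    have hXR : X * R = R⁻¹ * ((Sᵀ * A * P) * (Ac⁻¹ * ((Pᵀ * A) * S))) := by
      calc X * R = R⁻¹ * (Sᵀ * A * P) * Ac⁻¹ * (Pᵀ * A * S) * (R⁻¹ * R) := by
            rw [hXdef]; simp only [Matrix.mul_assoc]
        _ = _ := by rw [hRinvR, Matrix.mul_one]; simp only [Matrix.mul_assoc]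
    rw [hXR]
    simp only [← Matrix.mulVec_mulVec]
    have c1 : Pᵀ *ᵥ (A *ᵥ (P *ᵥ vc)) = Ac *ᵥ vc := by
      rw [Matrix.mulVec_mulVec, Matrix.mulVec_mulVec, ← hAcdef]
    have c2 : Ac⁻¹ *ᵥ (Ac *ᵥ vc) = vc := by
      rw [Matrix.mulVec_mulVec, hcanc, Matrix.one_mulVec]
    have c3 : Sᵀ *ᵥ (A *ᵥ (S *ᵥ vs)) = (R * R) *ᵥ vs := by
      rw [Matrix.mulVec_mulVec, Matrix.mulVec_mulVec, ← hAsdef, ← hRR]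
    rw [hvs, c1, c2, ← hvs, c3, Matrix.mulVec_mulVec, ← Matrix.mul_assoc, hRinvR,
      Matrix.one_mul]
  -- 1 is in the spectrum
  have h1mem : (1 : ℝ) ∈ spectrum ℝ X := by
    rw [spectrum.mem_iff]
    intro hu
    rw [Matrix.isUnit_iff_isUnit_det] at hu
    have hdet0 : (algebraMap ℝ (Matrix (Fin ns) (Fin ns) ℝ) 1 - X).det = 0 := by
      apply Matrix.exists_mulVec_eq_zero_iff.mp
      refine ⟨w1, hw1ne, ?_⟩
      rw [_root_.map_one, Matrix.sub_mulVec, Matrix.one_mulVec, hXw1, sub_self]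
    rw [hdet0] at hu
    simpa using hu
  -- conclude
  show lamMax X = 1
  unfold lamMax
  refine le_antisymm (csSup_le ⟨1, h1mem⟩ hub) (le_csSup ⟨1, fun t ht => hub t ht⟩ h1mem)
end

section
/- Under the stated assumptions, the spectrum of B_TL^{-1} A is contained in the half-open interval (0, 1], where B_TL^{-1} := S M̄_s^{-1} S^T + (I − S M_s^{-T} S^T A) P A_c^{-1} P^T (I − A S M_s^{-1} S^T) with M̄_s := M_s (M_s + M_s^T − A_s)^{-1} M_s^T; equivalently, the exact TLHB preconditioner B_TL is SPD and the iteration matrix E_TL = I − B_TL^{-1} A satisfies ‖E_TL‖_A = λ_max(E_TL) = 1 − λ_min(B_TL^{-1} A) < 1. -/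
open Matrix

/-- `M̄_s = Ms (Ms + Msᵀ - As)⁻¹ Msᵀ`. -/
noncomputable def barMs {ns : ℕ} (Ms As : Matrix (Fin ns) (Fin ns) ℝ) :
    Matrix (Fin ns) (Fin ns) ℝ :=
  Ms * (Ms + Msᵀ - As)⁻¹ * Msᵀ

/-- Inverse of the exact TLHB preconditioner:
`B_TL⁻¹ = S M̄_s⁻¹ Sᵀ + (I - S Ms⁻ᵀ Sᵀ A) P A_c⁻¹ Pᵀ (I - A S Ms⁻¹ Sᵀ)`. -/
noncomputable def invBtl {n ns nc : ℕ} (A : Matrix (Fin n) (Fin n) ℝ)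
    (S : Matrix (Fin n) (Fin ns) ℝ) (P : Matrix (Fin n) (Fin nc) ℝ)
    (Ms : Matrix (Fin ns) (Fin ns) ℝ) : Matrix (Fin n) (Fin n) ℝ :=
  S * (barMs Ms (Sᵀ * A * S))⁻¹ * Sᵀ +
    (1 - S * (Msᵀ)⁻¹ * Sᵀ * A) * P * (Pᵀ * A * P)⁻¹ * Pᵀ * (1 - A * S * Ms⁻¹ * Sᵀ)

open Pointwise

/-! ### Auxiliary lemmas -/

lemma tlhb_star_vec {k : ℕ} (x : Fin k → ℝ) : star x = x := star_trivial x

lemma tlhb_psd_dot {k : ℕ} {M : Matrix (Fin k) (Fin k) ℝ} (hM : M.PosSemidef)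
    (x : Fin k → ℝ) : 0 ≤ x ⬝ᵥ M *ᵥ x := by
  simpa [tlhb_star_vec] using hM.dotProduct_mulVec_nonneg x

lemma tlhb_pd_dot {k : ℕ} {M : Matrix (Fin k) (Fin k) ℝ} (hM : M.PosDef)
    {x : Fin k → ℝ} (hx : x ≠ 0) : 0 < x ⬝ᵥ M *ᵥ x := by
  simpa [tlhb_star_vec] using hM.dotProduct_mulVec_pos hx

lemma tlhb_herm_iff {k : ℕ} {M : Matrix (Fin k) (Fin k) ℝ} : M.IsHermitian ↔ Mᵀ = M := by
  unfold Matrix.IsHermitian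
  rw [conjTranspose_eq_transpose_of_trivial]

lemma tlhb_posDef_of {k : ℕ} {M : Matrix (Fin k) (Fin k) ℝ} (hsym : Mᵀ = M)
    (h : ∀ x : Fin k → ℝ, x ≠ 0 → 0 < x ⬝ᵥ M *ᵥ x) : M.PosDef := by
  refine Matrix.PosDef.of_dotProduct_mulVec_pos (tlhb_herm_iff.2 hsym) fun x hx => ?_
  simpa [tlhb_star_vec] using h x hx

lemma tlhb_psd_conj {k m : ℕ} {M : Matrix (Fin k) (Fin k) ℝ} (hM : M.PosSemidef)
    (B : Matrix (Fin k) (Fin m) ℝ) : (Bᵀ * M * B).PosSemidef := by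
  have := hM.conjTranspose_mul_mul_same B
  rwa [conjTranspose_eq_transpose_of_trivial] at this

lemma tlhb_dot_conj {k m : ℕ} (N : Matrix (Fin k) (Fin k) ℝ)
    (B : Matrix (Fin m) (Fin k) ℝ) (x : Fin m → ℝ) :
    x ⬝ᵥ (B * N * Bᵀ) *ᵥ x = (Bᵀ *ᵥ x) ⬝ᵥ N *ᵥ (Bᵀ *ᵥ x) := by
  rw [← Matrix.mulVec_mulVec, ← Matrix.mulVec_mulVec, Matrix.dotProduct_mulVec x,
    Matrix.mulVec_transpose]

lemma tlhb_dot_conj' {k m : ℕ} (N : Matrix (Fin k) (Fin k) ℝ)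
    (B : Matrix (Fin k) (Fin m) ℝ) (x : Fin m → ℝ) :
    x ⬝ᵥ (Bᵀ * N * B) *ᵥ x = (B *ᵥ x) ⬝ᵥ N *ᵥ (B *ᵥ x) := by
  rw [← Matrix.mulVec_mulVec, ← Matrix.mulVec_mulVec, Matrix.dotProduct_mulVec x,
    Matrix.vecMul_transpose]

lemma tlhb_pd_conj {k m : ℕ} {M : Matrix (Fin k) (Fin k) ℝ} (hM : M.PosDef)
    (B : Matrix (Fin m) (Fin k) ℝ) (hB : Function.Injective Bᵀ.mulVec) :
    (B * M * Bᵀ).PosDef := by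
  refine tlhb_posDef_of ?_ fun x hx => ?_
  · have hMt : Mᵀ = M := tlhb_herm_iff.1 hM.1
    simp [transpose_mul, hMt, Matrix.mul_assoc]
  · have hBx : Bᵀ *ᵥ x ≠ 0 := fun h0 => hx (hB (by simpa using h0))
    rw [tlhb_dot_conj]
    exact tlhb_pd_dot hM hBx

lemma tlhb_mulVec_inj {m k : Type*} [Fintype m] [Fintype k] (M : Matrix m k ℝ)
    (h : M.rank = Fintype.card k) : Function.Injective M.mulVec := by
  have hrn : M.rank + Module.finrank ℝ (LinearMap.ker M.mulVecLin) = Fintype.card k := by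
    simpa [Matrix.rank] using LinearMap.finrank_range_add_finrank_ker M.mulVecLin
  have hker : LinearMap.ker M.mulVecLin = ⊥ := by
    have : Module.finrank ℝ (LinearMap.ker M.mulVecLin) = 0 := by omega
    exact Submodule.finrank_eq_zero.mp this
  have := LinearMap.ker_eq_bot.mp hker
  simpa only [Matrix.coe_mulVecLin] using this

/-- If `M` is hermitian with all eigenvalues of absolute value `≤ c`, then
`c^2 • 1 - M * M` is positive semidefinite. -/
lemma tlhb_sq_bound {k : ℕ} {M : Matrix (Fin k) (Fin k) ℝ} (hM : M.IsHermitian)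
    {c : ℝ} (hc : ∀ i, |hM.eigenvalues i| ≤ c) : ((c^2) • 1 - M * M).PosSemidef := by
  set V : Matrix (Fin k) (Fin k) ℝ := (hM.eigenvectorUnitary : Matrix (Fin k) (Fin k) ℝ) with hV
  have hVU : V ∈ Matrix.unitaryGroup (Fin k) ℝ := hM.eigenvectorUnitary.2
  have hV1 : V * star V = 1 := (Matrix.mem_unitaryGroup_iff).mp hVU
  have hV2 : star V * V = 1 := (Matrix.mem_unitaryGroup_iff').mp hVU
  have hspec : M = V * diagonal (RCLike.ofReal ∘ hM.eigenvalues) * star V :=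
    hM.spectral_theorem
  set e := hM.eigenvalues with he
  clear_value e
  have hdiag : diagonal (RCLike.ofReal ∘ e) = diagonal e := by
    simp [Function.comp, RCLike.ofReal_real_eq_id]
  rw [hdiag] at hspec
  have key : (c^2) • (1 : Matrix (Fin k) (Fin k) ℝ) - M * M
      = V * (diagonal (fun i => c^2 - e i * e i)) * Vᴴ := by
    have h1 : M * M = V * diagonal (fun i => e i * e i) * star V := by
      rw [hspec]
      calc V * diagonal e * star V * (V * diagonal e * star V)
          = V * diagonal e * (star V * V) * diagonal e * star V := by
            noncomm_ring
        _ = V * (diagonal e * diagonal e) * star V := by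
            rw [hV2]; noncomm_ring
        _ = V * diagonal (fun i => e i * e i) * star V := by
            rw [diagonal_mul_diagonal]
    have h2 : (c^2) • (1 : Matrix (Fin k) (Fin k) ℝ) = V * ((c^2) • 1) * star V := by
      rw [Matrix.mul_smul, Matrix.smul_mul, Matrix.mul_one, hV1]
    rw [h1, h2, Matrix.star_eq_conjTranspose]
    have h3 : ((c^2) • (1 : Matrix (Fin k) (Fin k) ℝ))
        - diagonal (fun i => e i * e i) = diagonal (fun i => c^2 - e i * e i) := by
      ext i j
      by_cases h : i = j <;>
        simp [Matrix.diagonal_apply, h, Matrix.one_apply, Matrix.sub_apply]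
    rw [← h3]
    noncomm_ring
  rw [key]
  refine PosSemidef.mul_mul_conjTranspose_same ?_ V
  refine Matrix.posSemidef_diagonal_iff.mpr fun i => ?_
  have := hc i
  nlinarith [abs_nonneg (e i), le_abs_self (e i), neg_abs_le (e i), sq_abs (e i)]

lemma tlhb_barMs_inv {k : ℕ} (Ms As : Matrix (Fin k) (Fin k) ℝ) (hMs : IsUnit Ms.det)
    (hW : IsUnit (Ms + Msᵀ - As).det) :
    (barMs Ms As)⁻¹ = Ms⁻¹ + (Msᵀ)⁻¹ - (Msᵀ)⁻¹ * As * Ms⁻¹ := by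
  have hMsT : IsUnit (Msᵀ).det := by rwa [Matrix.det_transpose]
  have h1 : Msᵀ * (Ms⁻¹ + (Msᵀ)⁻¹ - (Msᵀ)⁻¹ * As * Ms⁻¹) = (Ms + Msᵀ - As) * Ms⁻¹ := by
    have e1 : Msᵀ * (Msᵀ)⁻¹ = 1 := Matrix.mul_nonsing_inv _ hMsT
    calc Msᵀ * (Ms⁻¹ + (Msᵀ)⁻¹ - (Msᵀ)⁻¹ * As * Ms⁻¹)
        = Msᵀ * Ms⁻¹ + Msᵀ * (Msᵀ)⁻¹ - (Msᵀ * (Msᵀ)⁻¹) * (As * Ms⁻¹) := by noncomm_ring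
      _ = Msᵀ * Ms⁻¹ + 1 - As * Ms⁻¹ := by rw [e1]; noncomm_ring
      _ = (Ms + Msᵀ - As) * Ms⁻¹ := by
          rw [Matrix.sub_mul, Matrix.add_mul, Matrix.mul_nonsing_inv _ hMs]; noncomm_ring
  apply Matrix.inv_eq_right_inv
  show Ms * (Ms + Msᵀ - As)⁻¹ * Msᵀ * (Ms⁻¹ + (Msᵀ)⁻¹ - (Msᵀ)⁻¹ * As * Ms⁻¹) = 1
  calc Ms * (Ms + Msᵀ - As)⁻¹ * Msᵀ * (Ms⁻¹ + (Msᵀ)⁻¹ - (Msᵀ)⁻¹ * As * Ms⁻¹)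
      = Ms * (Ms + Msᵀ - As)⁻¹ * (Msᵀ * (Ms⁻¹ + (Msᵀ)⁻¹ - (Msᵀ)⁻¹ * As * Ms⁻¹)) := by
        rw [Matrix.mul_assoc]
    _ = Ms * ((Ms + Msᵀ - As)⁻¹ * (Ms + Msᵀ - As)) * Ms⁻¹ := by rw [h1]; noncomm_ring
    _ = 1 := by rw [Matrix.nonsing_inv_mul _ hW, Matrix.mul_one, Matrix.mul_nonsing_inv _ hMs]

lemma tlhb_etl_eq {n ns nc : ℕ} (A : Matrix (Fin n) (Fin n) ℝ)
    (S : Matrix (Fin n) (Fin ns) ℝ) (P : Matrix (Fin n) (Fin nc) ℝ)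
    (Ms : Matrix (Fin ns) (Fin ns) ℝ) (hMs : IsUnit Ms.det)
    (hW : IsUnit (Ms + Msᵀ - Sᵀ * A * S).det) :
    Etl A S P Ms = 1 - invBtl A S P Ms * A := by
  unfold Etl invBtl proj
  rw [tlhb_barMs_inv _ _ hMs hW]
  simp only [Matrix.mul_add, Matrix.add_mul, Matrix.mul_sub, Matrix.sub_mul,
    Matrix.mul_assoc, Matrix.mul_one, Matrix.one_mul, Matrix.neg_mul, Matrix.mul_neg,
    mul_add, add_mul, mul_sub, sub_mul, mul_assoc, mul_one, one_mul,
    mul_neg, neg_mul, neg_neg, sub_eq_add_neg, neg_add]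
  abel

set_option maxHeartbeats 2000000 in
lemma tlhb_aetl {n ns nc : ℕ} (A : Matrix (Fin n) (Fin n) ℝ)
    (S : Matrix (Fin n) (Fin ns) ℝ) (P : Matrix (Fin n) (Fin nc) ℝ)
    (Ms : Matrix (Fin ns) (Fin ns) ℝ) (hAt : Aᵀ = A) (hAc : IsUnit (Pᵀ * A * P).det) :
    A * Etl A S P Ms =
      ((1 - proj A P) * (1 - S * Ms⁻¹ * Sᵀ * A))ᵀ * A *
        ((1 - proj A P) * (1 - S * Ms⁻¹ * Sᵀ * A)) := by
  have hAct : (Pᵀ * A * P)ᵀ = Pᵀ * A * P := by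
    simp [transpose_mul, hAt, Matrix.mul_assoc]
  have hQt : (P * (Pᵀ * A * P)⁻¹ * Pᵀ)ᵀ = P * (Pᵀ * A * P)⁻¹ * Pᵀ := by
    simp [transpose_mul, Matrix.transpose_nonsing_inv, hAct, hAt, Matrix.mul_assoc]
  set Q : Matrix (Fin n) (Fin n) ℝ := P * (Pᵀ * A * P)⁻¹ * Pᵀ with hQ
  set T : Matrix (Fin n) (Fin n) ℝ := S * Ms⁻¹ * Sᵀ * A with hT
  set T' : Matrix (Fin n) (Fin n) ℝ := S * (Msᵀ)⁻¹ * Sᵀ * A with hT'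
  have hproj : proj A P = Q * A := rfl
  have hTA : Tᵀ * A = A * T' := by
    rw [hT, hT']
    simp [transpose_mul, transpose_transpose, Matrix.transpose_nonsing_inv, hAt,
      Matrix.mul_assoc]
  have hTAx : ∀ X : Matrix (Fin n) (Fin n) ℝ, Tᵀ * (A * X) = A * (T' * X) := fun X => by
    rw [← Matrix.mul_assoc, hTA, Matrix.mul_assoc]
  have hQAQ : Q * (A * Q) = Q := by
    rw [hQ]
    calc P * (Pᵀ * A * P)⁻¹ * Pᵀ * (A * (P * (Pᵀ * A * P)⁻¹ * Pᵀ))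
        = P * ((Pᵀ * A * P)⁻¹ * (Pᵀ * A * P)) * ((Pᵀ * A * P)⁻¹ * Pᵀ) := by
          simp only [Matrix.mul_assoc]
      _ = P * (Pᵀ * A * P)⁻¹ * Pᵀ := by
          rw [Matrix.nonsing_inv_mul _ hAc, Matrix.mul_one]; simp only [Matrix.mul_assoc]
  have hQAQx : ∀ X : Matrix (Fin n) (Fin n) ℝ, Q * (A * (Q * X)) = Q * X := fun X => by
    calc Q * (A * (Q * X)) = Q * (A * Q) * X := by simp only [Matrix.mul_assoc]
      _ = Q * X := by rw [hQAQ]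
  unfold Etl
  rw [hproj, ← hT', ← hT]
  simp only [transpose_mul, transpose_sub, transpose_one, hQt, hAt]
  simp only [Matrix.mul_add, Matrix.add_mul, Matrix.mul_sub, Matrix.sub_mul,
    Matrix.mul_assoc, Matrix.mul_one, Matrix.one_mul, Matrix.neg_mul, Matrix.mul_neg,
    mul_add, add_mul, mul_sub, sub_mul, mul_assoc, mul_one, one_mul,
    mul_neg, neg_mul, neg_neg, sub_eq_add_neg, neg_add]
  simp only [hTAx, hTA, hQAQx, hQAQ]
  abel

open scoped MatrixOrder in
lemma tlhb_sqrt {k : ℕ} {A : Matrix (Fin k) (Fin k) ℝ} (hA : A.PosSemidef) :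
    ∃ H : Matrix (Fin k) (Fin k) ℝ, H * H = A ∧ H.PosSemidef :=
  ⟨CFC.sqrt A, CFC.sqrt_mul_sqrt_self A hA.nonneg, (CFC.sqrt_nonneg A).posSemidef⟩

set_option maxHeartbeats 6000000 in
/-- The spectrum of `B_TL⁻¹ A` lies in `(0, 1]`: the exact TLHB preconditioner is SPD,
`E_TL = I - B_TL⁻¹ A`, and `‖E_TL‖_A = λ_max(E_TL) = 1 - λ_min(B_TL⁻¹ A) < 1`. -/
theorem exact_tlhb_preconditioner {n ns nc : ℕ}
    (A : Matrix (Fin n) (Fin n) ℝ) (hA : A.PosDef)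
    (S : Matrix (Fin n) (Fin ns) ℝ) (hS : S.rank = ns)
    (P : Matrix (Fin n) (Fin nc) ℝ) (hP : P.rank = nc)
    (hns : ns < n) (hnc : nc < n) (hsum : n ≤ ns + nc)
    (hSP : (fromCols S P).rank = n)
    (Ms : Matrix (Fin ns) (Fin ns) ℝ) (hMs : IsUnit Ms.det)
    (hMsA : (Ms + Msᵀ - Sᵀ * A * S).PosDef) :
    spectrum ℝ (invBtl A S P Ms * A) ⊆ Set.Ioc (0 : ℝ) 1 ∧
    (invBtl A S P Ms).PosDef ∧
    Etl A S P Ms = 1 - invBtl A S P Ms * A ∧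
    aNorm A (Etl A S P Ms) = lamMax (Etl A S P Ms) ∧
    lamMax (Etl A S P Ms) = 1 - lamMin (invBtl A S P Ms * A) ∧
    aNorm A (Etl A S P Ms) < 1 := by
  classical
  have hnpos : 0 < n := lt_of_le_of_lt (Nat.zero_le ns) hns
  haveI : Nonempty (Fin n) := ⟨⟨0, hnpos⟩⟩
  have hAt : Aᵀ = A := tlhb_herm_iff.1 hA.1
  have hMsT : IsUnit (Msᵀ).det := by rwa [Matrix.det_transpose]
  have hWu : IsUnit (Ms + Msᵀ - Sᵀ * A * S).det :=
    isUnit_iff_ne_zero.mpr (ne_of_gt hMsA.det_pos)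
  -- the coarse matrix is SPD
  have hPinj : Function.Injective P.mulVec := tlhb_mulVec_inj _ (by simpa using hP)
  have hAcPD : (Pᵀ * A * P).PosDef := by
    refine tlhb_posDef_of (by simp [transpose_mul, hAt, Matrix.mul_assoc]) fun x hx => ?_
    rw [tlhb_dot_conj']
    refine tlhb_pd_dot hA fun h0 => hx (hPinj ?_)
    simpa [Matrix.mulVec_zero] using h0
  have hAcu : IsUnit (Pᵀ * A * P).det := isUnit_iff_ne_zero.mpr (ne_of_gt hAcPD.det_pos)
  -- barMs is SPD
  have hMsInj : Function.Injective (Msᵀ).mulVec :=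
    Matrix.mulVec_injective_iff_isUnit.mpr ((Matrix.isUnit_iff_isUnit_det _).mpr hMsT)
  have hBarPD : (barMs Ms (Sᵀ * A * S)).PosDef := by
    unfold barMs
    exact tlhb_pd_conj hMsA.inv Ms hMsInj
  have hBarInv : ((barMs Ms (Sᵀ * A * S))⁻¹).PosDef := hBarPD.inv
  have hAcInv : ((Pᵀ * A * P)⁻¹).PosDef := hAcPD.inv
  -- the iteration-matrix identity
  have hEtl : Etl A S P Ms = 1 - invBtl A S P Ms * A := tlhb_etl_eq A S P Ms hMs hWu
  -- invBtl is SPD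
  have hGt : ((1 - S * (Msᵀ)⁻¹ * Sᵀ * A) * P)ᵀ = Pᵀ * (1 - A * S * Ms⁻¹ * Sᵀ) := by
    simp [transpose_mul, transpose_sub, transpose_one, transpose_transpose,
      Matrix.transpose_nonsing_inv, hAt, Matrix.mul_sub, Matrix.sub_mul, Matrix.mul_assoc]
  have hsplit : invBtl A S P Ms =
      S * (barMs Ms (Sᵀ * A * S))⁻¹ * Sᵀ +
      ((1 - S * (Msᵀ)⁻¹ * Sᵀ * A) * P) * (Pᵀ * A * P)⁻¹ *
        ((1 - S * (Msᵀ)⁻¹ * Sᵀ * A) * P)ᵀ := by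
    rw [hGt]; unfold invBtl; simp only [Matrix.mul_assoc]
  have hSPinj : Function.Injective ((fromCols S P)ᵀ).mulVec := by
    refine tlhb_mulVec_inj _ ?_
    rw [Matrix.rank_transpose, hSP]; simp
  have hBinvPD : (invBtl A S P Ms).PosDef := by
    rw [hsplit]
    set G : Matrix (Fin n) (Fin nc) ℝ := (1 - S * (Msᵀ)⁻¹ * Sᵀ * A) * P with hG
    set N1 : Matrix (Fin ns) (Fin ns) ℝ := (barMs Ms (Sᵀ * A * S))⁻¹ with hN1
    set N2 : Matrix (Fin nc) (Fin nc) ℝ := (Pᵀ * A * P)⁻¹ with hN2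
    clear_value N1 N2
    refine tlhb_posDef_of ?_ fun x hx => ?_
    · have h1 : N1ᵀ = N1 := tlhb_herm_iff.1 hBarInv.1
      have h2 : N2ᵀ = N2 := tlhb_herm_iff.1 hAcInv.1
      simp [transpose_add, transpose_mul, transpose_transpose, h1, h2, Matrix.mul_assoc]
    · rw [Matrix.add_mulVec, dotProduct_add, tlhb_dot_conj, tlhb_dot_conj]
      have hnn1 : 0 ≤ (Sᵀ *ᵥ x) ⬝ᵥ N1 *ᵥ (Sᵀ *ᵥ x) :=
        tlhb_psd_dot hBarInv.posSemidef _
      have hnn2 : 0 ≤ (Gᵀ *ᵥ x) ⬝ᵥ N2 *ᵥ (Gᵀ *ᵥ x) :=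
        tlhb_psd_dot hAcInv.posSemidef _
      by_cases hs : Sᵀ *ᵥ x = 0
      · have hGx : Gᵀ *ᵥ x = Pᵀ *ᵥ x := by
          rw [hG, hGt, ← Matrix.mulVec_mulVec]
          rw [Matrix.sub_mulVec, Matrix.one_mulVec]
          have : (A * S * Ms⁻¹ * Sᵀ) *ᵥ x = 0 := by
            rw [← Matrix.mulVec_mulVec, hs, Matrix.mulVec_zero]
          rw [this, sub_zero]
        have hPx : Pᵀ *ᵥ x ≠ 0 := by
          intro h0
          apply hx
          have hzero : ((fromCols S P)ᵀ) *ᵥ x = ((fromCols S P)ᵀ) *ᵥ 0 := by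
            rw [Matrix.mulVec_zero, Matrix.transpose_fromCols, Matrix.fromRows_mulVec]
            funext i
            cases i with
            | inl i => simp [hs]
            | inr i => simp [h0]
          exact hSPinj hzero
        have hpos : 0 < (Gᵀ *ᵥ x) ⬝ᵥ N2 *ᵥ (Gᵀ *ᵥ x) := by
          rw [hGx]
          exact tlhb_pd_dot hAcInv hPx
        linarith
      · have hpos : 0 < (Sᵀ *ᵥ x) ⬝ᵥ N1 *ᵥ (Sᵀ *ᵥ x) :=
          tlhb_pd_dot hBarInv hs
        linarith
  -- square root of A
  obtain ⟨H, hHH, hHpsd⟩ := tlhb_sqrt hA.posSemidef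
  have hHt : Hᵀ = H := tlhb_herm_iff.1 hHpsd.1
  have hHdet : IsUnit H.det := by
    refine isUnit_iff_ne_zero.mpr fun h0 => ?_
    have : A.det = 0 := by rw [← hHH, Matrix.det_mul, h0, mul_zero]
    exact ne_of_gt hA.det_pos this
  have hHunit : IsUnit H := (Matrix.isUnit_iff_isUnit_det H).mpr hHdet
  have hHinv : H * H⁻¹ = 1 := Matrix.mul_nonsing_inv _ hHdet
  have hHinv' : H⁻¹ * H = 1 := Matrix.nonsing_inv_mul _ hHdet
  have hHinvT : (H⁻¹)ᵀ = H⁻¹ := by rw [Matrix.transpose_nonsing_inv, hHt]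
  have hHmvInj : Function.Injective H.mulVec :=
    Matrix.mulVec_injective_iff_isUnit.mpr hHunit
  -- symmetrized matrix R
  set R : Matrix (Fin n) (Fin n) ℝ := H * invBtl A S P Ms * H with hRdef
  have hRPD : R.PosDef := by
    rw [hRdef]
    have := tlhb_pd_conj hBinvPD H (by rwa [hHt])
    rwa [hHt] at this
  -- conjugation identities
  have hHA : H⁻¹ * A = H := by
    rw [← hHH, ← Matrix.mul_assoc, hHinv', Matrix.one_mul]
  have hAH : A * H⁻¹ = H := by
    rw [← hHH, Matrix.mul_assoc, hHinv, Matrix.mul_one]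
  have hconj : invBtl A S P Ms * A = H⁻¹ * R * H := by
    rw [hRdef]
    calc invBtl A S P Ms * A
        = invBtl A S P Ms * (H * H) := by rw [hHH]
      _ = (H⁻¹ * H) * invBtl A S P Ms * (H * H) := by rw [hHinv', Matrix.one_mul]
      _ = H⁻¹ * (H * invBtl A S P Ms * H) * H := by simp only [Matrix.mul_assoc]
  have hEtlconj : Etl A S P Ms = H⁻¹ * (1 - R) * H := by
    rw [hEtl, hconj]
    rw [Matrix.mul_sub, Matrix.mul_one, Matrix.sub_mul, hHinv']
  -- spectra are related by conjugation
  obtain ⟨u, hu⟩ := hHunit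
  have huinv : (↑u⁻¹ : Matrix (Fin n) (Fin n) ℝ) = H⁻¹ := by
    rw [Matrix.coe_units_inv, hu]
  have hspecR : spectrum ℝ (invBtl A S P Ms * A) = spectrum ℝ R := by
    rw [hconj, ← huinv, ← hu, spectrum.units_conjugate']
  have hspecE : spectrum ℝ (Etl A S P Ms) = spectrum ℝ (1 - R) := by
    rw [hEtlconj, ← huinv, ← hu, spectrum.units_conjugate']
  -- 1 - R is positive semidefinite
  set K : Matrix (Fin n) (Fin n) ℝ := (1 - proj A P) * (1 - S * Ms⁻¹ * Sᵀ * A) with hK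
  have hFpsd : ((1 : Matrix (Fin n) (Fin n) ℝ) - R).PosSemidef := by
    have e1 : H⁻¹ * A * H⁻¹ = 1 := by rw [hHA, hHinv]
    have e3 : H⁻¹ * A * invBtl A S P Ms * A * H⁻¹ = R := by
      rw [hHA, Matrix.mul_assoc (H * invBtl A S P Ms) A H⁻¹, hAH, hRdef]
    have hKey : (K * H⁻¹)ᵀ * A * (K * H⁻¹) = 1 - R := by
      have h1 : (K * H⁻¹)ᵀ * A * (K * H⁻¹) = H⁻¹ * (A * Etl A S P Ms) * H⁻¹ := by
        rw [transpose_mul, hHinvT, tlhb_aetl A S P Ms hAt hAcu, ← hK]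
        simp only [Matrix.mul_assoc]
      have h2 : H⁻¹ * (A * Etl A S P Ms) * H⁻¹
          = H⁻¹ * A * H⁻¹ - H⁻¹ * A * invBtl A S P Ms * A * H⁻¹ := by
        rw [hEtl]; noncomm_ring
      rw [h1, h2, e1, e3]
    rw [← hKey]
    exact tlhb_psd_conj hA.posSemidef _
  have hRH : R.IsHermitian := hRPD.1
  have hFH : ((1 : Matrix (Fin n) (Fin n) ℝ) - R).IsHermitian := hFpsd.1
  have hRrange : spectrum ℝ R = Set.range hRH.eigenvalues :=
    hRH.spectrum_real_eq_range_eigenvalues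
  have hFrange : spectrum ℝ ((1 : Matrix (Fin n) (Fin n) ℝ) - R)
      = Set.range hFH.eigenvalues := hFH.spectrum_real_eq_range_eigenvalues
  have hσfin : (spectrum ℝ (invBtl A S P Ms * A)).Finite :=
    (invBtl A S P Ms * A).finite_real_spectrum
  have hσne : (spectrum ℝ (invBtl A S P Ms * A)).Nonempty := by
    rw [hspecR, hRrange]; exact Set.range_nonempty _
  have hFsub : spectrum ℝ ((1 : Matrix (Fin n) (Fin n) ℝ) - R)
      = {(1:ℝ)} - spectrum ℝ R := by
    have h := spectrum.singleton_sub_eq R (1 : ℝ)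
    rw [_root_.map_one] at h
    exact h.symm
  -- part 1 : spectrum inclusion
  have hsub : spectrum ℝ (invBtl A S P Ms * A) ⊆ Set.Ioc (0:ℝ) 1 := by
    intro t ht
    have htR : t ∈ spectrum ℝ R := by rwa [hspecR] at ht
    constructor
    · rw [hRrange] at htR
      obtain ⟨i, rfl⟩ := htR
      exact hRPD.eigenvalues_pos i
    · have h1t : (1:ℝ) - t ∈ spectrum ℝ ((1 : Matrix (Fin n) (Fin n) ℝ) - R) := by
        rw [hFsub]; exact Set.sub_mem_sub rfl htR
      rw [hFrange] at h1t
      obtain ⟨i, hi⟩ := h1t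
      have h0 : (0:ℝ) ≤ 1 - t := hi ▸ hFpsd.eigenvalues_nonneg i
      linarith
  -- part 5 : lamMax Etl = 1 - lamMin (invBtl * A)
  have hmin_mem : sInf (spectrum ℝ (invBtl A S P Ms * A))
      ∈ spectrum ℝ (invBtl A S P Ms * A) := hσne.csInf_mem hσfin
  have hlam5 : lamMax (Etl A S P Ms) = 1 - lamMin (invBtl A S P Ms * A) := by
    unfold lamMax lamMin
    have hspecEtl : spectrum ℝ (Etl A S P Ms)
        = {(1:ℝ)} - spectrum ℝ (invBtl A S P Ms * A) := by
      rw [hspecE, hFsub, hspecR]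
    rw [hspecEtl]
    apply IsGreatest.csSup_eq
    constructor
    · exact Set.sub_mem_sub rfl hmin_mem
    · rintro r hr
      rw [Set.mem_sub] at hr
      obtain ⟨a, ha, z, hz, rfl⟩ := hr
      have ha1 : a = 1 := ha
      have hle := csInf_le hσfin.bddBelow hz
      rw [ha1]
      linarith
  -- part 4 : aNorm = lamMax
  set c : ℝ := lamMax (Etl A S P Ms) with hc
  have hFfin : (spectrum ℝ ((1 : Matrix (Fin n) (Fin n) ℝ) - R)).Finite :=
    ((1 : Matrix (Fin n) (Fin n) ℝ) - R).finite_real_spectrum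
  have hFne : (spectrum ℝ ((1 : Matrix (Fin n) (Fin n) ℝ) - R)).Nonempty := by
    rw [hFrange]; exact Set.range_nonempty _
  have hcSup : c = sSup (spectrum ℝ ((1 : Matrix (Fin n) (Fin n) ℝ) - R)) := by
    rw [hc]; unfold lamMax; rw [hspecE]
  have hcmem : c ∈ spectrum ℝ ((1 : Matrix (Fin n) (Fin n) ℝ) - R) := by
    rw [hcSup]; exact hFne.csSup_mem hFfin
  have hub : ∀ t ∈ spectrum ℝ ((1 : Matrix (Fin n) (Fin n) ℝ) - R), t ≤ c := by
    intro t ht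
    rw [hcSup]
    exact le_csSup hFfin.bddAbove ht
  have hc0 : 0 ≤ c := by
    rw [hFrange] at hcmem
    obtain ⟨i, hi⟩ := hcmem
    exact hi ▸ hFpsd.eigenvalues_nonneg i
  have habs : ∀ i, |hFH.eigenvalues i| ≤ c := fun i => by
    rw [abs_of_nonneg (hFpsd.eigenvalues_nonneg i)]
    exact hub _ (by rw [hFrange]; exact ⟨i, rfl⟩)
  have hsq := tlhb_sq_bound hFH habs
  have hdotA : ∀ w : Fin n → ℝ, w ⬝ᵥ A *ᵥ w = (H *ᵥ w) ⬝ᵥ (H *ᵥ w) := fun w => by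
    have h := Matrix.dotProduct_mulVec w Hᵀ (H *ᵥ w)
    rw [Matrix.vecMul_transpose] at h
    rw [← h, hHt, Matrix.mulVec_mulVec, hHH]
  have hFt : ((1 : Matrix (Fin n) (Fin n) ℝ) - R)ᵀ = 1 - R := tlhb_herm_iff.1 hFH
  have hdotF : ∀ y : Fin n → ℝ, ((1 - R) *ᵥ y) ⬝ᵥ ((1 - R) *ᵥ y)
      = y ⬝ᵥ ((1 - R) * (1 - R)) *ᵥ y := fun y => by
    have h := Matrix.dotProduct_mulVec y ((1 : Matrix (Fin n) (Fin n) ℝ) - R)ᵀ ((1 - R) *ᵥ y)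
    rw [Matrix.vecMul_transpose] at h
    rw [← h, hFt, Matrix.mulVec_mulVec]
  have hHEtl : H * Etl A S P Ms = (1 - R) * H := by
    rw [hEtlconj]
    calc H * (H⁻¹ * (1 - R) * H) = (H * H⁻¹) * ((1 - R) * H) := by
          simp only [Matrix.mul_assoc]
      _ = (1 - R) * H := by rw [hHinv, Matrix.one_mul]
  obtain ⟨i0, hi0⟩ : ∃ i, hFH.eigenvalues i = c := by
    rw [hFrange] at hcmem; exact hcmem
  set v : Fin n → ℝ := ⇑(hFH.eigenvectorBasis i0) with hv
  have hvne : v ≠ 0 := (WithLp.ofLp_eq_zero 2).ne.2 (hFH.eigenvectorBasis.orthonormal.ne_zero i0)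
  have hFv : (1 - R) *ᵥ v = c • v := by
    rw [hv, hFH.mulVec_eigenvectorBasis i0, hi0]
  have hEnormPos : ∀ w : Fin n → ℝ, w ≠ 0 → 0 < eNorm A w := fun w hw =>
    Real.sqrt_pos.mpr (tlhb_pd_dot hA hw)
  have hEnormSmul : ∀ (a : ℝ) (w : Fin n → ℝ), eNorm A (a • w) = |a| * eNorm A w := by
    intro a w
    unfold eNorm
    rw [Matrix.mulVec_smul, smul_dotProduct, dotProduct_smul, smul_eq_mul, smul_eq_mul]
    rw [show a * (a * (w ⬝ᵥ A *ᵥ w)) = a^2 * (w ⬝ᵥ A *ᵥ w) by ring]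
    rw [Real.sqrt_mul (sq_nonneg a), Real.sqrt_sq_eq_abs]
  have hmem : c ∈ {r : ℝ | ∃ w : Fin n → ℝ, w ≠ 0 ∧
      r = eNorm A ((Etl A S P Ms).mulVec w) / eNorm A w} := by
    have hHv0 : H *ᵥ (H⁻¹ *ᵥ v) = v := by
      rw [Matrix.mulVec_mulVec, hHinv, Matrix.one_mulVec]
    have hv0ne : H⁻¹ *ᵥ v ≠ 0 := fun h0 => hvne (by rw [← hHv0, h0, Matrix.mulVec_zero])
    have hEv0 : (Etl A S P Ms) *ᵥ (H⁻¹ *ᵥ v) = c • (H⁻¹ *ᵥ v) := by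
      apply hHmvInj
      rw [Matrix.mulVec_mulVec, hHEtl, ← Matrix.mulVec_mulVec, hHv0, hFv,
        Matrix.mulVec_smul, hHv0]
    refine ⟨H⁻¹ *ᵥ v, hv0ne, ?_⟩
    rw [hEv0, hEnormSmul, abs_of_nonneg hc0, mul_div_assoc,
      div_self (ne_of_gt (hEnormPos _ hv0ne)), mul_one]
  have hubA : ∀ r ∈ {r : ℝ | ∃ w : Fin n → ℝ, w ≠ 0 ∧
      r = eNorm A ((Etl A S P Ms).mulVec w) / eNorm A w}, r ≤ c := by
    rintro r ⟨w, hw, rfl⟩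
    have hyne : H *ᵥ w ≠ 0 := fun h0 => hw (hHmvInj (by rw [h0, Matrix.mulVec_zero]))
    have hyy : 0 < (H *ᵥ w) ⬝ᵥ (H *ᵥ w) := by
      have := tlhb_pd_dot (Matrix.PosDef.one (n := Fin n) (R := ℝ)) hyne
      simpa [Matrix.one_mulVec] using this
    have hnum : eNorm A ((Etl A S P Ms) *ᵥ w)
        = Real.sqrt (((1 - R) *ᵥ (H *ᵥ w)) ⬝ᵥ ((1 - R) *ᵥ (H *ᵥ w))) := by
      unfold eNorm
      rw [hdotA, Matrix.mulVec_mulVec, hHEtl, ← Matrix.mulVec_mulVec]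
    have hden : eNorm A w = Real.sqrt ((H *ᵥ w) ⬝ᵥ (H *ᵥ w)) := by
      unfold eNorm; rw [hdotA]
    have hbound : ((1 - R) *ᵥ (H *ᵥ w)) ⬝ᵥ ((1 - R) *ᵥ (H *ᵥ w))
        ≤ c^2 * ((H *ᵥ w) ⬝ᵥ (H *ᵥ w)) := by
      have h0 := tlhb_psd_dot hsq (H *ᵥ w)
      rw [Matrix.sub_mulVec, dotProduct_sub] at h0
      have h1 : (H *ᵥ w) ⬝ᵥ ((c^2) • (1 : Matrix (Fin n) (Fin n) ℝ)) *ᵥ (H *ᵥ w)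
          = c^2 * ((H *ᵥ w) ⬝ᵥ (H *ᵥ w)) := by
        rw [Matrix.smul_mulVec, Matrix.one_mulVec, dotProduct_smul, smul_eq_mul]
      rw [hdotF]
      linarith
    have hsqrt : Real.sqrt (((1 - R) *ᵥ (H *ᵥ w)) ⬝ᵥ ((1 - R) *ᵥ (H *ᵥ w)))
        ≤ c * Real.sqrt ((H *ᵥ w) ⬝ᵥ (H *ᵥ w)) := by
      have h2 := Real.sqrt_le_sqrt hbound
      rwa [Real.sqrt_mul (sq_nonneg c), Real.sqrt_sq hc0] at h2
    rw [hnum, hden, div_le_iff₀ (Real.sqrt_pos.mpr hyy)]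
    exact hsqrt
  have hnorm : aNorm A (Etl A S P Ms) = c := by
    unfold aNorm
    exact IsGreatest.csSup_eq ⟨hmem, hubA⟩
  refine ⟨hsub, hBinvPD, hEtl, by rw [hnorm], hlam5, ?_⟩
  rw [hnorm, hlam5]
  unfold lamMin
  have hpos := (hsub hmin_mem).1
  linarith
end
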